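/- arXiv:1806.08870 — 9 statements merged into one kernel-verified Lean document; each statement's English description precedes it below -/
import Mathlib

section
/- For any finite group G and any positive integer n, the number of elements x in G with x^n = 1 is divisible by gcd(|G|, n). -/
open Finset Subgroup
open scoped Classical
set_option linter.unusedSectionVars false
set_option linter.unusedTactic false
set_option maxHeartbeats 1000000

universe u

section FrobeniusAux
variable {G : Type u} [Group G] [Fintype G]


lemma frob_nat_card_eq (n : ℕ) :
    Nat.card {x : G // x ^ n = 1} = #(univ.filter fun x : G => x ^ n = 1) := by
  rw [Nat.card_eq_fintype_card]
  simp [Fintype.card_subtype]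

lemma frob_roots_gcd (n : ℕ) :
    Nat.card {x : G // x ^ n = 1}
      = Nat.card {x : G // x ^ (Nat.gcd (Fintype.card G) n) = 1} := by
  apply Nat.card_congr
  apply Equiv.subtypeEquivRight
  intro x
  constructor
  · intro h
    exact orderOf_dvd_iff_pow_eq_one.1
      (Nat.dvd_gcd orderOf_dvd_card (orderOf_dvd_iff_pow_eq_one.2 h))
  · intro h
    exact orderOf_dvd_iff_pow_eq_one.1
      ((orderOf_dvd_iff_pow_eq_one.2 h).trans (Nat.gcd_dvd_right _ _))

lemma frob_conj (k : ℕ) (g v : G) :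
    Nat.card {u : ↥(centralizer ({g * v * g⁻¹} : Set G)) // u ^ k = 1}
      = Nat.card {u : ↥(centralizer ({v} : Set G)) // u ^ k = 1} := by
  apply Nat.card_congr
  have mem1 : ∀ x ∈ centralizer ({g * v * g⁻¹} : Set G), g⁻¹ * x * g ∈ centralizer ({v} : Set G) := by
    intro x hx
    have h := mem_centralizer_singleton_iff.1 hx
    rw [mem_centralizer_singleton_iff]
    calc g⁻¹ * x * g * v = g⁻¹ * (x * (g * v * g⁻¹)) * g := by group
      _ = g⁻¹ * (g * v * g⁻¹ * x) * g := by rw [h]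
      _ = v * (g⁻¹ * x * g) := by group
  have mem2 : ∀ x ∈ centralizer ({v} : Set G), g * x * g⁻¹ ∈ centralizer ({g * v * g⁻¹} : Set G) := by
    intro x hx
    have h := mem_centralizer_singleton_iff.1 hx
    rw [mem_centralizer_singleton_iff]
    calc g * x * g⁻¹ * (g * v * g⁻¹) = g * (x * v) * g⁻¹ := by group
      _ = g * (v * x) * g⁻¹ := by rw [h]
      _ = (g * v * g⁻¹) * (g * x * g⁻¹) := by group
  have pw1 : ∀ x : G, (g⁻¹ * x * g) ^ k = g⁻¹ * x ^ k * g := by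
    intro x
    have := conj_pow (a := g⁻¹) (b := x) (i := k)
    rwa [inv_inv] at this
  refine ⟨fun u => ⟨⟨g⁻¹ * u.1.1 * g, mem1 _ u.1.2⟩, ?_⟩,
          fun u => ⟨⟨g * u.1.1 * g⁻¹, mem2 _ u.1.2⟩, ?_⟩, ?_, ?_⟩
  · have h : u.1.1 ^ k = 1 := by
      have := u.2
      rwa [Subtype.ext_iff, SubmonoidClass.coe_pow, OneMemClass.coe_one] at this
    rw [Subtype.ext_iff, SubmonoidClass.coe_pow, OneMemClass.coe_one]
    show (g⁻¹ * u.1.1 * g) ^ k = 1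
    rw [pw1, h]; group
  · have h : u.1.1 ^ k = 1 := by
      have := u.2
      rwa [Subtype.ext_iff, SubmonoidClass.coe_pow, OneMemClass.coe_one] at this
    rw [Subtype.ext_iff, SubmonoidClass.coe_pow, OneMemClass.coe_one]
    show (g * u.1.1 * g⁻¹) ^ k = 1
    rw [conj_pow, h]; group
  · intro u
    apply Subtype.ext; apply Subtype.ext
    show g * (g⁻¹ * u.1.1 * g) * g⁻¹ = u.1.1
    group
  · intro u
    apply Subtype.ext; apply Subtype.ext
    show g⁻¹ * (g * u.1.1 * g⁻¹) * g = u.1.1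
    group


lemma frob_split (m k : ℕ) (hmk : Nat.Coprime m k) :
    #(univ.filter fun x : G => x ^ (m * k) = 1)
      = ∑ v ∈ univ.filter (fun v : G => v ^ m = 1),
          Nat.card {u : ↥(centralizer ({v} : Set G)) // u ^ k = 1} := by
  set A : ℤ := Nat.gcdA m k with hA
  set B : ℤ := Nat.gcdB m k with hB
  have hab : (m : ℤ) * A + (k : ℤ) * B = 1 := by
    have h2 := Nat.gcd_eq_gcd_ab m k
    rw [Nat.Coprime] at hmk
    rw [hmk] at h2
    exact_mod_cast h2.symm
  have hZ : ∀ x : G, x ^ (m * k) = 1 → x ^ ((m : ℤ) * (k : ℤ)) = 1 := by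
    intro x hx1
    rw [show ((m : ℤ) * (k : ℤ)) = ((m * k : ℕ) : ℤ) by push_cast; ring, zpow_natCast, hx1]
  have Hmap : ∀ x ∈ univ.filter (fun x : G => x ^ (m * k) = 1),
      (fun x : G => x ^ ((k : ℤ) * B)) x ∈ univ.filter (fun v : G => v ^ m = 1) := by
    intro x hx
    have hxZ := hZ x (mem_filter.1 hx).2
    rw [mem_filter]
    refine ⟨mem_univ _, ?_⟩
    rw [← zpow_natCast, ← zpow_mul,
      show (k : ℤ) * B * (m : ℕ) = (m : ℤ) * (k : ℤ) * B by push_cast; ring, zpow_mul, hxZ, one_zpow]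
  rw [Finset.card_eq_sum_card_fiberwise Hmap]
  apply Finset.sum_congr rfl
  intro v hv
  have hvm : v ^ m = 1 := (mem_filter.1 hv).2
  have hvmZ : v ^ ((m : ℤ) * A) = 1 := by
    rw [zpow_mul, show v ^ (m : ℤ) = 1 by rw [zpow_natCast, hvm], one_zpow]
  rw [Nat.card_eq_fintype_card, Fintype.card_subtype]
  have hmem : ∀ x ∈ (univ.filter fun x : G => x ^ (m * k) = 1).filter
      (fun a => a ^ ((k : ℤ) * B) = v), x * v⁻¹ ∈ centralizer ({v} : Set G) := by
    intro x hx
    have hx2 : x ^ ((k : ℤ) * B) = v := (mem_filter.1 hx).2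
    have cvx : Commute v x := by
      rw [← hx2]; exact (Commute.refl x).zpow_left _
    exact mem_centralizer_singleton_iff.2 (Commute.mul_left cvx.symm ((Commute.refl v).inv_left))
  refine Finset.card_bij' (fun x hx => (⟨x * v⁻¹, hmem x hx⟩ : ↥(centralizer ({v} : Set G))))
    (fun u _ => u.1 * v) ?_ ?_ ?_ ?_
  · -- i lands in target filter : ⟨x * v⁻¹, _⟩ ^ k = 1
    intro x hx
    have hx1 : x ^ (m * k) = 1 := (mem_filter.1 (Finset.mem_of_mem_filter x hx)).2
    have hx2 : x ^ ((k : ℤ) * B) = v := (mem_filter.1 hx).2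
    have hxv : x * v⁻¹ = x ^ ((m : ℤ) * A) := by
      rw [show (m : ℤ) * A = 1 - (k : ℤ) * B by linarith, zpow_sub, zpow_one, hx2]
    refine mem_filter.2 ⟨mem_univ _, ?_⟩
    apply Subtype.ext
    rw [SubmonoidClass.coe_pow, OneMemClass.coe_one]
    show (x * v⁻¹) ^ k = 1
    rw [hxv, ← zpow_natCast, ← zpow_mul,
      show (m : ℤ) * A * (k : ℕ) = (m : ℤ) * (k : ℤ) * A by push_cast; ring,
      zpow_mul, hZ x hx1, one_zpow]
  · -- j lands in fiber
    intro u hu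
    have huk : (u : G) ^ k = 1 := by
      have := (mem_filter.1 hu).2
      rw [Subtype.ext_iff, SubmonoidClass.coe_pow, OneMemClass.coe_one] at this
      exact this
    have cu : Commute (u : G) v := mem_centralizer_singleton_iff.1 u.2
    rw [mem_filter, mem_filter]
    refine ⟨⟨mem_univ _, ?_⟩, ?_⟩
    · rw [cu.mul_pow, show (u : G) ^ (m * k) = 1 by rw [mul_comm, pow_mul, huk, one_pow],
        show v ^ (m * k) = 1 by rw [pow_mul, hvm, one_pow], one_mul]
    · show ((u : G) * v) ^ ((k : ℤ) * B) = v
      rw [cu.mul_zpow,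
        show (u : G) ^ ((k : ℤ) * B) = 1 by
          rw [zpow_mul, show (u : G) ^ (k : ℤ) = 1 by rw [zpow_natCast, huk], one_zpow],
        one_mul,
        show v ^ ((k : ℤ) * B) = v by
          rw [show (k : ℤ) * B = 1 - (m : ℤ) * A by linarith, zpow_sub, zpow_one, hvmZ, inv_one,
            mul_one]]
  · intro x hx
    exact inv_mul_cancel_right x v
  · intro u hu
    apply Subtype.ext
    exact mul_inv_cancel_right (u : G) v


lemma frob_stab_card (v : G) :
    Fintype.card ↥(MulAction.stabilizer (ConjAct G) v)
      = Fintype.card ↥(centralizer ({v} : Set G)) := by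
  apply Fintype.card_congr
  refine ⟨fun g => ⟨ConjAct.ofConjAct g.1, ?_⟩, fun x => ⟨ConjAct.toConjAct x.1, ?_⟩, ?_, ?_⟩
  · have hg := g.2
    rw [MulAction.mem_stabilizer_iff, ConjAct.smul_def] at hg
    rw [mem_centralizer_singleton_iff]
    calc ConjAct.ofConjAct g.1 * v
        = (ConjAct.ofConjAct g.1 * v * (ConjAct.ofConjAct g.1)⁻¹) * ConjAct.ofConjAct g.1 := by
          group
      _ = v * ConjAct.ofConjAct g.1 := by rw [hg]
  · have hx := mem_centralizer_singleton_iff.1 x.2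
    rw [MulAction.mem_stabilizer_iff, ConjAct.smul_def, ConjAct.ofConjAct_toConjAct]
    rw [hx]
    group
  · intro g; apply Subtype.ext; simp
  · intro x; apply Subtype.ext; simp

lemma frob_orbit_stab (v : G) :
    Fintype.card (MulAction.orbit (ConjAct G) v)
      * Fintype.card ↥(centralizer ({v} : Set G)) = Fintype.card G := by
  have h := MulAction.card_orbit_mul_card_stabilizer_eq_card_group (ConjAct G) v
  have hc : Fintype.card (ConjAct G) = Fintype.card G := rfl
  rw [hc, frob_stab_card] at h
  exact h

lemma frob_class_sum {D : ℕ} (f : G → ℕ)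
    (hconj : ∀ g v : G, f (g * v * g⁻¹) = f v)
    (hdvd : ∀ v : G, D ∣ Fintype.card (MulAction.orbit (ConjAct G) v) * f v) :
    D ∣ ∑ v : G, f v := by
  rw [← Finset.sum_fiberwise univ (fun v : G => (Quotient.mk'' v :
      Quotient (MulAction.orbitRel (ConjAct G) G))) f]
  apply Finset.dvd_sum
  intro c _
  induction c using Quotient.inductionOn' with
  | h v₀ =>
  have hmemiff : ∀ v : G, ((Quotient.mk'' v : Quotient (MulAction.orbitRel (ConjAct G) G))
      = Quotient.mk'' v₀) ↔ v ∈ MulAction.orbit (ConjAct G) v₀ := by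
    intro v
    rw [Quotient.eq'']
    exact MulAction.orbitRel_apply (G := ConjAct G)
  have hfix : ∀ v ∈ univ.filter (fun v : G =>
      (Quotient.mk'' v : Quotient (MulAction.orbitRel (ConjAct G) G)) = Quotient.mk'' v₀),
      f v = f v₀ := by
    intro v hv
    have hv' : v ∈ MulAction.orbit (ConjAct G) v₀ := (hmemiff v).1 (mem_filter.1 hv).2
    obtain ⟨g, hg⟩ := hv'
    rw [← hg]
    show f (g • v₀) = f v₀
    rw [ConjAct.smul_def]
    exact hconj _ _
  rw [Finset.sum_congr rfl hfix, Finset.sum_const, smul_eq_mul]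
  have hcard : #(univ.filter (fun v : G =>
      (Quotient.mk'' v : Quotient (MulAction.orbitRel (ConjAct G) G)) = Quotient.mk'' v₀))
      = Fintype.card (MulAction.orbit (ConjAct G) v₀) := by
    rw [Finset.filter_congr (fun y _ => hmemiff y)]
    simp only [Fintype.card_subtype]
  rw [hcard]
  exact hdvd v₀


lemma frob_theta (p : ℕ) (hp : p.Prime) (a : ℕ) :
    p ^ a ∣ #(univ.filter fun x : G => orderOf x = p ^ (a + 1)) := by
  rw [Finset.card_eq_sum_card_image (fun x : G => zpowers x)]
  apply Finset.dvd_sum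
  intro H hH
  obtain ⟨x₀, hx₀s, hx₀⟩ := Finset.mem_image.1 hH
  have hx₀o : orderOf x₀ = p ^ (a + 1) := (Finset.mem_filter.1 hx₀s).2
  haveI : IsCyclic ↥(zpowers x₀) := by
    refine ⟨⟨⟨x₀, mem_zpowers x₀⟩, ?_⟩⟩
    rintro ⟨y, hy⟩
    obtain ⟨z, hz⟩ := hy
    exact ⟨z, by apply Subtype.ext; simp [← hz]⟩
  have hcard : Fintype.card ↥(zpowers x₀) = p ^ (a + 1) := by
    rw [Fintype.card_zpowers, hx₀o]
  have htot := IsCyclic.card_orderOf_eq_totient (α := ↥(zpowers x₀))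
    (d := p ^ (a + 1)) (by rw [hcard])
  have hfib : #((univ.filter fun x : G => orderOf x = p ^ (a + 1)).filter
      (fun x => zpowers x = H))
      = #(univ.filter fun y : ↥(zpowers x₀) => orderOf y = p ^ (a + 1)) := by
    refine Finset.card_bij' (fun x hx => ⟨x, ?_⟩) (fun y _ => (y : G)) ?_ ?_ ?_ ?_
    · have h1 : zpowers x = H := (mem_filter.1 hx).2
      rw [← hx₀] at h1
      rw [← h1]
      exact mem_zpowers x
    · intro x hx
      refine mem_filter.2 ⟨mem_univ _, ?_⟩
      rw [orderOf_mk]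
      exact (mem_filter.1 (Finset.mem_of_mem_filter x hx)).2
    · intro y hy
      have hyo : orderOf (y : G) = p ^ (a + 1) := by
        rw [orderOf_coe]
        exact (mem_filter.1 hy).2
      refine mem_filter.2 ⟨mem_filter.2 ⟨mem_univ _, hyo⟩, ?_⟩
      rw [← hx₀]
      apply Subgroup.eq_of_le_of_card_ge (zpowers_le.2 y.2)
      rw [Nat.card_zpowers, Nat.card_zpowers, hx₀o, hyo]
    · intro x hx; rfl
    · intro y hy; apply Subtype.ext; rfl
  rw [hfib, htot, Nat.totient_prime_pow hp (Nat.succ_pos a)]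
  simp
lemma frob_pstep (p a : ℕ) (hp : p.Prime) :
    #(univ.filter fun x : G => x ^ (p ^ (a + 1)) = 1)
      = #(univ.filter fun x : G => x ^ (p ^ a) = 1)
        + #(univ.filter fun x : G => orderOf x = p ^ (a + 1)) := by
  rw [← Finset.card_union_of_disjoint ?hd]
  case hd =>
    rw [Finset.disjoint_filter]
    intro x _ hxa hxo
    have : orderOf x ∣ p ^ a := orderOf_dvd_iff_pow_eq_one.2 hxa
    rw [hxo] at this
    have h1 := Nat.le_of_dvd (pow_pos hp.pos a) this
    have h2 : p ^ a < p ^ (a + 1) := pow_lt_pow_right₀ hp.one_lt (Nat.lt_succ_self a)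
    omega
  congr 1
  ext x
  simp only [Finset.mem_union, mem_filter, mem_univ, true_and]
  constructor
  · intro h
    rcases (Nat.dvd_prime_pow hp).1 (orderOf_dvd_iff_pow_eq_one.2 h) with ⟨i, hi, hio⟩
    rcases Nat.lt_or_ge i (a + 1) with hlt | hge
    · left
      exact orderOf_dvd_iff_pow_eq_one.1 (hio ▸ pow_dvd_pow p (Nat.lt_succ_iff.1 hlt))
    · right
      rw [hio, Nat.le_antisymm hi hge]
  · rintro (h | h)
    · exact orderOf_dvd_iff_pow_eq_one.1
        ((orderOf_dvd_iff_pow_eq_one.2 h).trans (pow_dvd_pow p (Nat.le_succ a)))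
    · rw [← h]
      exact pow_orderOf_eq_one x

end FrobeniusAux


/-- The `M`-torsion subgroup of the center. -/
def frobCenterTorsion (G : Type u) [Group G] (M : ℕ) : Subgroup G where
  carrier := {v | v ∈ center G ∧ v ^ M = 1}
  one_mem' := ⟨one_mem _, one_pow M⟩
  mul_mem' := by
    rintro u v ⟨hu1, hu2⟩ ⟨hv1, hv2⟩
    refine ⟨mul_mem hu1 hv1, ?_⟩
    have c : Commute u v := ((Subgroup.mem_center_iff.1 hu1) v).symm
    rw [c.mul_pow, hu2, hv2, one_mul]
  inv_mem' := by
    rintro u ⟨hu1, hu2⟩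
    exact ⟨inv_mem hu1, by rw [inv_pow, hu2, inv_one]⟩

variable {G : Type u} [Group G] [Fintype G]

lemma frob_centerTorsion_not_dvd {p M : ℕ} (hp : p.Prime) (hpM : ¬ p ∣ M) :
    ¬ p ∣ Fintype.card ↥(frobCenterTorsion G M) := by
  intro hdvd
  haveI : Fact p.Prime := ⟨hp⟩
  obtain ⟨y, hy⟩ := exists_prime_orderOf_dvd_card p hdvd
  have h2 : (y : G) ^ M = 1 := y.2.2
  have : orderOf (y : G) ∣ M := orderOf_dvd_iff_pow_eq_one.2 h2
  rw [orderOf_coe, hy] at this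
  exact hpM this

lemma frob_central_centralizer {v : G} (hv : v ∈ center G) :
    centralizer ({v} : Set G) = ⊤ := by
  rw [Subgroup.eq_top_iff']
  intro x
  exact mem_centralizer_singleton_iff.2 ((Subgroup.mem_center_iff.1 hv) x)

lemma frob_top_card (k : ℕ) :
    Nat.card {u : ↥(⊤ : Subgroup G) // u ^ k = 1} = Nat.card {x : G // x ^ k = 1} := by
  apply Nat.card_congr
  refine Equiv.subtypeEquiv Subgroup.topEquiv.toEquiv ?_
  intro u
  rw [show (Subgroup.topEquiv.toEquiv u : G) = (u : G) from rfl]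
  constructor
  · intro h
    rw [Subtype.ext_iff, SubmonoidClass.coe_pow, OneMemClass.coe_one] at h
    exact h
  · intro h
    apply Subtype.ext
    rw [SubmonoidClass.coe_pow, OneMemClass.coe_one]
    exact h

lemma frob_noncentral_card_lt {v : G} (hv : v ∉ center G) :
    Fintype.card ↥(centralizer ({v} : Set G)) < Fintype.card G := by
  have : ∃ g : G, ¬ (g * v = v * g) := by
    by_contra h
    push_neg at h
    exact hv (Subgroup.mem_center_iff.2 h)
  obtain ⟨g, hg⟩ := this
  apply Fintype.card_lt_of_injective_of_notMem (Subtype.val) Subtype.coe_injective (b := g)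
  rintro ⟨⟨x, hx⟩, rfl⟩
  exact hg (mem_centralizer_singleton_iff.1 hx)

section FrobeniusAux2
variable {G : Type u} [Group G] [Fintype G]

lemma frobCenterTorsion_mem_iff (M : ℕ) (v : G) :
    v ∈ frobCenterTorsion G M ↔ v ∈ center G ∧ v ^ M = 1 := Iff.rfl

end FrobeniusAux2


theorem frob_key (N : ℕ) : ∀ (G : Type u) [Group G] [Fintype G], Fintype.card G = N →
    ∀ n : ℕ, Nat.gcd (Fintype.card G) n ∣ Nat.card {x : G // x ^ n = 1} := by
  induction N using Nat.strong_induction_on with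
  | _ N IH =>
  intro G _ _ hN n
  subst hN
  have hcard0 : Fintype.card G ≠ 0 := Fintype.card_ne_zero
  -- induction hypothesis for centralizers of noncentral elements
  have IHc : ∀ (v : G), v ∉ center G → ∀ k : ℕ,
      Nat.gcd (Fintype.card ↥(centralizer ({v} : Set G))) k
        ∣ Nat.card {u : ↥(centralizer ({v} : Set G)) // u ^ k = 1} := by
    intro v hv k
    exact IH _ (frob_noncentral_card_lt hv) _ rfl k
  -- conjugation invariance of the summand
  have hconj0 : ∀ (k : ℕ) (P : G → Prop) (_ : DecidablePred P),
      (∀ g v : G, P (g * v * g⁻¹) ↔ P v) →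
      ∀ g v : G, (if P (g * v * g⁻¹) then
          Nat.card {u : ↥(centralizer ({g * v * g⁻¹} : Set G)) // u ^ k = 1} else 0)
        = (if P v then Nat.card {u : ↥(centralizer ({v} : Set G)) // u ^ k = 1} else 0) := by
    intro k P hdec hP g v
    by_cases hv : P v
    · rw [if_pos ((hP g v).2 hv), if_pos hv, frob_conj k g v]
    · rw [if_neg (fun hc => hv ((hP g v).1 hc)), if_neg hv]
  -- divisibility of a noncentral class term
  have hterm : ∀ (k : ℕ) (v : G), k ≠ 0 → (p : ℕ) → v ∉ center G → k ∣ Fintype.card G →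
      k ∣ Fintype.card (MulAction.orbit (ConjAct G) v)
        * Nat.card {u : ↥(centralizer ({v} : Set G)) // u ^ k = 1} := by
    intro k v _ p hv hkG
    have h1 : Nat.gcd (Fintype.card G) k = k :=
      Nat.dvd_antisymm (Nat.gcd_dvd_right _ _) (Nat.dvd_gcd hkG dvd_rfl)
    calc k = Nat.gcd (Fintype.card G) k := h1.symm
      _ = Nat.gcd (Fintype.card (MulAction.orbit (ConjAct G) v)
            * Fintype.card ↥(centralizer ({v} : Set G))) k := by rw [frob_orbit_stab]
      _ ∣ Nat.gcd (Fintype.card (MulAction.orbit (ConjAct G) v)) k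
            * Nat.gcd (Fintype.card ↥(centralizer ({v} : Set G))) k := by
          rw [Nat.gcd_comm _ k, Nat.gcd_comm (Fintype.card (MulAction.orbit (ConjAct G) v)) k,
            Nat.gcd_comm (Fintype.card ↥(centralizer ({v} : Set G))) k]
          exact Nat.gcd_mul_right_dvd_mul_gcd _ _ _
      _ ∣ _ := mul_dvd_mul (Nat.gcd_dvd_left _ _) (IHc v hv k)
  -- Step 1 : prime powers
  have PP : ∀ p : ℕ, p.Prime → ∀ a : ℕ, p ^ a ∣ Fintype.card G →
      p ^ a ∣ Nat.card {x : G // x ^ (p ^ a) = 1} := by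
    intro p hp
    set c := (Fintype.card G).factorization p with hc
    have hpcG : p ^ c ∣ Fintype.card G := Nat.ordProj_dvd _ p
    have base : p ^ c ∣ Nat.card {x : G // x ^ (p ^ c) = 1} := by
      rcases Nat.eq_zero_or_pos c with hc0 | hcpos
      · rw [hc0, pow_zero]; exact one_dvd _
      set M := Fintype.card G / p ^ c with hM
      have hMc : M * p ^ c = Fintype.card G := by
        rw [mul_comm]; exact Nat.ordProj_mul_ordCompl_eq_self _ p
      have hpM : ¬ p ∣ M := Nat.not_dvd_ordCompl hp hcard0
      have hcop : Nat.Coprime M (p ^ c) :=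
        (Nat.coprime_comm.1 ((hp.coprime_iff_not_dvd).2 hpM)).pow_right c
      have hids : #(univ.filter fun x : G => x ^ (M * p ^ c) = 1) = Fintype.card G := by
        have hall : ∀ x : G, x ^ (M * p ^ c) = 1 := by
          intro x; rw [hMc]; exact pow_card_eq_one
        rw [Finset.filter_true_of_mem fun x _ => hall x, Finset.card_univ]
      rw [frob_split M (p ^ c) hcop] at hids
      rw [← Finset.sum_filter_add_sum_filter_not (univ.filter (fun v : G => v ^ M = 1))
        (fun v => v ∈ center G)] at hids
      -- central part
      have hcen : ∀ v ∈ (univ.filter fun v : G => v ^ M = 1).filter (fun v => v ∈ center G),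
          Nat.card {u : ↥(centralizer ({v} : Set G)) // u ^ (p ^ c) = 1}
            = Nat.card {x : G // x ^ (p ^ c) = 1} := by
        intro v hv
        rw [frob_central_centralizer (Finset.mem_filter.1 hv).2, frob_top_card]
      rw [Finset.sum_congr rfl hcen, Finset.sum_const, smul_eq_mul] at hids
      have hwcard : #((univ.filter fun v : G => v ^ M = 1).filter (fun v => v ∈ center G))
          = Fintype.card ↥(frobCenterTorsion G M) := by
        rw [Finset.filter_filter, Fintype.card_subtype]
        congr 1
        apply Finset.filter_congr
        intro v _
        rw [frobCenterTorsion_mem_iff, and_comm]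
      rw [hwcard] at hids
      -- noncentral part
      have hnc : p ^ c ∣ ∑ v ∈ (univ.filter fun v : G => v ^ M = 1).filter
          (fun v => ¬ v ∈ center G),
          Nat.card {u : ↥(centralizer ({v} : Set G)) // u ^ (p ^ c) = 1} := by
        rw [Finset.filter_filter, Finset.sum_filter]
        apply frob_class_sum
        · intro g v
          apply hconj0 (p ^ c) (fun v => v ^ M = 1 ∧ ¬ v ∈ center G) _
          intro g v
          constructor
          · rintro ⟨h1, h2⟩
            constructor
            · have h3 : g * v ^ M * g⁻¹ = 1 := by rw [← conj_pow]; exact h1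
              have h4 : v ^ M = g⁻¹ * (g * v ^ M * g⁻¹) * g := by group
              rw [h4, h3]; group
            · intro hv
              exact h2 (Subgroup.Normal.conj_mem (inferInstance : (Subgroup.center G).Normal) v hv g)
          · rintro ⟨h1, h2⟩
            refine ⟨by rw [conj_pow, h1]; group, ?_⟩
            intro hmem
            apply h2
            have hveq : v = g⁻¹ * (g * v * g⁻¹) * g⁻¹⁻¹ := by group
            rw [hveq]
            exact Subgroup.Normal.conj_mem (inferInstance : (Subgroup.center G).Normal) _ hmem g⁻¹
        · intro v
          by_cases hcond : v ^ M = 1 ∧ ¬ v ∈ center G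
          · rw [if_pos hcond]
            exact hterm (p ^ c) v (pow_ne_zero c hp.ne_zero) p hcond.2 hpcG
          · rw [if_neg hcond, mul_zero]
            exact dvd_zero _
      -- combine
      have hdc : p ^ c ∣ Fintype.card G := hpcG
      have hw : ¬ p ∣ Fintype.card ↥(frobCenterTorsion G M) :=
        frob_centerTorsion_not_dvd hp hpM
      have hsub := Nat.dvd_sub hdc hnc
      rw [show Fintype.card G - (∑ v ∈ (univ.filter fun v : G => v ^ M = 1).filter
          (fun v => ¬ v ∈ center G),
          Nat.card {u : ↥(centralizer ({v} : Set G)) // u ^ (p ^ c) = 1})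
        = Fintype.card ↥(frobCenterTorsion G M) * Nat.card {x : G // x ^ (p ^ c) = 1}
        by omega] at hsub
      exact (Nat.Coprime.pow_left c ((hp.coprime_iff_not_dvd).2 hw)).dvd_of_dvd_mul_left hsub
    -- descending induction
    have desc : ∀ j : ℕ, j ≤ c → p ^ (c - j) ∣ Nat.card {x : G // x ^ (p ^ (c - j)) = 1} := by
      intro j
      induction j with
      | zero => intro _; simpa using base
      | succ j ihj =>
        intro hj
        have hj' : j ≤ c := Nat.le_of_lt (Nat.lt_of_succ_le hj)
        have hcj : c - (j + 1) + 1 = c - j := by omega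
        have hstep := frob_pstep (G := G) p (c - (j + 1)) hp
        rw [hcj] at hstep
        have h1 := ihj hj'
        rw [frob_nat_card_eq] at h1 ⊢
        have h2 := frob_theta (G := G) p hp (c - (j + 1))
        rw [hcj] at h2
        have h3 : p ^ (c - (j + 1)) ∣ #(univ.filter fun x : G => x ^ (p ^ (c - j)) = 1) :=
          dvd_trans (pow_dvd_pow p (by omega)) h1
        have h4 := Nat.dvd_sub h3 h2
        rw [show #(univ.filter fun x : G => x ^ (p ^ (c - j)) = 1)
            - #(univ.filter fun x : G => orderOf x = p ^ (c - j))
          = #(univ.filter fun x : G => x ^ (p ^ (c - (j + 1))) = 1) by omega] at h4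
        exact h4
    intro a ha
    have hac : a ≤ c := (Nat.Prime.pow_dvd_iff_le_factorization hp hcard0).1 ha
    have := desc (c - a) (by omega)
    rwa [show c - (c - a) = a by omega] at this
  -- Step 2 : general n
  rw [frob_roots_gcd n]
  set d := Nat.gcd (Fintype.card G) n with hd
  have hdN : d ∣ Fintype.card G := Nat.gcd_dvd_left _ _
  have hd0 : d ≠ 0 := fun h => hcard0 (Nat.eq_zero_of_gcd_eq_zero_left h)
  have claim : ∀ p : ℕ, p.Prime → p ^ (d.factorization p) ∣ Nat.card {x : G // x ^ d = 1} := by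
    intro p hp
    set a := d.factorization p with ha
    set m := d / p ^ a with hm
    have hma : m * p ^ a = d := by rw [mul_comm]; exact Nat.ordProj_mul_ordCompl_eq_self d p
    have hpm : ¬ p ∣ m := Nat.not_dvd_ordCompl hp hd0
    have hcop : Nat.Coprime m (p ^ a) :=
      (Nat.coprime_comm.1 ((hp.coprime_iff_not_dvd).2 hpm)).pow_right a
    have hpaN : p ^ a ∣ Fintype.card G := dvd_trans (hma ▸ dvd_mul_left (p ^ a) m) hdN
    rw [← hma, frob_nat_card_eq, frob_split m (p ^ a) hcop, Finset.sum_filter]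
    apply frob_class_sum
    · intro g v
      apply hconj0 (p ^ a) (fun v => v ^ m = 1) _
      intro g v
      constructor
      · intro h1
        have h3 : g * v ^ m * g⁻¹ = 1 := by rw [← conj_pow]; exact h1
        have h4 : v ^ m = g⁻¹ * (g * v ^ m * g⁻¹) * g := by group
        rw [h4, h3]; group
      · intro h1
        rw [conj_pow, h1]; group
    · intro v
      by_cases hcond : v ^ m = 1
      · rw [if_pos hcond]
        by_cases hvc : v ∈ center G
        · rw [frob_central_centralizer hvc, frob_top_card]
          exact Dvd.dvd.mul_left (PP p hp a hpaN) _
        · exact hterm (p ^ a) v (pow_ne_zero a hp.ne_zero) p hvc hpaN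
      · rw [if_neg hcond, mul_zero]
        exact dvd_zero _
  rw [Nat.dvd_iff_prime_pow_dvd_dvd]
  intro p k hp hpk
  have hk : k ≤ d.factorization p := (Nat.Prime.pow_dvd_iff_le_factorization hp hd0).1 hpk
  exact dvd_trans (pow_dvd_pow p hk) (claim p hp)

theorem frobenius_divisibility (G : Type*) [Group G] [Fintype G] (n : ℕ) (hn : 0 < n) :
    Nat.gcd (Fintype.card G) n ∣ Nat.card {x : G // x ^ n = 1} :=
  frob_key (Fintype.card G) G rfl n
end

section
/- If U is a finite normal subgroup of a group V, then for all v in V and u in U, the elements v^|U| and (vu)^|U| are conjugate by an element of U, i.e., there exists a in U with a⁻¹ v^|U| a = (vu)^|U|. -/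
lemma free_period_dvd {β : Type*} [Finite β] (f : Equiv.Perm β) (d : ℕ) (hd : 0 < d)
    (h1 : ∀ x, (f ^ d) x = x)
    (h2 : ∀ k, 0 < k → k < d → ∀ x, (f ^ k) x ≠ x) :
    d ∣ Nat.card β := by
  classical
  have : Fintype β := Fintype.ofFinite β
  have hsucc : ∀ (k : ℕ) (y : β), (f ^ (k+1)) y = f ((f ^ k) y) := by
    intro k y
    rw [pow_succ']
    rfl
  have key : ∀ s : Finset β, (∀ x ∈ s, f x ∈ s) → d ∣ s.card := by
    intro s
    induction s using Finset.strongInduction with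
    | _ s ih =>
      intro hinv
      rcases s.eq_empty_or_nonempty with rfl | ⟨a, ha⟩
      · simp
      · set O : Finset β := (Finset.range d).image (fun k => (f ^ k) a) with hO
        have hpowmem : ∀ k : ℕ, (f ^ k) a ∈ s := by
          intro k
          induction k with
          | zero => simpa using ha
          | succ k ihk => rw [hsucc]; exact hinv _ ihk
        have hOsub : O ⊆ s := by
          intro x hx
          simp only [hO, Finset.mem_image, Finset.mem_range] at hx
          obtain ⟨k, _, rfl⟩ := hx
          exact hpowmem k
        have hinj : ∀ i j, i < j → j < d → (f ^ i) a ≠ (f ^ j) a := by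
          intro i j hij hjd heq
          have hsplit : (f ^ j) a = (f ^ (j - i)) ((f ^ i) a) := by
            rw [← Equiv.Perm.mul_apply, ← pow_add, Nat.sub_add_cancel (le_of_lt hij)]
          rw [heq] at hsplit
          exact h2 (j - i) (by omega) (by omega) _ hsplit.symm
        have hOcard : O.card = d := by
          rw [hO, Finset.card_image_of_injOn, Finset.card_range]
          intro i hi j hj hij
          simp only [Finset.coe_range, Set.mem_Iio] at hi hj
          by_contra hne
          rcases Nat.lt_or_ge i j with h | h
          · exact hinj i j h hj hij
          · exact hinj j i (by omega) hi hij.symm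
        have haO : a ∈ O := by
          simp only [hO, Finset.mem_image, Finset.mem_range]
          exact ⟨0, hd, rfl⟩
        have hstep : ∀ x ∈ s \ O, f x ∈ s \ O := by
          intro x hx
          rw [Finset.mem_sdiff] at hx ⊢
          refine ⟨hinv x hx.1, ?_⟩
          intro hfx
          apply hx.2
          simp only [hO, Finset.mem_image, Finset.mem_range] at hfx ⊢
          obtain ⟨k, hk, hkx⟩ := hfx
          rcases Nat.eq_zero_or_pos k with rfl | hk0
          · refine ⟨d - 1, by omega, f.injective ?_⟩
            rw [← hsucc]
            have hd1 : d - 1 + 1 = d := by omega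
            rw [hd1, h1]
            exact hkx
          · refine ⟨k - 1, by omega, f.injective ?_⟩
            rw [← hsucc]
            have hk1 : k - 1 + 1 = k := by omega
            rw [hk1]
            exact hkx
        have hss : s \ O ⊂ s := by
          refine Finset.ssubset_iff_of_subset (Finset.sdiff_subset) |>.mpr ?_
          refine ⟨a, ha, ?_⟩
          rw [Finset.mem_sdiff]
          tauto
        obtain ⟨c, hc⟩ := ih (s \ O) hss hstep
        have hOle : d ≤ s.card := hOcard ▸ Finset.card_le_card hOsub
        have hcard : s.card = (s \ O).card + d := by
          rw [Finset.card_sdiff_of_subset hOsub, hOcard]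
          omega
        exact ⟨c + 1, by rw [hcard, hc]; ring⟩
  have := key Finset.univ (by simp)
  rwa [Finset.card_univ, ← Nat.card_eq_fintype_card] at this

theorem brauer_lemma (V : Type*) [Group V] (U : Subgroup V) [U.Normal] [Finite U]
    (v : V) (u : U) :
    ∃ a : U, (a : V)⁻¹ * v ^ (Nat.card U) * (a : V) = (v * (u : V)) ^ (Nat.card U) := by
  classical
  have hN : U.Normal := inferInstance
  set n := Nat.card U with hn
  set x : V := v * (u : V) with hx
  -- the affine permutation ψ(a) = v⁻¹ a x of U
  have memfwd : ∀ a : U, v⁻¹ * (a : V) * v * (u : V) ∈ U :=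
    fun a => U.mul_mem (hN.conj_mem' _ a.2 v) u.2
  have membwd : ∀ a : U, v * ((a : V) * (u : V)⁻¹) * v⁻¹ ∈ U :=
    fun a => hN.conj_mem _ (U.mul_mem a.2 (U.inv_mem u.2)) v
  set σ : Equiv.Perm U := {
    toFun := fun a => ⟨v⁻¹ * (a : V) * v * (u : V), memfwd a⟩
    invFun := fun a => ⟨v * ((a : V) * (u : V)⁻¹) * v⁻¹, membwd a⟩
    left_inv := by
      intro a
      ext
      simp only []
      group
    right_inv := by
      intro a
      ext
      simp only []
      group } with hσ
  -- iterate formula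
  have hpow : ∀ (k : ℕ) (a : U), (((σ ^ k) a : U) : V) = (v ^ k)⁻¹ * (a : V) * x ^ k := by
    intro k
    induction k with
    | zero => intro a; simp
    | succ k ihk =>
      intro a
      have h1 : (σ ^ (k+1)) a = (σ ^ k) (σ a) := by
        rw [pow_succ]
        rfl
      rw [h1, ihk]
      have h2 : ((σ a : U) : V) = v⁻¹ * ((a : V) * x) := by
        have : ((σ a : U) : V) = v⁻¹ * (a : V) * v * (u : V) := rfl
        rw [this, hx]
        group
      rw [h2, pow_succ v, pow_succ' x]
      group
  -- existence of a recurrent exponent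
  have hex : ∃ k, 0 < k ∧ ∃ a : U, (σ ^ k) a = a := by
    refine ⟨orderOf σ, ?_, ⟨1, ?_⟩⟩
    · exact orderOf_pos σ
    · rw [pow_orderOf_eq_one]
      rfl
  set d := Nat.find hex with hdd
  obtain ⟨hd0, a₀, ha₀⟩ := Nat.find_spec hex
  have hmin : ∀ k, 0 < k → k < d → ∀ a : U, (σ ^ k) a ≠ a := by
    intro k hk0 hkd a hka
    exact Nat.find_min hex hkd ⟨hk0, a, hka⟩
  -- fixed points of σ^d
  have hfixV : ∀ a : U, (σ ^ d) a = a ↔ v ^ d * (a : V) = (a : V) * x ^ d := by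
    intro a
    rw [Subtype.ext_iff, hpow d a]
    constructor
    · intro h
      calc v ^ d * (a : V) = v ^ d * ((v ^ d)⁻¹ * (a : V) * x ^ d) := by rw [h]
        _ = (a : V) * x ^ d := by group
    · intro h
      calc (v ^ d)⁻¹ * (a : V) * x ^ d = (v ^ d)⁻¹ * ((a:V) * x ^ d) := by group
        _ = (v ^ d)⁻¹ * (v ^ d * (a : V)) := by rw [h]
        _ = (a : V) := by group
  -- the fixed point set of σ^d
  set Fx := {a : U // (σ ^ d) a = a} with hFx
  have hFxne : Nonempty Fx := ⟨⟨a₀, ha₀⟩⟩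
  -- σ restricts to Fx
  have hcomm : ∀ a : U, (σ ^ d) (σ a) = σ ((σ ^ d) a) := by
    intro a
    rw [← Equiv.Perm.mul_apply, ← Equiv.Perm.mul_apply, ← pow_succ, ← pow_succ']
  have hcomm' : ∀ a : U, (σ ^ d) (σ⁻¹ a) = σ⁻¹ ((σ ^ d) a) := by
    intro a
    have := hcomm (σ⁻¹ a)
    rw [show σ (σ⁻¹ a) = a from Equiv.apply_symm_apply σ a] at this
    calc (σ ^ d) (σ⁻¹ a) = σ⁻¹ (σ ((σ ^ d) (σ⁻¹ a))) := by rw [show ∀ y, σ⁻¹ (σ y) = y from Equiv.symm_apply_apply σ]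
      _ = σ⁻¹ ((σ ^ d) a) := by rw [this]
  set e : Equiv.Perm Fx := {
    toFun := fun p => ⟨σ p.1, by rw [hcomm, p.2]⟩
    invFun := fun p => ⟨σ⁻¹ p.1, by rw [hcomm', p.2]⟩
    left_inv := by intro p; apply Subtype.ext; exact Equiv.symm_apply_apply σ p.1
    right_inv := by intro p; apply Subtype.ext; exact Equiv.apply_symm_apply σ p.1 } with he
  have hek : ∀ (k : ℕ) (p : Fx), ((e ^ k) p).1 = (σ ^ k) p.1 := by
    intro k
    induction k with
    | zero => intro p; rfl
    | succ k ihk =>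
      intro p
      have h1 : (e ^ (k+1)) p = (e ^ k) (e p) := by rw [pow_succ]; rfl
      have h2 : (σ ^ (k+1)) p.1 = (σ ^ k) (σ p.1) := by rw [pow_succ]; rfl
      rw [h1, h2, ihk]
      rfl
  -- d divides card Fx
  have hdvd1 : d ∣ Nat.card Fx := by
    apply free_period_dvd e d hd0
    · intro p
      apply Subtype.ext
      rw [hek d p]
      exact p.2
    · intro k hk0 hkd p hp
      apply hmin k hk0 hkd p.1
      have := congrArg Subtype.val hp
      rw [hek k p] at this
      exact this
  -- Fx is in bijection with the centralizer subgroup K of v^d in U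
  set K : Subgroup U := Subgroup.comap U.subtype (Subgroup.centralizer {v ^ d}) with hK
  have hmemK : ∀ h : U, h ∈ K ↔ ∀ g ∈ ({v ^ d} : Set V), g * (h : V) = (h : V) * g := by
    intro h
    rw [hK, Subgroup.mem_comap]
    exact Subgroup.mem_centralizer_iff
  have hKcard : Nat.card Fx = Nat.card K := by
    apply Nat.card_congr
    refine {
      toFun := fun p => ⟨(p.1 : U) * a₀⁻¹, ?_⟩
      invFun := fun k => ⟨(k : U) * a₀, ?_⟩
      left_inv := ?_
      right_inv := ?_ }
    · -- p.1 * a₀⁻¹ ∈ K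
      rw [hmemK]
      intro g hg
      rw [Set.mem_singleton_iff] at hg
      subst hg
      have h1 : v ^ d * (p.1 : V) = (p.1 : V) * x ^ d := (hfixV p.1).mp p.2
      have h2 : v ^ d * (a₀ : V) = (a₀ : V) * x ^ d := (hfixV a₀).mp ha₀
      have h3 : x ^ d = (a₀ : V)⁻¹ * (v ^ d * (a₀ : V)) := by rw [h2]; group
      push_cast
      rw [← mul_assoc, h1, h3]
      group
    · -- k * a₀ ∈ Fx
      rw [hfixV]
      have hc : v ^ d * ((k : U) : V) = ((k : U) : V) * v ^ d := by
        have := (hmemK (k : U)).mp k.2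
        exact this (v ^ d) rfl
      have h2 : v ^ d * (a₀ : V) = (a₀ : V) * x ^ d := (hfixV a₀).mp ha₀
      push_cast
      rw [← mul_assoc, hc, mul_assoc, h2, mul_assoc]
    · intro p
      ext
      push_cast
      group
    · intro k
      ext
      push_cast
      group
  -- conclude d ∣ n
  have hdvd2 : Nat.card K ∣ n := Subgroup.card_subgroup_dvd_card K
  have hdvd : d ∣ n := by
    rw [hKcard] at hdvd1
    exact hdvd1.trans hdvd2
  -- σ^n fixes a₀
  obtain ⟨c, hc⟩ := hdvd
  have hfixn : (σ ^ n) a₀ = a₀ := by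
    rw [hc, pow_mul]
    clear hc
    induction c with
    | zero => rfl
    | succ c ihc =>
      have : ((σ ^ d) ^ (c + 1)) a₀ = ((σ ^ d) ^ c) ((σ ^ d) a₀) := by rw [pow_succ]; rfl
      rw [this, ha₀, ihc]
  -- unfold
  refine ⟨a₀, ?_⟩
  have h1 : v ^ n * (a₀ : V) = (a₀ : V) * x ^ n := by
    have := hfixn
    rw [Subtype.ext_iff, hpow n a₀] at this
    calc v ^ n * (a₀ : V) = v ^ n * ((v ^ n)⁻¹ * (a₀ : V) * x ^ n) := by rw [this]
      _ = (a₀ : V) * x ^ n := by group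
  calc (a₀ : V)⁻¹ * v ^ n * (a₀ : V) = (a₀ : V)⁻¹ * (v ^ n * (a₀ : V)) := by group
    _ = (a₀ : V)⁻¹ * ((a₀ : V) * x ^ n) := by rw [h1]
    _ = x ^ n := by group
end

section
/- For any finite group G, any subgroup H of G, and any integer n, the number of elements x in G such that x^n lies in H is divisible by |H|. -/
set_option linter.unusedSectionVars false
open Finset Function

namespace IwasakiProof

universe u

variable {G : Type u} [Group G] [Fintype G]

/-- The number of fixed points of `x` acting on `Y`. -/
noncomputable def fixCnt (Y : Type u) [MulAction G Y] (x : G) : ℕ :=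
  Nat.card {y : Y // x • y = y}

lemma fixCnt_eq_card_filter (Y : Type u) [Fintype Y] [MulAction G Y] (x : G)
    [DecidablePred fun y : Y => x • y = y] :
    fixCnt Y x = (Finset.univ.filter fun y : Y => x • y = y).card := by
  rw [fixCnt, Nat.card_eq_fintype_card, Fintype.card_subtype]

section SymAction

variable {Ω : Type u} [MulAction G Ω]

instance symMulAction (k : ℕ) : MulAction G (Sym Ω k) where
  smul g s := ⟨Multiset.map (g • ·) s.1, by rw [Multiset.card_map]; exact s.2⟩
  one_smul s := Subtype.ext (by show Multiset.map _ s.1 = s.1; simp)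
  mul_smul g h s := Subtype.ext (by
    show Multiset.map _ s.1 = Multiset.map _ (Multiset.map _ s.1)
    rw [Multiset.map_map]
    exact Multiset.map_congr rfl fun a _ => mul_smul g h a)

lemma sym_smul_coe (k : ℕ) (g : G) (s : Sym Ω k) :
    ((g • s : Sym Ω k) : Multiset Ω) = Multiset.map (g • ·) (s : Multiset Ω) := rfl

lemma sym_smul_eq_iff (k : ℕ) (g : G) (s : Sym Ω k) :
    g • s = s ↔ Multiset.map (g • ·) (s : Multiset Ω) = (s : Multiset Ω) := by
  rw [← sym_smul_coe]
  exact ⟨fun h => congrArg _ h, fun h => Subtype.ext h⟩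

end SymAction

section Newton

open scoped Classical

variable (Ω : Type u) [Fintype Ω] [MulAction G Ω]

/-- A finset containing all multisets over `Ω` of cardinality at most `n`. -/
noncomputable def BigM (n : ℕ) : Finset (Multiset Ω) :=
  ((n • (Finset.univ : Finset Ω).val).powerset).toFinset

/-- The finset of `x`-invariant multisets over `Ω` of cardinality `k` (with ambient bound `n`). -/
noncomputable def InvM (x : G) (n k : ℕ) : Finset (Multiset Ω) :=
  (BigM Ω n).filter fun m => Multiset.card m = k ∧ Multiset.map (x • ·) m = m

variable {Ω}

lemma mem_InvM {x : G} {n k : ℕ} (hk : k ≤ n) {m : Multiset Ω} :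
    m ∈ InvM Ω x n k ↔ Multiset.card m = k ∧ Multiset.map (x • ·) m = m := by
  unfold InvM BigM
  rw [Finset.mem_filter, Multiset.mem_toFinset, Multiset.mem_powerset]
  constructor
  · tauto
  · rintro ⟨h1, h2⟩
    refine ⟨?_, h1, h2⟩
    rw [Multiset.le_iff_count]
    intro b
    have hcb : Multiset.count b m ≤ n := by
      have := Multiset.count_le_card b m
      omega
    calc Multiset.count b m ≤ n := hcb
      _ = n * Multiset.count b (Finset.univ : Finset Ω).val := by
          rw [Multiset.count_univ, mul_one]
      _ = Multiset.count b (n • (Finset.univ : Finset Ω).val) := by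
          rw [Multiset.count_nsmul]

lemma card_InvM (x : G) {n k : ℕ} (hk : k ≤ n) :
    (InvM Ω x n k).card = fixCnt (Sym Ω k) x := by
  rw [fixCnt_eq_card_filter]
  refine Finset.card_bij (fun m hm => (⟨m, ((mem_InvM hk).1 hm).1⟩ : Sym Ω k)) ?_ ?_ ?_
  · intro m hm
    apply Finset.mem_filter.2
    refine ⟨Finset.mem_univ _, ?_⟩
    apply (sym_smul_eq_iff _ _ _).2
    exact ((mem_InvM hk).1 hm).2
  · intro m1 h1 m2 h2 h
    simpa using congrArg Sym.toMultiset h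
  · intro s hs
    rw [Finset.mem_filter] at hs
    refine ⟨s.1, (mem_InvM hk).2 ⟨s.2, ?_⟩, rfl⟩
    exact (sym_smul_eq_iff _ _ _).1 hs.2

lemma key_count (x : G) (n : ℕ) (a : Ω) :
    ∑ s ∈ InvM Ω x n n, s.count a =
      ∑ i ∈ (Finset.Icc 1 n).filter (fun i => x ^ i • a = a), (InvM Ω x n (n - i)).card := by
  set d := Function.minimalPeriod (x • · : Ω → Ω) a with hd
  have hper : a ∈ Function.periodicPts (x • · : Ω → Ω) := by
    refine ⟨orderOf x, orderOf_pos x, ?_⟩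
    show ((x • ·) : Ω → Ω)^[orderOf x] a = a
    rw [smul_iterate, pow_orderOf_eq_one]
    exact one_smul G a
  have hd0 : 0 < d := Function.minimalPeriod_pos_of_mem_periodicPts hper
  have hdvd_iff : ∀ i : ℕ, x ^ i • a = a ↔ d ∣ i := fun i =>
    MulAction.pow_smul_eq_iff_minimalPeriod_dvd
  have hxd : x ^ d • a = a := (hdvd_iff d).mpr dvd_rfl
  have hcomm : ∀ (p q : ℕ) (b : Ω), x ^ p • x ^ q • b = x ^ q • x ^ p • b := by
    intro p q b
    rw [smul_smul, smul_smul, ← pow_add, ← pow_add, add_comm]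
  have hmod : ∀ k : ℕ, x ^ k • a = x ^ (k % d) • a := by
    intro k
    conv_lhs => rw [← Nat.div_add_mod k d]
    generalize k / d = q
    induction q with
    | zero => simp
    | succ q ih =>
      have h1 : d * (q + 1) + k % d = d + (d * q + k % d) := by ring
      rw [h1, pow_add, mul_smul, ih, hcomm, hxd]
  set O : Multiset Ω := (Finset.range d).val.map (fun k => x ^ k • a) with hO
  have hcardO : Multiset.card O = d := by simp [hO]
  have hmemO : ∀ b : Ω, b ∈ O ↔ ∃ k : ℕ, x ^ k • a = b := by
    intro b
    constructor
    · intro hb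
      rcases Multiset.mem_map.1 hb with ⟨k, _, hk⟩
      exact ⟨k, hk⟩
    · rintro ⟨k, rfl⟩
      refine Multiset.mem_map.2 ⟨k % d, ?_, (hmod k).symm⟩
      simpa using Nat.mod_lt k hd0
  have hinj : ∀ p, p < d → ∀ q, q < d → x ^ p • a = x ^ q • a → p = q := by
    intro p hp q hq hpq
    have h := Function.iterate_injOn_Iio_minimalPeriod (f := (x • · : Ω → Ω)) (x := a)
    refine h (Set.mem_Iio.2 hp) (Set.mem_Iio.2 hq) ?_
    show ((x • ·) : Ω → Ω)^[p] a = ((x • ·) : Ω → Ω)^[q] a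
    rw [smul_iterate, smul_iterate]
    exact hpq
  have hnodupO : O.Nodup := by
    rw [hO]
    refine Multiset.Nodup.map_on ?_ (Finset.range d).nodup
    intro p hp q hq h
    exact hinj p (by simpa using hp) q (by simpa using hq) h
  have haO : a ∈ O := (hmemO a).2 ⟨0, by simp⟩
  have hcountO : ∀ b ∈ O, O.count b = 1 := fun b hb =>
    Multiset.count_eq_one_of_mem hnodupO hb
  have hmapO : Multiset.map (x • ·) O = O := by
    rw [Multiset.Nodup.ext (Multiset.Nodup.map (MulAction.injective x) hnodupO) hnodupO]
    intro b
    rw [Multiset.mem_map]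
    constructor
    · rintro ⟨c, hc, rfl⟩
      rcases (hmemO c).1 hc with ⟨k, rfl⟩
      refine (hmemO _).2 ⟨k + 1, ?_⟩
      rw [pow_succ', mul_smul]
    · intro hb
      rcases (hmemO b).1 hb with ⟨k, rfl⟩
      refine ⟨x ^ (k + (d - 1)) • a, (hmemO _).2 ⟨_, rfl⟩, ?_⟩
      show x • x ^ (k + (d - 1)) • a = x ^ k • a
      rw [← mul_smul, ← pow_succ']
      have h2 : k + (d - 1) + 1 = d + k := by omega
      rw [h2, pow_add, mul_smul, hcomm, hxd]
  have hcnt : ∀ (m : Multiset Ω), Multiset.map (x • ·) m = m →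
      ∀ b : Ω, m.count (x • b) = m.count b := by
    intro m hm b
    conv_lhs => rw [← hm]
    exact Multiset.count_map_eq_count' _ m (MulAction.injective x) b
  have hcntinv : ∀ (m : Multiset Ω), Multiset.map (x • ·) m = m →
      ∀ b : Ω, m.count (x⁻¹ • b) = m.count b := by
    intro m hm b
    conv_rhs => rw [← smul_inv_smul x b, hcnt m hm]
  have hcntpow : ∀ (m : Multiset Ω), Multiset.map (x • ·) m = m →
      ∀ k : ℕ, m.count (x ^ k • a) = m.count a := by
    intro m hm k
    induction k with
    | zero => simp
    | succ k ih => rw [pow_succ', mul_smul, hcnt m hm, ih]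
  have hcntO : ∀ (m : Multiset Ω), Multiset.map (x • ·) m = m →
      ∀ b ∈ O, m.count b = m.count a := by
    intro m hm b hb
    rcases (hmemO b).1 hb with ⟨k, rfl⟩
    exact hcntpow m hm k
  have hle : ∀ (m : Multiset Ω), Multiset.map (x • ·) m = m →
      ∀ j : ℕ, j ≤ m.count a → j • O ≤ m := by
    intro m hm j hj
    rw [Multiset.le_iff_count]
    intro b
    rw [Multiset.count_nsmul]
    by_cases hb : b ∈ O
    · rw [hcountO b hb, mul_one, hcntO m hm b hb]
      exact hj
    · rw [Multiset.count_eq_zero_of_notMem hb, mul_zero]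
      exact Nat.zero_le _
  have hsub : ∀ (m : Multiset Ω), Multiset.map (x • ·) m = m → ∀ j : ℕ,
      Multiset.map (x • ·) (m - j • O) = m - j • O := by
    intro m hm j
    refine Multiset.ext.mpr fun b => ?_
    have h1 : Multiset.count b (Multiset.map (x • ·) (m - j • O)) =
        Multiset.count (x⁻¹ • b) (m - j • O) := by
      conv_lhs => rw [← smul_inv_smul x b]
      exact Multiset.count_map_eq_count' _ _ (MulAction.injective x) _
    rw [h1, Multiset.count_sub, Multiset.count_sub, Multiset.count_nsmul,
      Multiset.count_nsmul, hcntinv m hm, hcntinv O hmapO]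
  have hadd : ∀ (m : Multiset Ω), Multiset.map (x • ·) m = m → ∀ j : ℕ,
      Multiset.map (x • ·) (m + j • O) = m + j • O := by
    intro m hm j
    rw [Multiset.map_add, hm, Multiset.map_nsmul, hmapO]
  -- rewrite both sides as cardinalities of sigma finsets
  have L : ∑ s ∈ InvM Ω x n n, s.count a =
      ((InvM Ω x n n).sigma fun s => Finset.range (s.count a)).card := by
    rw [Finset.card_sigma]
    simp
  have R : ∑ i ∈ (Finset.Icc 1 n).filter (fun i => x ^ i • a = a),
        (InvM Ω x n (n - i)).card =
      (((Finset.Icc 1 n).filter (fun i => x ^ i • a = a)).sigma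
        fun i => InvM Ω x n (n - i)).card := by
    rw [Finset.card_sigma]
  rw [L, R]
  refine Finset.card_bij'
    (fun p _ => (⟨(p.2 + 1) * d, p.1 - (p.2 + 1) • O⟩ : Σ _ : ℕ, Multiset Ω))
    (fun q _ => (⟨q.2 + (q.1 / d) • O, q.1 / d - 1⟩ : Σ _ : Multiset Ω, ℕ))
    ?_ ?_ ?_ ?_
  · -- forward membership
    rintro ⟨s, j⟩ hp
    simp only [Finset.mem_sigma, mem_InvM le_rfl, Finset.mem_range] at hp
    obtain ⟨⟨hcard, hinv⟩, hj⟩ := hp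
    have hjO : (j + 1) • O ≤ s := hle s hinv (j + 1) hj
    have hcards : Multiset.card ((j + 1) • O) = (j + 1) * d := by
      rw [Multiset.card_nsmul, hcardO]
    have hled : (j + 1) * d ≤ n := by
      have := Multiset.card_le_card hjO
      rw [hcards, hcard] at this
      exact this
    simp only [Finset.mem_sigma, Finset.mem_filter, Finset.mem_Icc, mem_InvM (Nat.sub_le n _)]
    refine ⟨⟨⟨?_, hled⟩, (hdvd_iff _).mpr (dvd_mul_left d (j + 1))⟩, ?_, hsub s hinv (j + 1)⟩
    · have : 0 < (j + 1) * d := Nat.mul_pos (Nat.succ_pos j) hd0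
      omega
    · rw [Multiset.card_sub hjO, hcards, hcard]
  · -- backward membership
    rintro ⟨i, m⟩ hq
    simp only [Finset.mem_sigma, Finset.mem_filter, Finset.mem_Icc] at hq
    obtain ⟨⟨⟨hi1, hin⟩, hia⟩, hm⟩ := hq
    have hdd : d ∣ i := (hdvd_iff i).mp hia
    have hjd : i / d * d = i := Nat.div_mul_cancel hdd
    have hjpos : 0 < i / d := Nat.div_pos (Nat.le_of_dvd (by omega) hdd) hd0
    rw [mem_InvM (Nat.sub_le n _)] at hm
    obtain ⟨hcard, hinv⟩ := hm
    simp only [Finset.mem_sigma, mem_InvM le_rfl, Finset.mem_range]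
    refine ⟨⟨?_, hadd m hinv (i / d)⟩, ?_⟩
    · rw [Multiset.card_add, Multiset.card_nsmul, hcardO, hcard, hjd]
      omega
    · rw [Multiset.count_add, Multiset.count_nsmul, hcountO a haO]
      omega
  · -- left inverse
    rintro ⟨s, j⟩ hp
    simp only [Finset.mem_sigma, mem_InvM le_rfl, Finset.mem_range] at hp
    obtain ⟨⟨hcard, hinv⟩, hj⟩ := hp
    have hjO : (j + 1) • O ≤ s := hle s hinv (j + 1) hj
    have h1 : (j + 1) * d / d = j + 1 := Nat.mul_div_cancel _ hd0
    simp only [h1]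
    rw [tsub_add_cancel_of_le hjO, Nat.add_sub_cancel]
  · -- right inverse
    rintro ⟨i, m⟩ hq
    simp only [Finset.mem_sigma, Finset.mem_filter, Finset.mem_Icc] at hq
    obtain ⟨⟨⟨hi1, hin⟩, hia⟩, hm⟩ := hq
    have hdd : d ∣ i := (hdvd_iff i).mp hia
    have hjd : i / d * d = i := Nat.div_mul_cancel hdd
    have hjpos : 0 < i / d := Nat.div_pos (Nat.le_of_dvd (by omega) hdd) hd0
    have h1 : i / d - 1 + 1 = i / d := by omega
    simp only [h1]
    rw [hjd, add_tsub_cancel_right]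

lemma newton (x : G) (n : ℕ) :
    n * fixCnt (Sym Ω n) x
      = ∑ i ∈ Finset.Icc 1 n, fixCnt Ω (x ^ i) * fixCnt (Sym Ω (n - i)) x := by
  classical
  have e3 : ∀ s : Multiset Ω, Multiset.card s = ∑ b : Ω, s.count b := by
    intro s
    rw [← Multiset.toFinset_sum_count_eq s]
    exact Finset.sum_subset (Finset.subset_univ _)
      (fun b _ hb => Multiset.count_eq_zero_of_notMem (by simpa using hb))
  calc n * fixCnt (Sym Ω n) x
      = ∑ s ∈ InvM Ω x n n, Multiset.card s := by
        rw [← card_InvM x le_rfl,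
          Finset.sum_congr rfl (fun s hs => ((mem_InvM le_rfl).1 hs).1),
          Finset.sum_const, smul_eq_mul, mul_comm]
    _ = ∑ s ∈ InvM Ω x n n, ∑ b : Ω, s.count b :=
        Finset.sum_congr rfl fun s _ => e3 s
    _ = ∑ b : Ω, ∑ s ∈ InvM Ω x n n, s.count b := Finset.sum_comm
    _ = ∑ b : Ω, ∑ i ∈ (Finset.Icc 1 n).filter (fun i => x ^ i • b = b),
          (InvM Ω x n (n - i)).card :=
        Finset.sum_congr rfl fun b _ => key_count x n b
    _ = ∑ b : Ω, ∑ i ∈ Finset.Icc 1 n,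
          if x ^ i • b = b then (InvM Ω x n (n - i)).card else 0 :=
        Finset.sum_congr rfl fun b _ => Finset.sum_filter _ _
    _ = ∑ i ∈ Finset.Icc 1 n, ∑ b : Ω,
          if x ^ i • b = b then (InvM Ω x n (n - i)).card else 0 := Finset.sum_comm
    _ = ∑ i ∈ Finset.Icc 1 n, fixCnt Ω (x ^ i) * fixCnt (Sym Ω (n - i)) x := by
        refine Finset.sum_congr rfl fun i hi => ?_
        rw [← Finset.sum_filter, Finset.sum_const, smul_eq_mul]
        congr 1
        · exact (fixCnt_eq_card_filter Ω (x ^ i)).symm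
        · exact card_InvM x (Nat.sub_le n i)

lemma fixCnt_symZero (x : G) : fixCnt (Sym Ω 0) x = 1 := by
  rw [fixCnt]
  have h : Nat.card {s : Sym Ω 0 // x • s = s} = Nat.card (Sym Ω 0) :=
    Nat.card_congr (Equiv.subtypeUnivEquiv fun s => Subsingleton.elim _ _)
  rw [h, Nat.card_unique]

end Newton

section Claim

lemma fixCnt_one (Y : Type u) [MulAction G Y] : fixCnt Y (1 : G) = Nat.card Y :=
  Nat.card_congr (Equiv.subtypeUnivEquiv fun y => one_smul G y)

lemma fixCnt_prod (Y₁ Y₂ : Type u) [MulAction G Y₁] [MulAction G Y₂] (x : G) :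
    fixCnt (Y₁ × Y₂) x = fixCnt Y₁ x * fixCnt Y₂ x := by
  rw [fixCnt, fixCnt, fixCnt, ← Nat.card_prod]
  refine Nat.card_congr ((Equiv.subtypeEquivRight fun p => ?_).trans
    (Equiv.subtypeProdEquivProd))
  constructor
  · intro h
    exact ⟨congrArg Prod.fst h, congrArg Prod.snd h⟩
  · rintro ⟨h1, h2⟩
    exact Prod.ext h1 h2

lemma dvd_sum_fixCnt (Y : Type u) [Fintype Y] [MulAction G Y] :
    (Fintype.card G : ℤ) ∣ ∑ x : G, (fixCnt Y x : ℤ) := by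
  classical
  have h := MulAction.sum_card_fixedBy_eq_card_orbits_mul_card_group G Y
  have h2 : ∀ x : G, fixCnt Y x = Fintype.card (MulAction.fixedBy Y x) := by
    intro x
    rw [fixCnt, Nat.card_eq_fintype_card]
    exact Fintype.card_congr (Equiv.subtypeEquivRight fun y => Iff.rfl)
  have h3 : ∑ x : G, fixCnt Y x
      = Fintype.card (Quotient (MulAction.orbitRel G Y)) * Fintype.card G := by
    rw [← h]
    exact Finset.sum_congr rfl fun x _ => h2 x
  refine ⟨(Fintype.card (Quotient (MulAction.orbitRel G Y)) : ℤ), ?_⟩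
  rw [← Nat.cast_sum, h3]
  push_cast
  ring

lemma claim (Ω : Type u) [Fintype Ω] [MulAction G Ω] :
    ∀ (n : ℕ) (Y : Type u) [Fintype Y] [MulAction G Y],
      (Fintype.card G : ℤ) ∣ ∑ x : G, (fixCnt Ω (x ^ n) : ℤ) * (fixCnt Y x : ℤ) := by
  intro n
  induction n using Nat.strong_induction_on with
  | _ n IH =>
    intro Y _ _
    classical
    rcases Nat.eq_zero_or_pos n with rfl | hn
    · simp only [pow_zero, fixCnt_one]
      rw [← Finset.mul_sum]
      exact Dvd.dvd.mul_left (dvd_sum_fixCnt Y) _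
    · obtain ⟨b, rfl⟩ : ∃ b, n = b + 1 := ⟨n - 1, by omega⟩
      have hprod : ∀ (k : ℕ) (x : G), (fixCnt (Sym Ω k × Y) x : ℤ)
          = (fixCnt (Sym Ω k) x : ℤ) * (fixCnt Y x : ℤ) := by
        intro k x
        rw [fixCnt_prod]
        push_cast
        ring
      have hpt : ∀ x : G, (fixCnt Ω (x ^ (b + 1)) : ℤ) * (fixCnt Y x : ℤ)
          = ((b : ℤ) + 1) * (fixCnt (Sym Ω (b + 1) × Y) x : ℤ)
            - ∑ i ∈ Finset.Icc 1 b,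
                (fixCnt Ω (x ^ i) : ℤ) * (fixCnt (Sym Ω (b + 1 - i) × Y) x : ℤ) := by
        intro x
        have hN := newton (Ω := Ω) x (b + 1)
        rw [Finset.sum_Icc_succ_top (by omega : 1 ≤ b + 1)] at hN
        rw [Nat.sub_self] at hN
        rw [fixCnt_symZero, mul_one] at hN
        have hNZ : ((b : ℤ) + 1) * (fixCnt (Sym Ω (b + 1)) x : ℤ)
            = (∑ i ∈ Finset.Icc 1 b,
                (fixCnt Ω (x ^ i) : ℤ) * (fixCnt (Sym Ω (b + 1 - i)) x : ℤ))
              + (fixCnt Ω (x ^ (b + 1)) : ℤ) := by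
          exact_mod_cast congrArg (fun t : ℕ => (t : ℤ)) hN
        simp only [hprod]
        simp only [← mul_assoc]
        rw [← Finset.sum_mul]
        rw [hNZ]
        ring
      rw [show (∑ x : G, (fixCnt Ω (x ^ (b + 1)) : ℤ) * (fixCnt Y x : ℤ))
          = ∑ x : G, (((b : ℤ) + 1) * (fixCnt (Sym Ω (b + 1) × Y) x : ℤ)
            - ∑ i ∈ Finset.Icc 1 b,
                (fixCnt Ω (x ^ i) : ℤ) * (fixCnt (Sym Ω (b + 1 - i) × Y) x : ℤ))
        from Finset.sum_congr rfl fun x _ => hpt x]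
      rw [Finset.sum_sub_distrib]
      refine dvd_sub ?_ ?_
      · rw [← Finset.mul_sum]
        exact Dvd.dvd.mul_left (dvd_sum_fixCnt _) _
      · rw [Finset.sum_comm]
        refine Finset.dvd_sum fun i hi => ?_
        have hib : i < b + 1 := by
          rw [Finset.mem_Icc] at hi
          omega
        exact IH i hib (Sym Ω (b + 1 - i) × Y)

lemma iwasaki_nat (H : Subgroup G) (m : ℕ) :
    Nat.card H ∣ Nat.card {x : G // x ^ m ∈ H} := by
  classical
  have hclaim := claim (G := G) (G ⧸ H) m PUnit.{u + 1}
  have hPUnit : ∀ x : G, fixCnt PUnit.{u + 1} x = 1 := fun x => by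
    rw [fixCnt]
    have h : Nat.card {y : PUnit.{u + 1} // x • y = y} = Nat.card PUnit.{u + 1} :=
      Nat.card_congr (Equiv.subtypeUnivEquiv fun y => Subsingleton.elim _ _)
    rw [h, Nat.card_unique]
  simp only [hPUnit, Nat.cast_one, mul_one] at hclaim
  rw [← Nat.cast_sum, Int.natCast_dvd_natCast] at hclaim
  -- compute the sum
  have hswap : ∑ x : G, fixCnt (G ⧸ H) (x ^ m)
      = ∑ p : G ⧸ H, (Finset.univ.filter fun x : G => (x ^ m) • p = p).card := by
    rw [Finset.sum_congr rfl fun x (_ : x ∈ Finset.univ) =>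
      (fixCnt_eq_card_filter (G ⧸ H) (x ^ m)).trans (Finset.card_filter _ _),
      Finset.sum_comm]
    exact Finset.sum_congr rfl fun p _ => (Finset.card_filter _ _).symm
  have hfiber : ∀ p : G ⧸ H, (Finset.univ.filter fun x : G => (x ^ m) • p = p).card
      = Nat.card {x : G // x ^ m ∈ H} := by
    intro p
    obtain ⟨g, rfl⟩ := QuotientGroup.mk_surjective p
    have econd : ∀ x : G,
        (x ^ m) • (QuotientGroup.mk g : G ⧸ H) = QuotientGroup.mk g
          ↔ (g⁻¹ * x * g) ^ m ∈ H := by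
      intro x
      have h1 : (x ^ m) • (QuotientGroup.mk g : G ⧸ H)
          = QuotientGroup.mk (x ^ m * g) := rfl
      rw [h1, QuotientGroup.eq]
      have h2 : (x ^ m * g)⁻¹ * g = (g⁻¹ * x ^ m * g)⁻¹ := by group
      have h3 : (g⁻¹ * x * g) ^ m = g⁻¹ * x ^ m * g := by
        have := conj_pow (i := m) (a := g⁻¹) (b := x)
        simpa using this
      rw [h2, inv_mem_iff, h3]
    rw [Nat.card_eq_fintype_card, Fintype.card_subtype]
    refine Finset.card_bij' (fun x _ => g⁻¹ * x * g) (fun y _ => g * y * g⁻¹)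
      ?_ ?_ ?_ ?_
    · intro x hx
      rw [Finset.mem_filter] at hx
      rw [Finset.mem_filter]
      exact ⟨Finset.mem_univ _, (econd x).1 hx.2⟩
    · intro y hy
      rw [Finset.mem_filter] at hy
      rw [Finset.mem_filter]
      refine ⟨Finset.mem_univ _, (econd _).2 ?_⟩
      have : g⁻¹ * (g * y * g⁻¹) * g = y := by group
      rw [this]
      exact hy.2
    · intro x _
      group
    · intro y _
      group
  rw [hswap, Finset.sum_congr rfl fun p _ => hfiber p, Finset.sum_const,
    smul_eq_mul] at hclaim
  have hlag : Fintype.card G = Fintype.card (G ⧸ H) * Nat.card H := by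
    rw [← Nat.card_eq_fintype_card, ← Nat.card_eq_fintype_card]
    exact Subgroup.card_eq_card_quotient_mul_card_subgroup H
  rw [hlag] at hclaim
  have hpos : 0 < Fintype.card (G ⧸ H) := Fintype.card_pos
  exact (Nat.mul_dvd_mul_iff_left hpos).mp hclaim

end Claim

end IwasakiProof

theorem iwasaki (G : Type*) [Group G] [Fintype G] (H : Subgroup G) (n : ℤ) :
    Nat.card H ∣ Nat.card {x : G // x ^ n ∈ H} := by
  have he : {x : G // x ^ n ∈ H} ≃ {x : G // x ^ n.natAbs ∈ H} := by
    refine Equiv.subtypeEquivRight fun x => ?_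
    rcases Int.natAbs_eq n with h | h
    · conv_lhs => rw [h, zpow_natCast]
    · conv_lhs => rw [h, zpow_neg, zpow_natCast]
      rw [inv_mem_iff]
  rw [Nat.card_congr he]
  exact IwasakiProof.iwasaki_nat H n.natAbs
end

section
/- Let F be a group, G a finite group, and suppose the number of group homomorphisms from F to G is finite and positive. If F admits a surjective homomorphism onto ℤ, then the number of homomorphisms from F to G is divisible by |G|. -/
open MulAction Multiplicative

namespace KM

variable {F G : Type*} [Group F] [Group G]

instance : MulAction G (F →* G) where
  smul h φ := ((MulAut.conj h).toMonoidHom.comp φ)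
  one_smul φ := by ext x; show 1 * φ x * 1⁻¹ = φ x; simp
  mul_smul a b φ := by
    ext x; show (a*b) * φ x * (a*b)⁻¹ = a * (b * φ x * b⁻¹) * a⁻¹
    simp [mul_assoc]

lemma smul_apply (h : G) (φ : F →* G) (x : F) : (h • φ) x = h * φ x * h⁻¹ := rfl

variable (deg : F →* Multiplicative ℤ)

/-- restriction to the kernel -/
def res (φ : F →* G) : (deg.ker →* G) := φ.comp deg.ker.subtype

lemma res_apply (φ : F →* G) (k : deg.ker) : res deg φ k = φ k := rfl

lemma res_smul (h : G) (φ : F →* G) : res deg (h • φ) = h • res deg φ := rfl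

variable {deg} {t : F}

lemma d_tpow (ht : deg t = Multiplicative.ofAdd (1:ℤ)) (n : ℤ) :
    deg (t ^ n) = Multiplicative.ofAdd n := by
  rw [map_zpow, ht, ← ofAdd_zsmul]
  simp

lemma mem_ker_shift (ht : deg t = Multiplicative.ofAdd (1:ℤ)) (x : F) :
    x * t ^ (-(Multiplicative.toAdd (deg x))) ∈ deg.ker := by
  rw [MonoidHom.mem_ker, map_mul, d_tpow ht]
  rw [← ofAdd_toAdd (deg x), ← ofAdd_add]
  simp

lemma decomp (φ : F →* G) (x : F) :
    φ x = φ (x * t ^ (-(Multiplicative.toAdd (deg x)))) * (φ t) ^ (Multiplicative.toAdd (deg x)) := by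
  rw [map_mul, map_zpow]
  group

lemma hom_ext (ht : deg t = Multiplicative.ofAdd (1:ℤ)) {φ φ' : F →* G}
    (h1 : res deg φ = res deg φ') (h2 : φ t = φ' t) : φ = φ' := by
  ext x
  rw [decomp φ x, decomp φ' x, h2]
  congr 1
  exact DFunLike.congr_fun h1 ⟨_, mem_ker_shift ht x⟩






-- conjugation facts
lemma conj_u (φ₀ : F →* G) (y : F) : φ₀ t * φ₀ y * (φ₀ t)⁻¹ = φ₀ (t * y * t⁻¹) := by
  simp [map_mul]

lemma conj_u' (φ₀ : F →* G) (y : F) : (φ₀ t)⁻¹ * φ₀ y * φ₀ t = φ₀ (t⁻¹ * y * t) := by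
  simp [map_mul]

variable (φ₀ : F →* G)

/-- centralizer of the image of the kernel -/
def C : Subgroup G := Subgroup.centralizer (φ₀ '' (deg.ker : Set F))

lemma mem_C_iff {z : G} : z ∈ C (deg := deg) φ₀ ↔ ∀ y ∈ deg.ker, φ₀ y * z = z * φ₀ y := by
  rw [C, Subgroup.mem_centralizer_iff]
  constructor
  · intro hz y hy
    exact hz (φ₀ y) ⟨y, hy, rfl⟩
  · rintro h g ⟨y, hy, rfl⟩
    exact h y hy

lemma conj_mem_C {z : G} (hz : z ∈ C (deg := deg) φ₀) : φ₀ t * z * (φ₀ t)⁻¹ ∈ C (deg := deg) φ₀ := by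
  rw [mem_C_iff] at hz ⊢
  intro y hy
  have hy' : t⁻¹ * y * t ∈ deg.ker := by
    simpa [MonoidHom.mem_ker, map_mul] using hy
  have h1 : φ₀ y * φ₀ t = φ₀ t * φ₀ (t⁻¹ * y * t) := by
    rw [← map_mul, ← map_mul]; group
  have h2 : (φ₀ t)⁻¹ * φ₀ y = φ₀ (t⁻¹ * y * t) * (φ₀ t)⁻¹ := by
    rw [← conj_u' φ₀ y]; group
  calc φ₀ y * (φ₀ t * z * (φ₀ t)⁻¹) = (φ₀ y * φ₀ t) * z * (φ₀ t)⁻¹ := by group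
    _ = φ₀ t * (φ₀ (t⁻¹ * y * t) * z) * (φ₀ t)⁻¹ := by rw [h1]; group
    _ = φ₀ t * (z * φ₀ (t⁻¹ * y * t)) * (φ₀ t)⁻¹ := by rw [hz _ hy']
    _ = φ₀ t * z * (φ₀ (t⁻¹ * y * t) * (φ₀ t)⁻¹) := by group
    _ = φ₀ t * z * ((φ₀ t)⁻¹ * φ₀ y) := by rw [← h2]
    _ = φ₀ t * z * (φ₀ t)⁻¹ * φ₀ y := by group

lemma conj_mem_C' {z : G} (hz : z ∈ C (deg := deg) φ₀) : (φ₀ t)⁻¹ * z * φ₀ t ∈ C (deg := deg) φ₀ := by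
  rw [mem_C_iff] at hz ⊢
  intro y hy
  have hy' : t * y * t⁻¹ ∈ deg.ker := by
    simpa [MonoidHom.mem_ker, map_mul] using hy
  have h1 : φ₀ y * (φ₀ t)⁻¹ = (φ₀ t)⁻¹ * φ₀ (t * y * t⁻¹) := by
    rw [← conj_u φ₀ y]; group
  have h2 : φ₀ t * φ₀ y = φ₀ (t * y * t⁻¹) * φ₀ t := by
    rw [← map_mul, ← map_mul]; group
  calc φ₀ y * ((φ₀ t)⁻¹ * z * φ₀ t) = (φ₀ y * (φ₀ t)⁻¹) * z * φ₀ t := by group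
    _ = (φ₀ t)⁻¹ * (φ₀ (t * y * t⁻¹) * z) * φ₀ t := by rw [h1]; group
    _ = (φ₀ t)⁻¹ * (z * φ₀ (t * y * t⁻¹)) * φ₀ t := by rw [hz _ hy']
    _ = (φ₀ t)⁻¹ * z * (φ₀ (t * y * t⁻¹) * φ₀ t) := by group
    _ = (φ₀ t)⁻¹ * z * (φ₀ t * φ₀ y) := by rw [← h2]
    _ = (φ₀ t)⁻¹ * z * φ₀ t * φ₀ y := by group

/-- the twisting cocycle -/
def B (t : F) (c : G) (n : ℤ) : G := (φ₀ t) ^ (-n) * (φ₀ t * c) ^ n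

lemma B_mem_C (t : F) {c : G} (hc : c ∈ C (deg := deg) φ₀) (n : ℤ) : B φ₀ t c n ∈ C (deg := deg) φ₀ := by
  induction n using Int.induction_on with
  | zero => simp [B, Subgroup.one_mem]
  | succ n ih =>
      have : B φ₀ t c (n + 1) = ((φ₀ t)⁻¹ * B φ₀ t c n * φ₀ t) * c := by
        unfold B; rw [zpow_add_one (φ₀ t * c) n]; group
      rw [this]
      exact Subgroup.mul_mem _ (conj_mem_C' φ₀ ih) hc
  | pred n ih =>
      have : B φ₀ t c (-n - 1) = φ₀ t * (B φ₀ t c (-n) * c⁻¹) * (φ₀ t)⁻¹ := by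
        unfold B; rw [zpow_sub_one (φ₀ t * c) (-n)]; group
      rw [this]
      exact conj_mem_C φ₀ (Subgroup.mul_mem _ ih (Subgroup.inv_mem _ hc))





lemma key_calc (da db : ℤ) (AA K u v : G) (hK : K * (u^(-da) * v^da) = (u^(-da) * v^da) * K) :
    AA * (K * u^db) * (u^(-(da+db)) * v^(da+db)) =
      AA * (u^(-da) * v^da) * (K * u^db * (u^(-db) * v^db)) := by
  calc AA * (K * u^db) * (u^(-(da+db)) * v^(da+db))
      = AA * (K * (u^(-da) * v^da)) * v^db := by group
    _ = AA * ((u^(-da) * v^da) * K) * v^db := by rw [hK]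
    _ = AA * (u^(-da) * v^da) * (K * u^db * (u^(-db) * v^db)) := by group

variable (φ₀ : F →* G)

lemma toAdd_deg_mul (a b : F) :
    Multiplicative.toAdd (deg (a * b)) = Multiplicative.toAdd (deg a) + Multiplicative.toAdd (deg b) := by
  rw [map_mul]; rfl

/-- twisting a homomorphism by a centralizing element -/
def twist (ht : deg t = Multiplicative.ofAdd (1:ℤ)) {c : G} (hc : c ∈ C (deg := deg) φ₀) :
    F →* G :=
  MonoidHom.mk' (fun x => φ₀ x * B φ₀ t c (Multiplicative.toAdd (deg x))) (by
    intro a b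
    have hb := decomp (deg := deg) (t := t) φ₀ b
    have hkb : b * t ^ (-(Multiplicative.toAdd (deg b))) ∈ deg.ker := mem_ker_shift ht b
    have hcomm :
        φ₀ (b * t ^ (-(Multiplicative.toAdd (deg b)))) * B φ₀ t c (Multiplicative.toAdd (deg a)) =
          B φ₀ t c (Multiplicative.toAdd (deg a)) * φ₀ (b * t ^ (-(Multiplicative.toAdd (deg b)))) :=
      (mem_C_iff φ₀).1 (B_mem_C φ₀ t hc _) _ hkb
    simp only [toAdd_deg_mul, map_mul, B]
    rw [hb]
    simp only [B] at hcomm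
    exact key_calc _ _ _ _ _ _ hcomm)

lemma twist_apply (ht : deg t = Multiplicative.ofAdd (1:ℤ)) {c : G} (hc : c ∈ C (deg := deg) φ₀)
    (x : F) : twist φ₀ ht hc x = φ₀ x * B φ₀ t c (Multiplicative.toAdd (deg x)) := rfl

lemma res_twist (ht : deg t = Multiplicative.ofAdd (1:ℤ)) {c : G} (hc : c ∈ C (deg := deg) φ₀) :
    res deg (twist φ₀ ht hc) = res deg φ₀ := by
  ext k
  rw [res_apply, res_apply, twist_apply]
  have hk : Multiplicative.toAdd (deg (k : F)) = 0 := by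
    have := k.2
    rw [MonoidHom.mem_ker] at this
    rw [this]; rfl
  rw [hk]
  simp [B]

lemma twist_t (ht : deg t = Multiplicative.ofAdd (1:ℤ)) {c : G} (hc : c ∈ C (deg := deg) φ₀) :
    twist φ₀ ht hc t = φ₀ t * c := by
  rw [twist_apply, ht]
  show φ₀ t * B φ₀ t c 1 = φ₀ t * c
  simp [B]



lemma stab_eq_C (ht : deg t = Multiplicative.ofAdd (1:ℤ)) :
    MulAction.stabilizer G (res deg φ₀) = C (deg := deg) φ₀ := by
  ext z
  rw [MulAction.mem_stabilizer_iff, mem_C_iff]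
  constructor
  · intro hz y hy
    have h := DFunLike.congr_fun hz (⟨y, hy⟩ : deg.ker)
    have h' : z * φ₀ y * z⁻¹ = φ₀ y := h
    calc φ₀ y * z = (z * φ₀ y * z⁻¹) * z := by rw [h']
      _ = z * φ₀ y := by group
  · intro hz
    ext k
    show z * φ₀ k * z⁻¹ = φ₀ k
    rw [← hz k.1 k.2]
    group

/-- The fiber of the restriction map over `res φ₀` is in bijection with the
centralizer of the image of the kernel. -/
noncomputable def fiberEquivC (ht : deg t = Multiplicative.ofAdd (1:ℤ)) :
    {φ : F →* G // res deg φ = res deg φ₀} ≃ C (deg := deg) φ₀ where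
  toFun := fun ⟨φ, hφ⟩ => ⟨(φ₀ t)⁻¹ * φ t, by
    rw [mem_C_iff]
    intro y hy
    have h1 : φ y = φ₀ y := DFunLike.congr_fun hφ (⟨y, hy⟩ : deg.ker)
    have h2 : t * y * t⁻¹ ∈ deg.ker := by
      simpa [MonoidHom.mem_ker, map_mul] using hy
    have h3 : φ (t * y * t⁻¹) = φ₀ (t * y * t⁻¹) := DFunLike.congr_fun hφ (⟨_, h2⟩ : deg.ker)
    have h4 : φ t * φ₀ y = φ (t * y * t⁻¹) * φ t := by
      rw [← h1, ← map_mul, ← map_mul]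
      congr 1
      group
    refine Eq.symm ?_
    calc ((φ₀ t)⁻¹ * φ t) * φ₀ y = (φ₀ t)⁻¹ * (φ t * φ₀ y) := by group
      _ = (φ₀ t)⁻¹ * (φ (t * y * t⁻¹) * φ t) := by rw [h4]
      _ = (φ₀ t)⁻¹ * (φ₀ (t * y * t⁻¹) * φ t) := by rw [h3]
      _ = ((φ₀ t)⁻¹ * φ₀ (t * y * t⁻¹) * φ₀ t) * ((φ₀ t)⁻¹ * φ t) := by group
      _ = φ₀ (t⁻¹ * (t * y * t⁻¹) * t) * ((φ₀ t)⁻¹ * φ t) := by rw [conj_u' φ₀]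
      _ = φ₀ y * ((φ₀ t)⁻¹ * φ t) := by congr 2; group⟩
  invFun := fun ⟨c, hc⟩ => ⟨twist φ₀ ht hc, res_twist φ₀ ht hc⟩
  left_inv := by
    rintro ⟨φ, hφ⟩
    apply Subtype.ext
    apply hom_ext ht
    · rw [res_twist]; exact hφ.symm
    · rw [twist_t]; group
  right_inv := by
    rintro ⟨c, hc⟩
    apply Subtype.ext
    show (φ₀ t)⁻¹ * twist φ₀ ht hc t = c
    rw [twist_t]
    group

/-- fibers over elements of an orbit are equivalent -/
def fiberSmulEquiv (h : G) (ψ : deg.ker →* G) :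
    {φ : F →* G // res deg φ = h • ψ} ≃ {φ : F →* G // res deg φ = ψ} where
  toFun := fun ⟨φ, hφ⟩ => ⟨h⁻¹ • φ, by rw [res_smul, hφ, inv_smul_smul]⟩
  invFun := fun ⟨φ, hφ⟩ => ⟨h • φ, by rw [res_smul, hφ]⟩
  left_inv := by rintro ⟨φ, hφ⟩; apply Subtype.ext; simp
  right_inv := by rintro ⟨φ, hφ⟩; apply Subtype.ext; simp

/-- decomposition of a class into fibers -/
def classEquivSigma (ψ₀ : deg.ker →* G) :
    {φ : F →* G // res deg φ ∈ MulAction.orbit G ψ₀} ≃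
      Σ p : MulAction.orbit G ψ₀, {φ : F →* G // res deg φ = ↑p} where
  toFun := fun ⟨φ, h⟩ => ⟨⟨res deg φ, h⟩, ⟨φ, rfl⟩⟩
  invFun := fun ⟨p, φ, h⟩ => ⟨φ, by rw [h]; exact p.2⟩
  left_inv := by rintro ⟨φ, h⟩; rfl
  right_inv := by
    rintro ⟨⟨pv, hp⟩, φ, h⟩
    dsimp only at h
    subst h
    rfl

end KM

theorem km_main_special (F G : Type*) [Group F] [Group G] [Fintype G]
    (hfin : Finite (F →* G)) (hpos : 0 < Nat.card (F →* G))
    (deg : F →* Multiplicative ℤ) (hdeg : Function.Surjective deg) :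
    Fintype.card G ∣ Nat.card (F →* G) := by
  classical
  obtain ⟨t, ht⟩ := hdeg (Multiplicative.ofAdd 1)
  haveI : Fintype (F →* G) := Fintype.ofFinite _
  let s : Setoid (F →* G) := Setoid.comap (KM.res deg) (MulAction.orbitRel G (deg.ker →* G))
  haveI : Finite (Quotient s) := Quotient.finite _
  haveI : Fintype (Quotient s) := Fintype.ofFinite _
  have h1 : Nat.card (F →* G) =
      ∑ ω : Quotient s, Nat.card {φ : F →* G // Quotient.mk s φ = ω} := by
    calc Nat.card (F →* G)
        = Nat.card (Σ ω : Quotient s, {φ : F →* G // Quotient.mk s φ = ω}) :=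
          (Nat.card_congr (Equiv.sigmaFiberEquiv (Quotient.mk s))).symm
      _ = ∑ ω : Quotient s, Nat.card {φ : F →* G // Quotient.mk s φ = ω} := by
          rw [Nat.card_eq_fintype_card, Fintype.card_sigma]
          simp [Nat.card_eq_fintype_card]
  have h2 : ∀ ω : Quotient s, Nat.card {φ : F →* G // Quotient.mk s φ = ω} = Fintype.card G := by
    intro ω
    obtain ⟨φ₀, hω⟩ : ∃ φ₀, Quotient.mk s φ₀ = ω := ⟨ω.out, Quotient.out_eq ω⟩
    set ψ₀ := KM.res deg φ₀ with hψ₀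
    haveI : Finite (MulAction.orbit G ψ₀) :=
      Set.Finite.to_subtype (Set.finite_range (fun g : G => g • ψ₀))
    haveI : Fintype (MulAction.orbit G ψ₀) := Fintype.ofFinite _
    have key : ∀ p : MulAction.orbit G ψ₀,
        Nat.card {φ : F →* G // KM.res deg φ = ↑p} = Nat.card (KM.C (deg := deg) φ₀) := by
      intro p
      obtain ⟨g, hg⟩ := MulAction.mem_orbit_iff.mp p.2
      calc Nat.card {φ : F →* G // KM.res deg φ = ↑p}
          = Nat.card {φ : F →* G // KM.res deg φ = g • ψ₀} := by rw [hg]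
        _ = Nat.card {φ : F →* G // KM.res deg φ = ψ₀} :=
            Nat.card_congr (KM.fiberSmulEquiv g ψ₀)
        _ = Nat.card (KM.C (deg := deg) φ₀) := Nat.card_congr (KM.fiberEquivC φ₀ ht)
    have hiff : ∀ φ : F →* G,
        Quotient.mk s φ = ω ↔ KM.res deg φ ∈ MulAction.orbit G ψ₀ := by
      intro φ
      rw [← hω]
      constructor
      · intro h
        have hr := Quotient.exact h
        exact MulAction.orbitRel_apply.mp hr
      · intro h
        refine Quotient.sound ?_
        exact MulAction.orbitRel_apply.mpr h
    calc Nat.card {φ : F →* G // Quotient.mk s φ = ω}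
        = Nat.card {φ : F →* G // KM.res deg φ ∈ MulAction.orbit G ψ₀} :=
          Nat.card_congr (Equiv.subtypeEquivRight hiff)
      _ = Nat.card (Σ p : MulAction.orbit G ψ₀, {φ : F →* G // KM.res deg φ = ↑p}) :=
          Nat.card_congr (KM.classEquivSigma ψ₀)
      _ = ∑ p : MulAction.orbit G ψ₀, Nat.card {φ : F →* G // KM.res deg φ = ↑p} := by
          rw [Nat.card_eq_fintype_card, Fintype.card_sigma]
          simp [Nat.card_eq_fintype_card]
      _ = ∑ _p : MulAction.orbit G ψ₀, Nat.card (KM.C (deg := deg) φ₀) := by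
          exact Finset.sum_congr rfl (fun p _ => key p)
      _ = Nat.card (MulAction.orbit G ψ₀) * Nat.card (KM.C (deg := deg) φ₀) := by
          rw [Finset.sum_const, Finset.card_univ, smul_eq_mul]
          simp [Nat.card_eq_fintype_card]
      _ = Nat.card (MulAction.orbit G ψ₀) * Nat.card (MulAction.stabilizer G ψ₀) := by
          rw [KM.stab_eq_C φ₀ ht]
      _ = Fintype.card G := by
          rw [← Nat.card_prod, ← Nat.card_eq_fintype_card]
          exact Nat.card_congr (MulAction.orbitProdStabilizerEquivGroup G ψ₀)
  rw [h1]
  have h3 : (∑ ω : Quotient s, Nat.card {φ : F →* G // Quotient.mk s φ = ω})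
      = Fintype.card (Quotient s) * Fintype.card G := by
    rw [Finset.sum_congr rfl (fun ω _ => h2 ω), Finset.sum_const, Finset.card_univ, smul_eq_mul]
  rw [h3]
  exact dvd_mul_left _ _
end

section
/- Let G be a finite group, H ≤ G a subgroup, and g ∈ G. Then for any integer n, the number of elements x ∈ G with x^n ∈ HgH is divisible by |H|, where HgH = {h₁ g h₂ : h₁, h₂ ∈ H} is the double coset of g. -/
open Finset

namespace SatoAsai

open scoped Classical

universe u

theorem card_sigma' {α : Type*} [Fintype α] (f : α → Type*) [∀ a, Finite (f a)] :
    Nat.card (Σ a, f a) = ∑ a, Nat.card (f a) := by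
  letI := fun a => Fintype.ofFinite (f a)
  simp [Nat.card_eq_fintype_card, Fintype.card_sigma]

def prodSubtypeSigmaRight {α β : Type*} (P : α → β → Prop) :
    {p : α × β // P p.1 p.2} ≃ Σ a : α, {b : β // P a b} where
  toFun p := ⟨p.1.1, p.1.2, p.2⟩
  invFun q := ⟨(q.1, q.2.1), q.2.2⟩
  left_inv p := rfl
  right_inv q := rfl

def prodSubtypeSigmaLeft {α β : Type*} (P : α → β → Prop) :
    {p : α × β // P p.1 p.2} ≃ Σ b : β, {a : α // P a b} where
  toFun p := ⟨p.1.2, p.1.1, p.2⟩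
  invFun q := ⟨(q.2.1, q.1), q.2.2⟩
  left_inv p := rfl
  right_inv q := rfl

theorem card_prod_subtype_right {α β : Type*} [Fintype α] [Fintype β] (P : α → β → Prop) :
    Nat.card {p : α × β // P p.1 p.2} = ∑ a : α, Nat.card {b : β // P a b} := by
  rw [Nat.card_congr (prodSubtypeSigmaRight P), card_sigma']

theorem card_prod_subtype_left {α β : Type*} [Fintype α] [Fintype β] (P : α → β → Prop) :
    Nat.card {p : α × β // P p.1 p.2} = ∑ b : β, Nat.card {a : α // P a b} := by
  rw [Nat.card_congr (prodSubtypeSigmaLeft P), card_sigma']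

theorem dvd_sum_fiberwise {α β : Type*} [DecidableEq β] {d : ℕ} (s : Finset α) (f : α → β)
    (v : α → ℕ) (h : ∀ x₀ ∈ s, d ∣ ∑ y ∈ s.filter (fun y => f y = f x₀), v y) :
    d ∣ ∑ x ∈ s, v x := by
  rw [← Finset.sum_fiberwise_of_maps_to (fun x hx => Finset.mem_image_of_mem f hx) v]
  refine Finset.dvd_sum ?_
  intro b hb
  obtain ⟨x₀, hx₀, rfl⟩ := Finset.mem_image.mp hb
  exact h x₀ hx₀

theorem card_subtype_eq_zero {α : Type*} {p : α → Prop} (h : ∀ a, ¬ p a) :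
    Nat.card {a : α // p a} = 0 := by
  have : IsEmpty {a : α // p a} := ⟨fun x => h x.1 x.2⟩
  simp [Nat.card_eq_zero]

theorem nat_card_subtype_eq_filter_card {α : Type*} [Fintype α] (p : α → Prop) :
    Nat.card {a : α // p a} = (univ.filter p).card := by
  rw [Nat.card_eq_fintype_card, Fintype.card_subtype]

section OrbDoset
variable {G : Type u} [Group G] [Fintype G]

/-- the `H`-conjugation orbit of `x`, as a `Finset`. -/
noncomputable def orbF (H : Subgroup G) (x : G) : Finset G :=
  univ.filter (fun y => ∃ h ∈ H, y = h * x * h⁻¹)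

theorem mem_orbF {H : Subgroup G} {x y : G} : y ∈ orbF H x ↔ ∃ h ∈ H, y = h * x * h⁻¹ := by
  simp [orbF]

theorem self_mem_orbF {H : Subgroup G} {x : G} : x ∈ orbF H x :=
  mem_orbF.mpr ⟨1, one_mem H, by group⟩

theorem orbF_eq_of_mem {H : Subgroup G} {x y : G} (h : y ∈ orbF H x) : orbF H y = orbF H x := by
  obtain ⟨h₀, h₀H, rfl⟩ := mem_orbF.mp h
  ext z
  simp only [mem_orbF]
  constructor
  · rintro ⟨k, kH, rfl⟩
    exact ⟨k * h₀, mul_mem kH h₀H, by group⟩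
  · rintro ⟨k, kH, rfl⟩
    exact ⟨k * h₀⁻¹, mul_mem kH (inv_mem h₀H), by group⟩

theorem one_not_mem_orbF {H : Subgroup G} {c : G} (hc : c ≠ 1) : 1 ∉ orbF H c := by
  intro h
  obtain ⟨h₀, _, e⟩ := mem_orbF.mp h
  apply hc
  have : h₀ * c * h₀⁻¹ = 1 := e.symm
  have : c = h₀⁻¹ * 1 * h₀ := by rw [← this]; group
  simpa using this

theorem orbF_subset_of_mem {H : Subgroup G} {c : G} (hc : c ∈ H) : orbF H c ⊆ (H : Set G).toFinset := by
  intro y hy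
  obtain ⟨h, hH, rfl⟩ := mem_orbF.mp hy
  simp only [Set.mem_toFinset, SetLike.mem_coe]
  exact mul_mem (mul_mem hH hc) (inv_mem hH)

/-- Orbit–stabilizer for conjugation of `H` on `G`. -/
theorem orbF_card_mul_stab (H : Subgroup G) (x : G) :
    (orbF H x).card * Nat.card {c : G // c ∈ H ∧ c * x = x * c} = Nat.card ↥H := by
  set ψ : ↥H → G := fun h => (h : G) * x * (h : G)⁻¹ with hψ
  have himg : univ.image ψ = orbF H x := by
    ext b
    simp only [mem_image, mem_univ, true_and, mem_orbF, hψ]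
    constructor
    · rintro ⟨h, rfl⟩; exact ⟨h, h.2, rfl⟩
    · rintro ⟨h, hH, rfl⟩; exact ⟨⟨h, hH⟩, rfl⟩
  have hcard : (univ : Finset ↥H).card =
      ∑ b ∈ univ.image ψ, (univ.filter (fun h => ψ h = b)).card :=
    Finset.card_eq_sum_card_fiberwise (fun h _ => Finset.mem_image_of_mem ψ (mem_univ h))
  have hfib : ∀ b ∈ univ.image ψ,
      (univ.filter (fun h => ψ h = b)).card = Nat.card {c : G // c ∈ H ∧ c * x = x * c} := by
    rintro b hb
    obtain ⟨h₀, -, rfl⟩ := Finset.mem_image.mp hb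
    rw [← nat_card_subtype_eq_filter_card]
    refine Nat.card_congr ?_
    refine
      { toFun := fun h => ⟨(h₀ : G)⁻¹ * (h.1 : G), mul_mem (inv_mem h₀.2) h.1.2, ?_⟩
        invFun := fun c => ⟨⟨(h₀ : G) * c.1, mul_mem h₀.2 c.2.1⟩, ?_⟩
        left_inv := ?_
        right_inv := ?_ }
    · have e : (h.1 : G) * x * (h.1 : G)⁻¹ = (h₀ : G) * x * (h₀ : G)⁻¹ := h.2
      have := congrArg (fun z => (h₀ : G)⁻¹ * z * (h.1 : G)) e
      simp only [mul_assoc] at this ⊢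
      simpa [mul_assoc] using this
    · have hc := c.2.2
      show (h₀ : G) * c.1 * x * ((h₀ : G) * c.1)⁻¹ = (h₀ : G) * x * (h₀ : G)⁻¹
      have : c.1 * x * c.1⁻¹ = x := by rw [hc]; group
      calc (h₀ : G) * c.1 * x * ((h₀ : G) * c.1)⁻¹
          = (h₀ : G) * (c.1 * x * c.1⁻¹) * (h₀ : G)⁻¹ := by group
        _ = (h₀ : G) * x * (h₀ : G)⁻¹ := by rw [this]
    · rintro ⟨⟨h, hH⟩, hh⟩
      ext
      show (h₀ : G) * ((h₀ : G)⁻¹ * h) = h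
      group
    · rintro ⟨c, hc1, hc2⟩
      ext
      show (h₀ : G)⁻¹ * ((h₀ : G) * c) = c
      group
  rw [Finset.sum_congr rfl hfib, Finset.sum_const, smul_eq_mul, himg] at hcard
  rw [← hcard, Nat.card_eq_fintype_card, Fintype.card]

/-- the `(K,K)` double coset of `y`, as a `Finset`. -/
noncomputable def dosetF (K : Subgroup G) (y : G) : Finset G :=
  univ.filter (fun z => ∃ a ∈ K, ∃ b ∈ K, z = a * y * b)

theorem mem_dosetF {K : Subgroup G} {y z : G} :
    z ∈ dosetF K y ↔ ∃ a ∈ K, ∃ b ∈ K, z = a * y * b := by simp [dosetF]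

theorem self_mem_dosetF {K : Subgroup G} {y : G} : y ∈ dosetF K y :=
  mem_dosetF.mpr ⟨1, one_mem K, 1, one_mem K, by group⟩

theorem dosetF_eq_of_mem {K : Subgroup G} {y z : G} (h : z ∈ dosetF K y) :
    dosetF K z = dosetF K y := by
  obtain ⟨a, aK, b, bK, rfl⟩ := mem_dosetF.mp h
  ext w
  simp only [mem_dosetF]
  constructor
  · rintro ⟨a', a'K, b', b'K, rfl⟩
    exact ⟨a' * a, mul_mem a'K aK, b * b', mul_mem bK b'K, by group⟩
  · rintro ⟨a', a'K, b', b'K, rfl⟩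
    exact ⟨a' * a⁻¹, mul_mem a'K (inv_mem aK), b⁻¹ * b', mul_mem (inv_mem bK) b'K, by group⟩

end OrbDoset
section Quot
variable {G : Type u} [Group G]

noncomputable def quotPreimageEquiv (Z : Subgroup G) [Z.Normal] (s : Set (G ⧸ Z)) :
    {x : G // (x : G ⧸ Z) ∈ s} ≃ {y : G ⧸ Z // y ∈ s} × {z : G // z ∈ Z} where
  toFun x := (⟨(x.1 : G ⧸ Z), x.2⟩,
    ⟨((x.1 : G ⧸ Z)).out⁻¹ * x.1, by
      refine QuotientGroup.eq.mp ?_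
      rw [QuotientGroup.out_eq']⟩)
  invFun p := ⟨p.1.1.out * p.2.1, by
      have : ((p.1.1.out * p.2.1 : G) : G ⧸ Z) = p.1.1 := by
        rw [QuotientGroup.mk_mul, QuotientGroup.out_eq',
          (QuotientGroup.eq_one_iff _).mpr p.2.2, mul_one]
      rw [this]; exact p.1.2⟩
  left_inv x := by
    ext
    show ((x.1 : G ⧸ Z)).out * (((x.1 : G ⧸ Z)).out⁻¹ * x.1) = x.1
    group
  right_inv p := by
    have hmk : ((p.1.1.out * p.2.1 : G) : G ⧸ Z) = p.1.1 := by
      rw [QuotientGroup.mk_mul, QuotientGroup.out_eq',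
        (QuotientGroup.eq_one_iff _).mpr p.2.2, mul_one]
    refine Prod.ext (Subtype.ext hmk) (Subtype.ext ?_)
    show ((p.1.1.out * p.2.1 : G) : G ⧸ Z).out⁻¹ * (p.1.1.out * p.2.1) = p.2.1
    rw [hmk]
    group

theorem card_preimage (Z : Subgroup G) [Z.Normal] [Fintype G] (s : Set (G ⧸ Z)) :
    Nat.card {x : G // (x : G ⧸ Z) ∈ s} = Nat.card {y : G ⧸ Z // y ∈ s} * Nat.card ↥Z := by
  rw [Nat.card_congr (quotPreimageEquiv Z s), Nat.card_prod]

theorem centerInter_normal (H : Subgroup G) : (Subgroup.center G ⊓ H).Normal := by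
  constructor
  intro z hz g
  have : g * z * g⁻¹ = z := by
    rw [Subgroup.mem_center_iff.mp hz.1 g]; group
  rw [this]; exact hz

end Quot
section ConjUtil
variable {G : Type u} [Group G]

def conjEquiv (h : G) : G ≃ G where
  toFun x := h * x * h⁻¹
  invFun x := h⁻¹ * x * h
  left_inv x := by group
  right_inv x := by group

theorem card_conj {Q R : G → Prop} (h : G) (hQR : ∀ x, R x ↔ Q (h * x * h⁻¹)) :
    Nat.card {x : G // Q x} = Nat.card {x : G // R x} :=
  (Nat.card_congr (Equiv.subtypeEquiv (conjEquiv h) hQR)).symm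

theorem conj_comm_iff (h a b : G) :
    a * b = b * a ↔ (h * a * h⁻¹) * (h * b * h⁻¹) = (h * b * h⁻¹) * (h * a * h⁻¹) := by
  constructor <;> intro e
  · calc (h*a*h⁻¹) * (h*b*h⁻¹) = h * (a*b) * h⁻¹ := by group
      _ = h * (b*a) * h⁻¹ := by rw [e]
      _ = (h*b*h⁻¹)*(h*a*h⁻¹) := by group
  · have e2 : h * (a*b) * h⁻¹ = h * (b*a) * h⁻¹ := by
      calc h * (a*b) * h⁻¹ = (h*a*h⁻¹) * (h*b*h⁻¹) := by group
        _ = (h*b*h⁻¹)*(h*a*h⁻¹) := e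
        _ = h * (b*a) * h⁻¹ := by group
    exact mul_left_cancel (mul_right_cancel e2)

theorem mem_conj_iff {H : Subgroup G} {h : G} (hh : h ∈ H) (a : G) :
    a ∈ H ↔ h * a * h⁻¹ ∈ H := by
  constructor <;> intro ha
  · exact mul_mem (mul_mem hh ha) (inv_mem hh)
  · have := mul_mem (mul_mem (inv_mem hh) ha) hh
    have e : h⁻¹ * (h * a * h⁻¹) * h = a := by group
    rwa [e] at this

end ConjUtil

section B
variable {G₀ : Type u}

theorem cosetB (n : ℤ) : ∀ (N : ℕ) (G : Type u) [Group G] [Fintype G],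
    Nat.card G ≤ N → ∀ (H : Subgroup G) (g : G), g ∈ Subgroup.normalizer (H : Set G) →
    Nat.card ↥H ∣ Nat.card {x : G // ∃ h ∈ H, x ^ n = g * h} := by
  intro N
  induction N using Nat.strong_induction_on with
  | _ N IH =>
  intro G _ _ hGN H g hg
  by_cases hZ : Subgroup.center G ⊓ H = ⊥
  · -- Burnside / centralizer-induction case
    set T : Set G := {x | ∃ h ∈ H, x ^ n = g * h} with hTdef
    have htc : ∀ h x : G, h ∈ H → x ∈ T → h * x * h⁻¹ ∈ T := by
      rintro h x hh ⟨h', h'H, hxn⟩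
      refine ⟨(g⁻¹ * h * g) * h' * h⁻¹, ?_, ?_⟩
      · have h1 : g⁻¹ * h * g ∈ H := by
          have := (Subgroup.mem_normalizer_iff.mp (inv_mem hg) h).mp hh
          simpa [mul_assoc] using this
        exact mul_mem (mul_mem h1 h'H) (inv_mem hh)
      · rw [conj_zpow, hxn]; group
    have hTconj : ∀ h x : G, h ∈ H → (x ∈ T ↔ h * x * h⁻¹ ∈ T) := by
      intro h x hh
      refine ⟨htc h x hh, fun h2 => ?_⟩
      have h3 := htc h⁻¹ _ (inv_mem hh) h2
      have e : h⁻¹ * (h * x * h⁻¹) * h⁻¹⁻¹ = x := by group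
      rwa [e] at h3
    set P : G → G → Prop := fun c x => c ∈ H ∧ (x ∈ T ∧ c * x = x * c) with hPdef
    set w : G → ℕ := fun x => Nat.card {c : G // P c x} with hwdef
    set v : G → ℕ := fun c => Nat.card {x : G // P c x} with hvdef
    have hwconj : ∀ (h x : G), h ∈ H → w (h * x * h⁻¹) = w x := by
      intro h x hh
      exact card_conj h fun c =>
        and_congr (mem_conj_iff hh c) (and_congr (hTconj h x hh) (conj_comm_iff h c x))
    have hvconj : ∀ (h c : G), h ∈ H → v (h * c * h⁻¹) = v c := by
      intro h c hh
      exact card_conj h fun x =>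
        and_congr (mem_conj_iff hh c) (and_congr (hTconj h x hh) (conj_comm_iff h c x))
    have hfilter : ∀ (s : Finset G) (x₀ : G), x₀ ∈ s → (∀ y ∈ orbF H x₀, y ∈ s) →
        s.filter (fun y => orbF H y = orbF H x₀) = orbF H x₀ := by
      intro s x₀ hx₀ hsub
      ext y
      simp only [Finset.mem_filter]
      constructor
      · rintro ⟨-, he⟩; rw [← he]; exact self_mem_orbF
      · intro hy; exact ⟨hsub y hy, orbF_eq_of_mem hy⟩
    -- first count : |H| divides E
    have hE1 : Nat.card ↥H ∣ Nat.card {p : G × G // P p.1 p.2} := by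
      rw [card_prod_subtype_left P]
      refine dvd_sum_fiberwise univ (orbF H) w ?_
      intro x₀ _
      rw [hfilter univ x₀ (mem_univ _) (fun y _ => mem_univ y)]
      have hconst : ∀ y ∈ orbF H x₀, w y = w x₀ := by
        intro y hy
        obtain ⟨h, hh, rfl⟩ := mem_orbF.mp hy
        exact hwconj h x₀ hh
      rw [Finset.sum_congr rfl hconst, Finset.sum_const, smul_eq_mul]
      by_cases hx₀ : x₀ ∈ T
      · have hw : w x₀ = Nat.card {c : G // c ∈ H ∧ c * x₀ = x₀ * c} := by
          refine Nat.card_congr (Equiv.subtypeEquivRight fun c => ?_)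
          simp only [hPdef]
          exact ⟨fun hc => ⟨hc.1, hc.2.2⟩, fun hc => ⟨hc.1, hx₀, hc.2⟩⟩
        rw [hw, orbF_card_mul_stab]
      · have hw0 : w x₀ = 0 := by
          refine card_subtype_eq_zero fun c hc => hx₀ hc.2.1
        rw [hw0, mul_zero]
        exact dvd_zero _
    -- second count
    have hsplit : Nat.card {p : G × G // P p.1 p.2} = ∑ c : G, v c := card_prod_subtype_right P
    have hv1 : v 1 = Nat.card {x : G // x ∈ T} := by
      refine Nat.card_congr (Equiv.subtypeEquivRight fun x => ?_)
      simp only [hPdef]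
      exact ⟨fun hc => hc.2.1, fun hx => ⟨one_mem H, hx, by group⟩⟩
    have hE2 : Nat.card ↥H ∣ ∑ c ∈ univ.erase 1, v c := by
      refine dvd_sum_fiberwise (univ.erase 1) (orbF H) v ?_
      intro c₀ hc₀
      have hc₀1 : c₀ ≠ 1 := (Finset.mem_erase.mp hc₀).1
      rw [hfilter (univ.erase 1) c₀ hc₀ (fun y hy => Finset.mem_erase.mpr
        ⟨fun h1 => one_not_mem_orbF hc₀1 (h1 ▸ hy), mem_univ y⟩)]
      have hconst : ∀ y ∈ orbF H c₀, v y = v c₀ := by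
        intro y hy
        obtain ⟨h, hh, rfl⟩ := mem_orbF.mp hy
        exact hvconj h c₀ hh
      rw [Finset.sum_congr rfl hconst, Finset.sum_const, smul_eq_mul]
      by_cases hc₀H : c₀ ∈ H
      · -- centralizer induction step
        have key : Nat.card {c : G // c ∈ H ∧ c * c₀ = c₀ * c} ∣ v c₀ := by
          set C := Subgroup.centralizer ({c₀} : Set G) with hCdef
          have hCmem : ∀ x : G, x ∈ C ↔ c₀ * x = x * c₀ := fun x => by
            simp [hCdef, Subgroup.mem_centralizer_iff]
          have hv : v c₀ = Nat.card {x : G // x ∈ T ∧ x ∈ C} := by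
            refine Nat.card_congr (Equiv.subtypeEquivRight fun x => ?_)
            simp only [hPdef]
            exact ⟨fun hc => ⟨hc.2.1, (hCmem x).mpr hc.2.2⟩,
              fun hc => ⟨hc₀H, hc.1, (hCmem x).mp hc.2⟩⟩
          by_cases hex : ∃ h ∈ H, g * h ∈ C
          · obtain ⟨h₀, h₀H, hg'C⟩ := hex
            -- C is a proper subgroup
            have hc₀Z : c₀ ∉ Subgroup.center G := by
              intro hmem
              have : c₀ ∈ Subgroup.center G ⊓ H := ⟨hmem, hc₀H⟩
              rw [hZ] at this
              exact hc₀1 (Subgroup.mem_bot.mp this)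
            obtain ⟨wit, hwit⟩ : ∃ z : G, ¬ (z * c₀ = c₀ * z) := by
              by_contra hcon
              push_neg at hcon
              exact hc₀Z (Subgroup.mem_center_iff.mpr hcon)
            have hwC : wit ∉ C := fun hw => hwit ((hCmem wit).mp hw).symm
            have hcard : Nat.card ↥C < Nat.card G := by
              have h1 : Nat.card ↥C = (C : Set G).ncard := Nat.card_coe_set_eq _
              have h2 : (C : Set G) ⊂ Set.univ := by
                refine Set.ssubset_univ_iff.mpr ?_
                intro he
                exact hwC (by rw [← SetLike.mem_coe, he]; trivial)
              have hlt := Set.ncard_lt_ncard h2 Set.finite_univ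
              rw [h1]
              calc (C : Set G).ncard < (Set.univ : Set G).ncard := hlt
                _ = Nat.card G := Set.ncard_univ G
            letI : Fintype ↥C := Fintype.ofFinite _
            set H' := H.subgroupOf C with hH'def
            set g'' : ↥C := ⟨g * h₀, hg'C⟩ with hg''def
            have hg'N : g * h₀ ∈ Subgroup.normalizer (H : Set G) := mul_mem hg (Subgroup.le_normalizer h₀H)
            have hg''N : g'' ∈ Subgroup.normalizer (H' : Set ↥C) := by
              rw [Subgroup.mem_normalizer_iff]
              intro b
              rw [hH'def, Subgroup.mem_subgroupOf, Subgroup.mem_subgroupOf]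
              have : ((g'' * b * g''⁻¹ : ↥C) : G) = (g * h₀) * (b : G) * (g * h₀)⁻¹ := by
                push_cast [hg''def]
                rfl
              rw [this]
              exact Subgroup.mem_normalizer_iff.mp hg'N (b : G)
            have IH' := IH (Nat.card ↥C) (lt_of_lt_of_le hcard hGN) ↥C le_rfl H' g'' hg''N
            have e1 : Nat.card ↥H' = Nat.card {c : G // c ∈ H ∧ c * c₀ = c₀ * c} := by
              refine Nat.card_congr ?_
              refine
                { toFun := fun y => ⟨(y.1 : G), Subgroup.mem_subgroupOf.mp y.2,
                    ((hCmem _).mp y.1.2).symm⟩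
                  invFun := fun c => ⟨⟨c.1, (hCmem _).mpr c.2.2.symm⟩,
                    Subgroup.mem_subgroupOf.mpr c.2.1⟩
                  left_inv := fun y => by ext; rfl
                  right_inv := fun c => by ext; rfl }
            have e2 : Nat.card {y : ↥C // ∃ h' ∈ H', y ^ n = g'' * h'} =
                Nat.card {x : G // x ∈ T ∧ x ∈ C} := by
              refine Nat.card_congr ?_
              refine
                { toFun := fun y => ⟨(y.1 : G), ?_, y.1.2⟩
                  invFun := fun x => ⟨⟨x.1, x.2.2⟩, ?_⟩
                  left_inv := fun y => by ext; rfl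
                  right_inv := fun c => by ext; rfl }
              · obtain ⟨h', h'H', e⟩ := y.2
                refine ⟨h₀ * (h' : G), mul_mem h₀H (Subgroup.mem_subgroupOf.mp h'H'), ?_⟩
                have e' : ((y.1 : G)) ^ n = (g * h₀) * (h' : G) := by
                  have e'' : (((y.1 ^ n : ↥C)) : G) = ((g'' * h' : ↥C) : G) := congrArg _ e
                  simpa using e''
                rw [e', mul_assoc]
              · obtain ⟨h, hH, e⟩ := x.2.1
                have hxC : x.1 ∈ C := x.2.2
                have hxnC : x.1 ^ n ∈ C := zpow_mem hxC n
                refine ⟨⟨(g * h₀)⁻¹ * x.1 ^ n, mul_mem (inv_mem hg'C) hxnC⟩, ?_, ?_⟩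
                · rw [Subgroup.mem_subgroupOf]
                  show (g * h₀)⁻¹ * x.1 ^ n ∈ H
                  rw [e]
                  have : (g * h₀)⁻¹ * (g * h) = h₀⁻¹ * h := by group
                  rw [this]
                  exact mul_mem (inv_mem h₀H) hH
                · ext
                  push_cast [hg''def]
                  group
            rw [hv, ← e2, ← e1]
            exact IH'
          · have hvz : ∀ x : G, ¬ (x ∈ T ∧ x ∈ C) := by
              rintro x ⟨⟨h, hH, e⟩, hxC⟩
              refine hex ⟨h, hH, ?_⟩
              rw [← e]
              exact zpow_mem hxC n
            rw [hv, card_subtype_eq_zero hvz]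
            exact dvd_zero _
        obtain ⟨m, hm⟩ := key
        rw [hm, ← mul_assoc, orbF_card_mul_stab]
        exact Dvd.intro m rfl
      · -- c₀ ∉ H : v c₀ = 0
        have hv0 : v c₀ = 0 := card_subtype_eq_zero fun x hx => hc₀H hx.1
        rw [hv0, mul_zero]
        exact dvd_zero _
    -- combine
    have hsum : Nat.card {p : G × G // P p.1 p.2} = v 1 + ∑ c ∈ univ.erase 1, v c := by
      rw [hsplit, ← Finset.add_sum_erase univ v (mem_univ 1)]
    have : Nat.card ↥H ∣ v 1 := by
      have h1 : v 1 = Nat.card {p : G × G // P p.1 p.2} - ∑ c ∈ univ.erase 1, v c := by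
        omega
      rw [h1]
      exact Nat.dvd_sub hE1 hE2
    rwa [hv1] at this
  · -- quotient case
    haveI : (Subgroup.center G ⊓ H).Normal := centerInter_normal H
    set Z := Subgroup.center G ⊓ H with hZdef
    have hZle : Z ≤ H := inf_le_right
    have hZ2 : 2 ≤ Nat.card ↥Z := by
      have hpos : 0 < Nat.card ↥Z := Nat.card_pos
      have hne : Nat.card ↥Z ≠ 1 := fun h => hZ (Subgroup.card_eq_one.mp h)
      omega
    letI : Fintype (G ⧸ Z) := Fintype.ofFinite _
    have hqcard : Nat.card (G ⧸ Z) < N := by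
      have heq : Nat.card G = Nat.card (G ⧸ Z) * Nat.card ↥Z :=
        Subgroup.card_eq_card_quotient_mul_card_subgroup Z
      have hpos : 0 < Nat.card G := Nat.card_pos
      nlinarith [hGN]
    set Hb := H.map (QuotientGroup.mk' Z) with hHbdef
    have hmem : ∀ a : G, (a : G ⧸ Z) ∈ Hb ↔ a ∈ H := by
      intro a
      constructor
      · rintro ⟨h, hH, e⟩
        have : h⁻¹ * a ∈ Z := QuotientGroup.eq.mp e
        have e2 : a = h * (h⁻¹ * a) := by group
        rw [e2]
        exact mul_mem hH (hZle this)
      · intro ha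
        exact ⟨a, ha, rfl⟩
    have hnorm : ((g : G ⧸ Z)) ∈ Subgroup.normalizer (Hb : Set (G ⧸ Z)) := by
      rw [Subgroup.mem_normalizer_iff]
      intro b
      obtain ⟨a, rfl⟩ := QuotientGroup.mk_surjective b
      have e : (g : G ⧸ Z) * a * (g : G ⧸ Z)⁻¹ = ((g * a * g⁻¹ : G) : G ⧸ Z) := by
        push_cast
        rfl
      rw [e, hmem, hmem]
      exact Subgroup.mem_normalizer_iff.mp hg a
    -- cardinalities via preimages
    have hcardH : Nat.card ↥H = Nat.card ↥Hb * Nat.card ↥Z := by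
      have h1 := card_preimage Z (Hb : Set (G ⧸ Z))
      have h2 : Nat.card {x : G // (x : G ⧸ Z) ∈ (Hb : Set (G ⧸ Z))} = Nat.card ↥H :=
        Nat.card_congr (Equiv.subtypeEquivRight fun a => by
          rw [SetLike.mem_coe]; exact hmem a)
      have h3 : Nat.card {y : G ⧸ Z // y ∈ (Hb : Set (G ⧸ Z))} = Nat.card ↥Hb :=
        Nat.card_congr (Equiv.subtypeEquivRight fun y => Iff.rfl)
      rw [← h2, h1, h3]
    set Tb : Set (G ⧸ Z) := {y | ∃ hb ∈ Hb, y ^ n = (g : G ⧸ Z) * hb} with hTbdef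
    have hTiff : ∀ x : G, ((x : G ⧸ Z) ∈ Tb) ↔ ∃ h ∈ H, x ^ n = g * h := by
      intro x
      constructor
      · rintro ⟨hb, hhb, e⟩
        obtain ⟨h, hH, rfl⟩ := hhb
        have e2 : ((x ^ n : G) : G ⧸ Z) = ((g * h : G) : G ⧸ Z) := by
          rw [QuotientGroup.mk_zpow, QuotientGroup.mk_mul]
          exact e
        have : (x ^ n)⁻¹ * (g * h) ∈ Z := QuotientGroup.eq.mp e2
        refine ⟨h * ((x ^ n)⁻¹ * (g * h))⁻¹, mul_mem hH (inv_mem (hZle this)), ?_⟩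
        group
      · rintro ⟨h, hH, e⟩
        refine ⟨(h : G ⧸ Z), (hmem h).mpr hH, ?_⟩
        rw [← QuotientGroup.mk_zpow, e, QuotientGroup.mk_mul]
    have hcardT : Nat.card {x : G // ∃ h ∈ H, x ^ n = g * h} =
        Nat.card {y : G ⧸ Z // y ∈ Tb} * Nat.card ↥Z := by
      rw [← card_preimage Z Tb]
      exact Nat.card_congr (Equiv.subtypeEquivRight fun x => (hTiff x).symm)
    have IH' := IH (Nat.card (G ⧸ Z)) hqcard (G ⧸ Z) le_rfl Hb (g : G ⧸ Z) hnorm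
    rw [hcardH, hcardT]
    exact Nat.mul_dvd_mul IH' dvd_rfl

end B
section Main
variable {G : Type u} [Group G] [Fintype G]

def conjInter (H : Subgroup G) (g : G) : Subgroup G where
  carrier := {y | y ∈ H ∧ g⁻¹ * y * g ∈ H}
  one_mem' := ⟨one_mem H, by simpa using one_mem H⟩
  mul_mem' := by
    rintro a b ⟨haH, haC⟩ ⟨hbH, hbC⟩
    refine ⟨mul_mem haH hbH, ?_⟩
    have e : g⁻¹ * (a * b) * g = (g⁻¹ * a * g) * (g⁻¹ * b * g) := by group
    exact e ▸ mul_mem haC hbC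
  inv_mem' := by
    rintro a ⟨haH, haC⟩
    refine ⟨inv_mem haH, ?_⟩
    have e : g⁻¹ * a⁻¹ * g = (g⁻¹ * a * g)⁻¹ := by group
    exact e ▸ inv_mem haC

theorem mem_conjInter {H : Subgroup G} {g y : G} :
    y ∈ conjInter H g ↔ y ∈ H ∧ g⁻¹ * y * g ∈ H := Iff.rfl

theorem double_count (n : ℤ) (H : Subgroup G) (g : G) :
    Nat.card ↥(conjInter H g) * Nat.card {x : G // ∃ h₁ ∈ H, ∃ h₂ ∈ H, x ^ n = h₁ * g * h₂}
      = Nat.card {x : G // ∃ h ∈ H, x ^ n = g * h} * Nat.card ↥H := by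
  classical
  set K := conjInter H g with hKdef
  set P : G → (G × G) → Prop :=
    fun x q => (q.1 ∈ H ∧ q.2 ∈ H) ∧ x ^ n = q.1 * g * q.2 with hPdef
  -- way (b) : explicit bijection with T × H
  have hb : Nat.card {p : G × (G × G) // P p.1 p.2}
      = Nat.card {x : G // ∃ h ∈ H, x ^ n = g * h} * Nat.card ↥H := by
    rw [← Nat.card_prod]
    refine Nat.card_congr ?_
    refine
      { toFun := fun p => (⟨p.1.2.1⁻¹ * p.1.1 * p.1.2.1, ?_⟩, ⟨p.1.2.1, p.2.1.1⟩)
        invFun := fun y => ⟨((y.2 : G) * y.1.1 * (y.2 : G)⁻¹,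
          ((y.2 : G), g⁻¹ * (y.1.1 : G) ^ n * (y.2 : G)⁻¹)), ?_, ?_⟩
        left_inv := ?_
        right_inv := ?_ }
    · -- membership of conjugate in T
      obtain ⟨⟨h1H, h2H⟩, he⟩ := p.2
      refine ⟨p.1.2.2 * p.1.2.1, mul_mem h2H h1H, ?_⟩
      have e0 : p.1.2.1⁻¹ * p.1.1 * p.1.2.1 = p.1.2.1⁻¹ * p.1.1 * p.1.2.1⁻¹⁻¹ := by group
      rw [e0, conj_zpow, he]
      group
    · -- memberships for invFun
      constructor
      · exact y.2.2
      · obtain ⟨m, hm, hmn⟩ := y.1.2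
        have e0 : g⁻¹ * (y.1.1 : G) ^ n * (y.2 : G)⁻¹ = m * (y.2 : G)⁻¹ := by
          rw [hmn]; group
        rw [e0]
        exact mul_mem hm (inv_mem y.2.2)
    · -- equation for invFun
      show ((y.2 : G) * y.1.1 * (y.2 : G)⁻¹) ^ n
          = (y.2 : G) * g * (g⁻¹ * (y.1.1 : G) ^ n * (y.2 : G)⁻¹)
      rw [conj_zpow]
      group
    · rintro ⟨⟨x, h, k⟩, ⟨⟨h1H, h2H⟩, he⟩⟩
      refine Subtype.ext ?_
      show (h * (h⁻¹ * x * h) * h⁻¹, (h, g⁻¹ * (h⁻¹ * x * h) ^ n * h⁻¹)) = (x, (h, k))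
      have e0 : h⁻¹ * x * h = h⁻¹ * x * h⁻¹⁻¹ := by group
      have e1 : (h⁻¹ * x * h) ^ n = h⁻¹ * x ^ n * h := by rw [e0, conj_zpow]; group
      have e2 : g⁻¹ * (h⁻¹ * x ^ n * h) * h⁻¹ = k := by
        rw [he]; group
      rw [e1, e2]
      refine Prod.ext (by group) rfl
    · rintro ⟨⟨y, hy⟩, ⟨h, hh⟩⟩
      refine Prod.ext (Subtype.ext ?_) (Subtype.ext rfl)
      show h⁻¹ * (h * y * h⁻¹) * h = y
      group
  -- way (a) : fiberwise over x, each nonempty fiber has size |K|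
  have ha : Nat.card {p : G × (G × G) // P p.1 p.2}
      = Nat.card ↥K * Nat.card {x : G // ∃ h₁ ∈ H, ∃ h₂ ∈ H, x ^ n = h₁ * g * h₂} := by
    rw [card_prod_subtype_right P]
    have hNx : ∀ x : G, Nat.card {q : G × G // P x q}
        = Nat.card ↥K * (if (∃ h₁ ∈ H, ∃ h₂ ∈ H, x ^ n = h₁ * g * h₂) then 1 else 0) := by
      intro x
      by_cases hx : ∃ h₁ ∈ H, ∃ h₂ ∈ H, x ^ n = h₁ * g * h₂
      · rw [if_pos hx, mul_one]
        obtain ⟨h₀, h₀H, k₀, k₀H, he₀⟩ := hx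
        refine Nat.card_congr ?_
        refine
          { toFun := fun q => ⟨h₀⁻¹ * q.1.1, mul_mem (inv_mem h₀H) q.2.1.1, ?_⟩
            invFun := fun u => ⟨(h₀ * (u : G), g⁻¹ * (u : G)⁻¹ * g * k₀), ⟨⟨?_, ?_⟩, ?_⟩⟩
            left_inv := ?_
            right_inv := ?_ }
        · -- second membership for toFun
          have hq := q.2.2
          have hcross : h₀ * g * k₀ = q.1.1 * g * q.1.2 := he₀.symm.trans hq
          have e : g⁻¹ * (h₀⁻¹ * q.1.1) * g = k₀ * q.1.2⁻¹ := by
            calc g⁻¹ * (h₀⁻¹ * q.1.1) * g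
                = g⁻¹ * h₀⁻¹ * (q.1.1 * g * q.1.2) * q.1.2⁻¹ := by group
              _ = g⁻¹ * h₀⁻¹ * (h₀ * g * k₀) * q.1.2⁻¹ := by rw [← hcross]
              _ = k₀ * q.1.2⁻¹ := by group
          rw [e]
          exact mul_mem k₀H (inv_mem q.2.1.2)
        · exact mul_mem h₀H u.2.1
        · have e : g⁻¹ * (u : G)⁻¹ * g * k₀ = (g⁻¹ * (u : G) * g)⁻¹ * k₀ := by group
          rw [e]
          exact mul_mem (inv_mem u.2.2) k₀H
        · show x ^ n = (h₀ * (u : G)) * g * (g⁻¹ * (u : G)⁻¹ * g * k₀)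
          rw [he₀]
          group
        · rintro ⟨⟨q1, q2⟩, ⟨⟨hq1, hq2⟩, hq⟩⟩
          have hcross : h₀ * g * k₀ = q1 * g * q2 := he₀.symm.trans hq
          refine Subtype.ext (Prod.ext (by show h₀ * (h₀⁻¹ * q1) = q1; group) ?_)
          show g⁻¹ * (h₀⁻¹ * q1)⁻¹ * g * k₀ = q2
          calc g⁻¹ * (h₀⁻¹ * q1)⁻¹ * g * k₀ = g⁻¹ * q1⁻¹ * (h₀ * g * k₀) := by group
            _ = g⁻¹ * q1⁻¹ * (q1 * g * q2) := by rw [hcross]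
            _ = q2 := by group
        · rintro ⟨u, hu⟩
          refine Subtype.ext ?_
          show h₀⁻¹ * (h₀ * u) = u
          group
      · rw [if_neg hx, mul_zero]
        refine card_subtype_eq_zero fun q hq => hx ⟨q.1, hq.1.1, q.2, hq.1.2, hq.2⟩
    rw [Finset.sum_congr rfl (fun x _ => hNx x), ← Finset.mul_sum,
      Finset.sum_boole, Nat.cast_id, nat_card_subtype_eq_filter_card,
      nat_card_subtype_eq_filter_card]
    congr
  rw [← ha, hb]

theorem T_dvd (n : ℤ) (H : Subgroup G) (g : G)
    (IH : ∀ y : G, Nat.card ↥(conjInter H g) ∣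
      Nat.card {x : G // ∃ k₁ ∈ conjInter H g, ∃ k₂ ∈ conjInter H g, x ^ n = k₁ * y * k₂}) :
    Nat.card ↥(conjInter H g) ∣ Nat.card {x : G // ∃ h ∈ H, x ^ n = g * h} := by
  classical
  set K := conjInter H g with hKdef
  have hcount : Nat.card {x : G // ∃ h ∈ H, x ^ n = g * h}
      = ∑ x : G, (if (∃ h ∈ H, x ^ n = g * h) then 1 else 0) := by
    rw [Finset.sum_boole, Nat.cast_id, nat_card_subtype_eq_filter_card]
    congr
  rw [hcount]
  refine dvd_sum_fiberwise univ (fun x => dosetF K (x ^ n)) _ ?_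
  intro x₀ _
  by_cases hfib : ∃ x₁, (∃ h ∈ H, x₁ ^ n = g * h) ∧ dosetF K (x₁ ^ n) = dosetF K (x₀ ^ n)
  · obtain ⟨x₁, hx₁T, hx₁d⟩ := hfib
    have hiff : ∀ x : G,
        ((dosetF K (x ^ n) = dosetF K (x₀ ^ n)) ∧ (∃ h ∈ H, x ^ n = g * h)) ↔
          (∃ k₁ ∈ K, ∃ k₂ ∈ K, x ^ n = k₁ * x₁ ^ n * k₂) := by
      intro x
      constructor
      · rintro ⟨hd, -⟩
        have hx : x ^ n ∈ dosetF K (x₁ ^ n) := by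
          rw [hx₁d, ← hd]
          exact self_mem_dosetF
        obtain ⟨a, aK, b, bK, he⟩ := mem_dosetF.mp hx
        exact ⟨a, aK, b, bK, he⟩
      · rintro ⟨k₁, k₁K, k₂, k₂K, he⟩
        obtain ⟨h₁, h₁H, he₁⟩ := hx₁T
        constructor
        · have hx : x ^ n ∈ dosetF K (x₁ ^ n) := mem_dosetF.mpr ⟨k₁, k₁K, k₂, k₂K, he⟩
          rw [dosetF_eq_of_mem hx, hx₁d]
        · refine ⟨(g⁻¹ * k₁ * g) * h₁ * k₂, mul_mem (mul_mem k₁K.2 h₁H) k₂K.1, ?_⟩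
          rw [he, he₁]
          group
    have hsum : (∑ y ∈ univ.filter (fun y => dosetF K (y ^ n) = dosetF K (x₀ ^ n)),
        (if (∃ h ∈ H, y ^ n = g * h) then 1 else 0))
        = Nat.card {x : G // ∃ k₁ ∈ K, ∃ k₂ ∈ K, x ^ n = k₁ * x₁ ^ n * k₂} := by
      rw [Finset.sum_boole, Nat.cast_id, Finset.filter_filter,
        ← Nat.card_congr (Equiv.subtypeEquivRight hiff), nat_card_subtype_eq_filter_card]
      congr
    rw [hsum]
    exact IH (x₁ ^ n)
  · have hz : ∀ y ∈ univ.filter (fun y => dosetF K (y ^ n) = dosetF K (x₀ ^ n)),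
        (if (∃ h ∈ H, y ^ n = g * h) then 1 else 0) = 0 := by
      intro y hy
      rw [if_neg]
      intro hT
      exact hfib ⟨y, hT, (Finset.mem_filter.mp hy).2⟩
    rw [Finset.sum_eq_zero hz]
    exact dvd_zero _

theorem mainThm (n : ℤ) : ∀ (k : ℕ) (H : Subgroup G) (g : G), Nat.card ↥H ≤ k →
    Nat.card ↥H ∣ Nat.card {x : G // ∃ h₁ ∈ H, ∃ h₂ ∈ H, x ^ n = h₁ * g * h₂} := by
  intro k
  induction k using Nat.strong_induction_on with
  | _ k IH =>
  intro H g hk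
  by_cases hnorm : ∀ h ∈ H, g⁻¹ * h * g ∈ H
  · -- g normalizes H : reduce to the coset theorem
    have hgN : g ∈ Subgroup.normalizer (H : Set G) := by
      rw [Subgroup.mem_normalizer_iff]
      intro h
      constructor
      · intro hh
        set f : ↥H → ↥H := fun a => ⟨g⁻¹ * (a : G) * g, hnorm _ a.2⟩ with hf
        have hinj : Function.Injective f := by
          intro a b hab
          have e : g⁻¹ * (a : G) * g = g⁻¹ * (b : G) * g :=
            congrArg (fun z : ↥H => (z : G)) hab
          exact Subtype.ext (mul_left_cancel (mul_right_cancel e))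
        obtain ⟨a, ha⟩ := Finite.injective_iff_surjective.mp hinj ⟨h, hh⟩
        have e : g⁻¹ * (a : G) * g = h := congrArg (fun z : ↥H => (z : G)) ha
        have e2 : g * h * g⁻¹ = (a : G) := by rw [← e]; group
        rw [e2]
        exact a.2
      · intro hh
        have h2 := hnorm _ hh
        have e : g⁻¹ * (g * h * g⁻¹) * g = h := by group
        rwa [e] at h2
    have hiff : ∀ x : G,
        (∃ h₁ ∈ H, ∃ h₂ ∈ H, x ^ n = h₁ * g * h₂) ↔ (∃ h ∈ H, x ^ n = g * h) := by
      intro x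
      constructor
      · rintro ⟨h₁, h₁H, h₂, h₂H, e⟩
        refine ⟨(g⁻¹ * h₁ * g) * h₂, mul_mem (hnorm h₁ h₁H) h₂H, ?_⟩
        rw [e]; group
      · rintro ⟨h, hH, e⟩
        exact ⟨1, one_mem H, h, hH, by rw [e]; group⟩
    rw [Nat.card_congr (Equiv.subtypeEquivRight hiff)]
    exact cosetB n (Nat.card G) G le_rfl H g hgN
  · push_neg at hnorm
    obtain ⟨h₀, h₀H, h₀n⟩ := hnorm
    set K := conjInter H g with hKdef
    have hKsub : (K : Set G) ⊆ (H : Set G) := fun y hy => hy.1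
    have hne : (K : Set G) ≠ (H : Set G) := by
      intro he
      refine h₀n ?_
      have hmem : h₀ ∈ (K : Set G) := he ▸ (h₀H : h₀ ∈ (H : Set G))
      exact hmem.2
    have hKlt : Nat.card ↥K < Nat.card ↥H := by
      have e1 : Nat.card ↥K = (K : Set G).ncard := by
        rw [← Nat.card_coe_set_eq]
        exact Nat.card_congr (Equiv.subtypeEquivRight fun x => Iff.rfl)
      have e2 : Nat.card ↥H = (H : Set G).ncard := by
        rw [← Nat.card_coe_set_eq]
        exact Nat.card_congr (Equiv.subtypeEquivRight fun x => Iff.rfl)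
      rw [e1, e2]
      exact Set.ncard_lt_ncard (hKsub.ssubset_of_ne hne) (Set.toFinite _)
    have hIHK : ∀ y : G, Nat.card ↥K ∣
        Nat.card {x : G // ∃ k₁ ∈ K, ∃ k₂ ∈ K, x ^ n = k₁ * y * k₂} :=
      fun y => IH (Nat.card ↥K) (lt_of_lt_of_le hKlt hk) K y le_rfl
    obtain ⟨t, ht⟩ := T_dvd n H g hIHK
    have hKpos : 0 < Nat.card ↥K := Nat.card_pos
    refine ⟨t, ?_⟩
    apply Nat.eq_of_mul_eq_mul_left hKpos
    rw [double_count n H g, ht]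
    ring

end Main
end SatoAsai

theorem sato_asai (G : Type*) [Group G] [Fintype G] (H : Subgroup G) (g : G) (n : ℤ) :
    Nat.card H ∣ Nat.card {x : G // ∃ h₁ ∈ H, ∃ h₂ ∈ H, x ^ n = h₁ * g * h₂} :=
  SatoAsai.mainThm n (Nat.card ↥H) H g le_rfl
end

section
/- Let G be a finite group and g ∈ G, and n a positive integer. Then the number of elements x in G with x^n = g is divisible by gcd(n, |C_G(g)|), where C_G(g) is the centralizer of g in G. -/
open Finset Subgroup

open scoped Classical

namespace Frob1903

universe u

theorem nat_card_filter {α : Type*} [Fintype α] (p : α → Prop) [DecidablePred p] :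
    Nat.card {x // p x} = (univ.filter p).card := by
  rw [← Fintype.card_subtype]
  exact Nat.card_eq_fintype_card

variable {G : Type u} [Group G]

/-- L0 -/
theorem orderOf_root {p c e : ℕ} (hp : p.Prime) {y h : G}
    (hy : y ^ p ^ c = h) (hh : orderOf h = p ^ (e + 1)) :
    orderOf y = p ^ (c + (e + 1)) := by
  have hyd : y ^ p ^ (c + (e + 1)) = 1 := by
    rw [pow_add, pow_mul, hy, ← hh, pow_orderOf_eq_one]
  obtain ⟨s, hs, hso⟩ := (Nat.dvd_prime_pow hp).mp (orderOf_dvd_of_pow_eq_one hyd)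
  rcases le_or_gt s c with hsc | hcs
  · exfalso
    have h1 : y ^ p ^ c = 1 := by
      have : p ^ c = p ^ s * p ^ (c - s) := by
        rw [← pow_add, Nat.add_sub_cancel' hsc]
      rw [this, pow_mul, ← hso, pow_orderOf_eq_one, one_pow]
    rw [hy] at h1
    have h0 : orderOf h = 1 := by simp [orderOf_eq_one_iff, h1]
    rw [hh] at h0
    have h2 : 1 < p ^ (e + 1) := Nat.one_lt_pow (Nat.succ_ne_zero e) hp.one_lt
    omega
  · have hgcd : Nat.gcd (p ^ s) (p ^ c) = p ^ c := by
      rw [Nat.gcd_comm]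
      exact Nat.gcd_eq_left (pow_dvd_pow p hcs.le)
    have h2 : p ^ (e + 1) = p ^ s / p ^ c := by
      rw [← hh, ← hy, orderOf_pow' y (pow_ne_zero c hp.pos.ne'), hso, hgcd]
    rw [Nat.pow_div hcs.le hp.pos] at h2
    have h3 : e + 1 = s - c := Nat.pow_right_injective hp.two_le h2
    have h4 : s = c + (e + 1) := by omega
    rw [hso, h4]

/-- L1 -/
theorem card_roots_ne_one [Fintype G] {p c e : ℕ} (hp : p.Prime) {h : G}
    (hh : orderOf h = p ^ (e + 1)) :
    p ^ c ∣ Nat.card {y : G // y ^ p ^ c = h} := by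
  classical
  rw [nat_card_filter]
  set S := univ.filter fun y : G => y ^ p ^ c = h with hS
  have hmem : ∀ x ∈ S, (Subgroup.zpowers x : Subgroup G) ∈ S.image (fun y => Subgroup.zpowers y) :=
    fun x hx => mem_image_of_mem _ hx
  rw [card_eq_sum_card_fiberwise hmem]
  refine Finset.dvd_sum ?_
  intro T hT
  obtain ⟨y₀, hy₀S, rfl⟩ := mem_image.mp hT
  have hy₀ : y₀ ^ p ^ c = h := by
    have := mem_filter.mp hy₀S; exact this.2
  have hord : orderOf y₀ = p ^ (c + (e + 1)) := orderOf_root hp hy₀ hh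
  set w := y₀ ^ p ^ (e + 1) with hw
  set K := univ.filter (fun t : G => t ∈ Subgroup.zpowers w) with hK
  have hordK : orderOf w = p ^ c := by
    rw [hw, orderOf_pow' y₀ (pow_ne_zero _ hp.pos.ne'), hord]
    have hgcd : Nat.gcd (p ^ (c + (e + 1))) (p ^ (e + 1)) = p ^ (e + 1) := by
      rw [Nat.gcd_comm]
      exact Nat.gcd_eq_left (pow_dvd_pow p (by omega))
    rw [hgcd, Nat.pow_div (by omega) hp.pos, Nat.add_sub_cancel]
  have hcardK : K.card = p ^ c := by
    rw [hK, ← Fintype.card_subtype, ← hordK, ← Nat.card_zpowers, Nat.card_eq_fintype_card]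
  have hKfact : ∀ t ∈ K, t ∈ Subgroup.zpowers y₀ ∧ t ^ p ^ c = 1 := by
    intro t ht
    rw [hK, mem_filter] at ht
    obtain ⟨-, k, hk⟩ := ht
    simp only at hk
    constructor
    · rw [← hk, hw]
      exact Subgroup.zpow_mem _ (Subgroup.pow_mem _ (Subgroup.mem_zpowers y₀) _) k
    · have hw1 : w ^ p ^ c = 1 := by rw [← hordK]; exact pow_orderOf_eq_one w
      rw [← hk, ← zpow_natCast (w ^ k), ← zpow_mul, mul_comm, zpow_mul, zpow_natCast, hw1,
        one_zpow]
  have hbij : (S.filter fun y => (Subgroup.zpowers y : Subgroup G) = Subgroup.zpowers y₀).card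
      = K.card := by
    refine Finset.card_nbij' (fun y => y₀⁻¹ * y) (fun t => y₀ * t) ?_ ?_ ?_ ?_
    · intro y hy
      obtain ⟨hyS, hyz⟩ := mem_filter.mp hy
      have hyS' : y ^ p ^ c = h := (mem_filter.mp hyS).2
      have hymem : y ∈ Subgroup.zpowers y₀ := by
        rw [← hyz]; exact Subgroup.mem_zpowers y
      obtain ⟨k, hk⟩ := hymem
      simp only at hk
      have hcomm : Commute y₀ y := by rw [← hk]; exact (Commute.refl y₀).zpow_right k
      have hpow : (y₀⁻¹ * y) ^ p ^ c = 1 := by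
        rw [(hcomm.inv_left).mul_pow, inv_pow, hy₀, hyS', inv_mul_cancel]
      have hy2 : y₀⁻¹ * y = y₀ ^ (k - 1) := by
        rw [zpow_sub, zpow_one, ← hk]
        group
      show y₀⁻¹ * y ∈ K
      rw [hK, mem_filter]
      refine ⟨mem_univ _, ?_⟩
      rw [hy2] at hpow ⊢
      rw [← zpow_natCast (y₀ ^ (k-1)), ← zpow_mul] at hpow
      have hdvd : ((orderOf y₀ : ℤ)) ∣ (k - 1) * (p ^ c : ℕ) := orderOf_dvd_iff_zpow_eq_one.mpr hpow
      rw [hord] at hdvd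
      have hp0 : (p:ℤ) ≠ 0 := by exact_mod_cast hp.pos.ne'
      have hpc : ((p:ℤ) ^ c) ≠ 0 := pow_ne_zero c hp0
      have hdvd2 : ((p : ℤ) ^ (e + 1)) ∣ (k - 1) := by
        refine (mul_dvd_mul_iff_right hpc).mp ?_
        have heq : ((p ^ (c + (e+1)) : ℕ) : ℤ) = (p:ℤ) ^ (e+1) * (p:ℤ) ^ c := by
          push_cast
          rw [← pow_add]
          ring_nf
        rw [← heq]
        exact_mod_cast hdvd
      obtain ⟨q, hq⟩ := hdvd2
      refine ⟨q, ?_⟩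
      show (y₀ ^ p ^ (e + 1) : G) ^ q = y₀ ^ (k - 1)
      rw [← zpow_natCast y₀, ← zpow_mul, Nat.cast_pow, ← hq]
    · intro t ht
      obtain ⟨htz, htpow⟩ := hKfact t ht
      obtain ⟨m, hm⟩ := htz
      simp only at hm
      have hcomm : Commute y₀ t := by rw [← hm]; exact (Commute.refl y₀).zpow_right m
      show y₀ * t ∈ _
      rw [mem_coe, mem_filter]
      have hmemS : y₀ * t ∈ S := by
        rw [hS, mem_filter]
        exact ⟨mem_univ _, by rw [hcomm.mul_pow, hy₀, htpow, mul_one]⟩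
      refine ⟨hmemS, ?_⟩
      have hle : Subgroup.zpowers (y₀ * t) ≤ Subgroup.zpowers y₀ := by
        rw [Subgroup.zpowers_le]
        refine Subgroup.mul_mem _ (Subgroup.mem_zpowers y₀) ?_
        rw [← hm]
        exact Subgroup.zpow_mem _ (Subgroup.mem_zpowers y₀) m
      have hordm : orderOf (y₀ * t) = p ^ (c + (e + 1)) := by
        refine orderOf_root hp ?_ hh
        rw [hcomm.mul_pow, hy₀, htpow, mul_one]
      refine Subgroup.eq_of_le_of_card_ge hle ?_
      rw [Nat.card_zpowers, Nat.card_zpowers, hordm, hord]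
    · intro y _
      show y₀ * (y₀⁻¹ * y) = y
      group
    · intro t _
      show y₀⁻¹ * (y₀ * t) = t
      group
  rw [hbij, hcardK]

/-- FL: fiber decomposition of the solution set of `x ^ n = g` by `p'`-parts. -/
theorem fiber_decomp [Fintype G] {P M n u v v' σ τ : ℕ} (g : G)
    (hPM : ∀ x : G, x ^ (P * M) = 1)
    (hσP : σ ≡ 1 [MOD P]) (hσM : σ ≡ 0 [MOD M])
    (hτP : τ ≡ 0 [MOD P]) (hτM : τ ≡ 1 [MOD M])
    (hco : Nat.Coprime P M)
    (hn : n = u * v) (hvv' : v * v' ≡ 1 [MOD P])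
    (hUP : ∀ y : G, y ^ (u * P) = 1 → y ^ P = 1)
    (R : Finset G) (hRmem : ∀ z : G, z ∈ R ↔ (z ^ M = 1 ∧ z ^ n = g ^ τ)) :
    Nat.card {x : G // x ^ n = g} =
      ∑ z ∈ R, Nat.card {y : G // y * z = z * y ∧ y ^ u = g ^ σ} := by
  classical
  rw [nat_card_filter]
  have keyPM : ∀ (x : G) (k l : ℕ), k ≡ l [MOD P * M] → x ^ k = x ^ l := by
    intro x k l hkl
    rw [pow_eq_pow_iff_modEq]
    exact hkl.of_dvd (orderOf_dvd_of_pow_eq_one (hPM x))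
  have keyP : ∀ (x : G), x ^ P = 1 → ∀ (k l : ℕ), k ≡ l [MOD P] → x ^ k = x ^ l := by
    intro x hx k l hkl
    rw [pow_eq_pow_iff_modEq]
    exact hkl.of_dvd (orderOf_dvd_of_pow_eq_one hx)
  have keyM : ∀ (x : G), x ^ M = 1 → ∀ (k l : ℕ), k ≡ l [MOD M] → x ^ k = x ^ l := by
    intro x hx k l hkl
    rw [pow_eq_pow_iff_modEq]
    exact hkl.of_dvd (orderOf_dvd_of_pow_eq_one hx)
  have hστ : σ + τ ≡ 1 [MOD P * M] := by
    refine (Nat.modEq_and_modEq_iff_modEq_mul hco).mp ⟨?_, ?_⟩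
    · simpa using hσP.add hτP
    · simpa using hσM.add hτM
  have hmaps : ∀ x ∈ (univ.filter fun x : G => x ^ n = g), x ^ τ ∈ R := by
    intro x hx
    have hxn : x ^ n = g := (mem_filter.mp hx).2
    rw [hRmem]
    constructor
    · rw [← pow_mul]
      have : τ * M ≡ 0 * M [MOD P * M] := hτP.mul_right' M
      rw [zero_mul] at this
      rw [keyPM x (τ * M) 0 this, pow_zero]
    · rw [← pow_mul, mul_comm τ n, pow_mul, hxn]
  rw [card_eq_sum_card_fiberwise hmaps]
  refine Finset.sum_congr rfl ?_
  intro z hz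
  rw [hRmem] at hz
  obtain ⟨hzM, hzn⟩ := hz
  rw [nat_card_filter]
  refine Finset.card_nbij' (fun x => x ^ (σ * v)) (fun y => y ^ v' * z) ?_ ?_ ?_ ?_
  · intro x hx
    rw [mem_coe, mem_filter, mem_filter] at hx
    obtain ⟨⟨-, hxn⟩, hxτ⟩ := hx
    show x ^ (σ * v) ∈ _
    rw [mem_coe, mem_filter]
    refine ⟨mem_univ _, ?_, ?_⟩
    · rw [← hxτ]
      exact (Commute.pow_pow_self x (σ * v) τ).eq
    · rw [← pow_mul]
      have he : σ * v * u = n * σ := by rw [hn]; ring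
      rw [he, pow_mul, hxn]
  · intro y hy
    rw [mem_coe, mem_filter] at hy
    obtain ⟨-, hyz, hyu⟩ := hy
    have hcyz : Commute y z := hyz
    have hgP : (g ^ σ) ^ P = 1 := by
      rw [← pow_mul]
      have : σ * P ≡ 0 * P [MOD M * P] := hσM.mul_right' P
      rw [zero_mul, mul_comm M P] at this
      rw [keyPM g (σ * P) 0 this, pow_zero]
    have hyP : y ^ P = 1 := by
      refine hUP y ?_
      rw [pow_mul, hyu]
      exact hgP
    have hyvz : Commute (y ^ v') z := hcyz.pow_left v'
    show y ^ v' * z ∈ _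
    rw [mem_coe, mem_filter, mem_filter]
    refine ⟨⟨mem_univ _, ?_⟩, ?_⟩
    · rw [hyvz.mul_pow, hzn, ← pow_mul]
      have he : v' * n = u * (v * v') := by rw [hn]; ring
      rw [he]
      have hexp : u * (v * v') ≡ u * 1 [MOD P] := hvv'.mul_left u
      rw [keyP y hyP _ _ hexp, mul_one, hyu, ← pow_add]
      rw [keyPM g (σ + τ) 1 hστ, pow_one]
    · rw [hyvz.mul_pow, ← pow_mul]
      have h1 : y ^ (v' * τ) = 1 := by
        have hexp : v' * τ ≡ v' * 0 [MOD P] := hτP.mul_left v'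
        rw [mul_zero] at hexp
        rw [keyP y hyP _ _ hexp, pow_zero]
      have h2 : z ^ τ = z := by
        rw [keyM z hzM _ _ hτM, pow_one]
      rw [h1, h2, one_mul]
  · intro x hx
    rw [mem_coe, mem_filter, mem_filter] at hx
    obtain ⟨⟨-, hxn⟩, hxτ⟩ := hx
    show (x ^ (σ * v)) ^ v' * z = x
    rw [← hxτ, ← pow_mul, ← pow_add]
    have hexp : σ * v * v' + τ ≡ 1 [MOD P * M] := by
      refine (Nat.modEq_and_modEq_iff_modEq_mul hco).mp ⟨?_, ?_⟩
      · have h1 : σ * (v * v') ≡ 1 * 1 [MOD P] := hσP.mul hvv'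
        have h2 : σ * v * v' + τ ≡ 1 * 1 + 0 [MOD P] := by
          have := h1.add hτP
          rw [mul_assoc]
          exact this
        simpa using h2
      · have h1 : σ * v * v' ≡ 0 [MOD M] := by
          have := (hσM.mul_right v).mul_right v'
          simpa using this
        simpa using h1.add hτM
    rw [keyPM x _ 1 hexp, pow_one]
  · intro y hy
    rw [mem_coe, mem_filter] at hy
    obtain ⟨-, hyz, hyu⟩ := hy
    have hcyz : Commute y z := hyz
    have hgP : (g ^ σ) ^ P = 1 := by
      rw [← pow_mul]
      have : σ * P ≡ 0 * P [MOD M * P] := hσM.mul_right' P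
      rw [zero_mul, mul_comm M P] at this
      rw [keyPM g (σ * P) 0 this, pow_zero]
    have hyP : y ^ P = 1 := by
      refine hUP y ?_
      rw [pow_mul, hyu]
      exact hgP
    show (y ^ v' * z) ^ (σ * v) = y
    have hyvz : Commute (y ^ v') z := hcyz.pow_left v'
    rw [hyvz.mul_pow, ← pow_mul]
    have hz1 : z ^ (σ * v) = 1 := by
      have : σ * v ≡ 0 * v [MOD M] := hσM.mul_right v
      rw [zero_mul] at this
      rw [keyM z hzM _ _ this, pow_zero]
    rw [hz1, mul_one]
    have hexp : v' * (σ * v) ≡ 1 [MOD P] := by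
      have h1 : σ * (v * v') ≡ 1 * 1 [MOD P] := hσP.mul hvv'
      have he : v' * (σ * v) = σ * (v * v') := by ring
      rw [he]
      simpa using h1
    rw [keyP y hyP _ _ hexp, pow_one]

theorem conj_pow_eq (w z : G) (m : ℕ) : (w * z * w⁻¹) ^ m = w * z ^ m * w⁻¹ := by
  rw [← MulAut.conj_apply, ← map_pow, MulAut.conj_apply]

/-- orbit-stabilizer for conjugation -/
theorem conj_orbit_card [Fintype G] (z : G) :
    (univ.image fun w : G => w * z * w⁻¹).card *
      Nat.card (Subgroup.centralizer ({z} : Set G)) = Fintype.card G := by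
  classical
  have horb : (univ.image fun w : G => w * z * w⁻¹) =
      (MulAction.orbit (ConjAct G) z).toFinset := by
    ext x
    simp only [mem_image, mem_univ, true_and, Set.mem_toFinset, MulAction.mem_orbit_iff,
      ConjAct.smul_def]
    constructor
    · rintro ⟨w, rfl⟩
      exact ⟨ConjAct.toConjAct w, by simp⟩
    · rintro ⟨g, rfl⟩
      exact ⟨ConjAct.ofConjAct g, rfl⟩
  have hstab : Nat.card (Subgroup.centralizer ({z} : Set G)) =
      Fintype.card (MulAction.stabilizer (ConjAct G) z) := by
    rw [Subgroup.centralizer_eq_comap_stabilizer, ← Nat.card_eq_fintype_card]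
    refine Nat.card_congr ?_
    exact
      { toFun := fun y => ⟨ConjAct.toConjAct (y : G), y.2⟩
        invFun := fun x => ⟨ConjAct.ofConjAct (x : ConjAct G), by
          exact x.2⟩
        left_inv := fun y => by ext; simp
        right_inv := fun x => by ext; simp }
  rw [horb, Set.toFinset_card, hstab,
    MulAction.card_orbit_mul_card_stabilizer_eq_card_group (ConjAct G) z]
  rfl

/-- ML: master orbit-sum divisibility lemma -/
theorem orbit_sum_dvd [Fintype G] {p : ℕ} (hp : p.Prime) (a : ℕ) (ha : p ^ a ∣ Fintype.card G)
    (R : Finset G) (hR : ∀ z ∈ R, ∀ w : G, w * z * w⁻¹ ∈ R)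
    (t : G → ℕ) (ht : ∀ z w, t (w * z * w⁻¹) = t z)
    (hdvd : ∀ z ∈ R,
      p ^ min a ((Nat.card (Subgroup.centralizer ({z} : Set G))).factorization p) ∣ t z) :
    p ^ a ∣ ∑ z ∈ R, t z := by
  classical
  revert hR hdvd
  refine Finset.strongInductionOn R ?_
  intro s ih hRs hdvds
  rcases s.eq_empty_or_nonempty with rfl | ⟨z₀, hz₀⟩
  · simp
  · set O := univ.image fun w : G => w * z₀ * w⁻¹ with hO
    have hOsub : O ⊆ s := by
      intro x hx
      obtain ⟨w, -, rfl⟩ := mem_image.mp hx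
      exact hRs z₀ hz₀ w
    have hz₀O : z₀ ∈ O := mem_image.mpr ⟨1, mem_univ 1, by group⟩
    have hsplit : ∑ z ∈ s, t z = ∑ z ∈ s \ O, t z + ∑ z ∈ O, t z :=
      (Finset.sum_sdiff hOsub).symm
    rw [hsplit]
    refine dvd_add ?_ ?_
    · have hss : s \ O ⊂ s := Finset.sdiff_ssubset hOsub ⟨z₀, hz₀O⟩
      refine ih (s \ O) hss ?_ ?_
      · intro z hz w
        rw [mem_sdiff] at hz ⊢
        obtain ⟨hzs, hzO⟩ := hz
        refine ⟨hRs z hzs w, ?_⟩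
        intro hmem
        apply hzO
        obtain ⟨w', -, hw'⟩ := mem_image.mp hmem
        refine mem_image.mpr ⟨w⁻¹ * w', mem_univ _, ?_⟩
        have hzz : z = w⁻¹ * (w * z * w⁻¹) * w := by group
        rw [hzz, ← hw']
        group
      · intro z hz
        exact hdvds z (mem_sdiff.mp hz).1
    · have hconst : ∀ z ∈ O, t z = t z₀ := by
        intro z hz
        obtain ⟨w, -, rfl⟩ := mem_image.mp hz
        exact ht z₀ w
      rw [Finset.sum_congr rfl hconst, Finset.sum_const, smul_eq_mul]
      set C := Subgroup.centralizer ({z₀} : Set G) with hC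
      set β := (Nat.card C).factorization p with hβ
      set B := (Fintype.card G).factorization p with hB
      have hcard : O.card * Nat.card C = Fintype.card G := conj_orbit_card z₀
      have hO0 : O.card ≠ 0 := Finset.card_ne_zero_of_mem hz₀O
      have hC0 : Nat.card C ≠ 0 := Nat.card_pos.ne'
      have hG0 : Fintype.card G ≠ 0 := Fintype.card_ne_zero
      have hfac : (O.card).factorization p + β = B := by
        rw [hβ, hB, ← hcard, Nat.factorization_mul hO0 hC0]
        simp
      have haB : a ≤ B := (Nat.Prime.pow_dvd_iff_le_factorization hp hG0).mp ha
      have h1 : p ^ (B - β) ∣ O.card := by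
        have he : B - β = (O.card).factorization p := by omega
        rw [he]
        exact Nat.ordProj_dvd _ _
      have h2 : p ^ min a β ∣ t z₀ := hdvds z₀ hz₀
      have h3 : p ^ (B - β + min a β) ∣ O.card * t z₀ := by
        rw [pow_add]
        exact mul_dvd_mul h1 h2
      refine dvd_trans (pow_dvd_pow p ?_) h3
      rcases le_total a β with hab | hab
      · rw [min_eq_left hab]
        omega
      · rw [min_eq_right hab]
        omega

/-- transfer lemma: counting commuting elements as a count in the centralizer -/
theorem card_comm_eq [Fintype G] (z : G) (Q : G → Prop) :
    Nat.card {y : G // y * z = z * y ∧ Q y} =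
      Nat.card {y : Subgroup.centralizer ({z} : Set G) // Q (y : G)} := by
  classical
  rw [nat_card_filter, nat_card_filter]
  refine Finset.card_bij'
    (fun y hy => (⟨y, by
        rw [mem_filter] at hy
        rw [Subgroup.mem_centralizer_iff]
        intro h hh
        rw [Set.mem_singleton_iff] at hh
        subst hh
        exact hy.2.1.symm⟩ : Subgroup.centralizer ({z} : Set G)))
    (fun y _ => (y : G)) ?_ ?_ ?_ ?_
  · intro y hy
    rw [mem_filter]
    exact ⟨mem_univ _, (mem_filter.mp hy).2.2⟩
  · intro y hy
    rw [mem_filter] at hy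
    rw [mem_filter]
    refine ⟨mem_univ _, ?_, hy.2⟩
    exact (Subgroup.mem_centralizer_iff.mp y.2 z (Set.mem_singleton z)).symm
  · intro y hy
    rfl
  · intro y hy
    rfl

/-- conjugation invariance of the fiber counts -/
theorem t_conj [Fintype G] (u : ℕ) (h : G) (hcent : ∀ w : G, w * h * w⁻¹ = h) (z w : G) :
    Nat.card {y : G // y * (w * z * w⁻¹) = (w * z * w⁻¹) * y ∧ y ^ u = h} =
      Nat.card {y : G // y * z = z * y ∧ y ^ u = h} := by
  classical
  rw [nat_card_filter, nat_card_filter]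
  refine Finset.card_nbij' (fun y => w⁻¹ * y * w) (fun y => w * y * w⁻¹) ?_ ?_ ?_ ?_
  · intro y hy
    rw [mem_coe, mem_filter] at hy
    obtain ⟨-, hy1, hy2⟩ := hy
    show w⁻¹ * y * w ∈ _
    rw [mem_coe, mem_filter]
    refine ⟨mem_univ _, ?_, ?_⟩
    · have hthis := congrArg (fun q => w⁻¹ * q * w) hy1
      simp only [mul_assoc, inv_mul_cancel_left, mul_inv_cancel_left, inv_mul_cancel,
        mul_one, one_mul] at hthis ⊢
      exact hthis
    · have h2 : (w⁻¹ * y * w⁻¹⁻¹) ^ u = w⁻¹ * y ^ u * w⁻¹⁻¹ := conj_pow_eq w⁻¹ y u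
      rw [inv_inv] at h2
      rw [h2, hy2]
      have h3 := hcent w⁻¹
      rwa [inv_inv] at h3
  · intro y hy
    rw [mem_coe, mem_filter] at hy
    obtain ⟨-, hy1, hy2⟩ := hy
    show w * y * w⁻¹ ∈ _
    rw [mem_coe, mem_filter]
    refine ⟨mem_univ _, ?_, ?_⟩
    · have hthis := congrArg (fun q => w * q * w⁻¹) hy1
      simp only [mul_assoc, inv_mul_cancel_left, mul_inv_cancel_left, inv_mul_cancel,
        mul_inv_cancel, mul_one, one_mul] at hthis ⊢
      exact hthis
    · rw [conj_pow_eq, hy2, hcent w]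
  · intro y _
    show w * (w⁻¹ * y * w) * w⁻¹ = y
    group
  · intro y _
    show w⁻¹ * (w * y * w⁻¹) * w = y
    group

/-- L2: the number of `p`-elements is divisible by the `p`-part of `|G|`. -/
theorem card_pElements (p : ℕ) (hp : p.Prime) :
    ∀ (N : ℕ) (G : Type u) [Group G] [Fintype G], Fintype.card G ≤ N →
      p ^ (Fintype.card G).factorization p ∣
        Nat.card {x : G // x ^ p ^ (Fintype.card G).factorization p = 1} := by
  intro N
  induction N with
  | zero =>
    intro G _ _ hcard
    have := Fintype.card_pos (α := G)
    omega
  | succ N ihN =>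
    intro G _ _ hcard
    classical
    set B := (Fintype.card G).factorization p with hB
    set P := p ^ B with hP
    set M := Fintype.card G / P with hM
    have hG0 : Fintype.card G ≠ 0 := Fintype.card_ne_zero
    have hPMeq : P * M = Fintype.card G := Nat.ordProj_mul_ordCompl_eq_self (Fintype.card G) p
    have hpM : ¬ p ∣ M := Nat.not_dvd_ordCompl hp hG0
    have hco : Nat.Coprime P M := Nat.Coprime.pow_left B ((hp.coprime_iff_not_dvd).mpr hpM)
    obtain ⟨σ, hσP, hσM⟩ := Nat.chineseRemainder hco 1 0
    obtain ⟨τ, hτP, hτM⟩ := Nat.chineseRemainder hco 0 1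
    set v' := M ^ (P.totient - 1) with hv'
    have htot : P.totient - 1 + 1 = P.totient :=
      Nat.succ_pred_eq_of_pos (Nat.totient_pos.mpr (pow_pos hp.pos B))
    have hvv' : M * v' ≡ 1 [MOD P] := by
      have heu : M ^ P.totient ≡ 1 [MOD P] := Nat.ModEq.pow_totient hco.symm
      have he2 : M * v' = M ^ P.totient := by
        rw [hv', ← pow_succ', htot]
      rw [he2]
      exact heu
    have hPM : ∀ x : G, x ^ (P * M) = 1 := by
      intro x
      rw [hPMeq]
      exact pow_card_eq_one
    have hUP : ∀ y : G, y ^ (P * P) = 1 → y ^ P = 1 := by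
      intro y hy
      have h1 : orderOf y ∣ p ^ (B + B) := by
        rw [pow_add]
        exact orderOf_dvd_of_pow_eq_one hy
      obtain ⟨j, hj, hoj⟩ := (Nat.dvd_prime_pow hp).mp h1
      have h2 : p ^ j ∣ Fintype.card G := hoj ▸ orderOf_dvd_card
      have h3 : j ≤ B := (Nat.Prime.pow_dvd_iff_le_factorization hp hG0).mp h2
      refine orderOf_dvd_iff_pow_eq_one.mp ?_
      rw [hoj, hP]
      exact pow_dvd_pow p h3
    set R := univ.filter (fun z : G => z ^ M = 1 ∧ z ^ Fintype.card G = 1) with hR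
    have hRmem : ∀ z : G, z ∈ R ↔ (z ^ M = 1 ∧ z ^ Fintype.card G = (1 : G) ^ τ) := by
      intro z
      rw [hR, mem_filter, one_pow]
      simp only [mem_univ, true_and]
    have hFL := fiber_decomp (G := G) (g := (1 : G)) (n := Fintype.card G) hPM hσP hσM hτP hτM
      hco hPMeq.symm hvv' hUP R hRmem
    simp only [one_pow] at hFL
    have hLHS : Nat.card {x : G // x ^ Fintype.card G = (1 : G)} = Fintype.card G := by
      rw [nat_card_filter]
      rw [filter_true_of_mem fun x _ => pow_card_eq_one, card_univ]
    rw [hLHS] at hFL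
    set t : G → ℕ := fun z => Nat.card {y : G // y * z = z * y ∧ y ^ P = 1} with htdef
    have hsplitsum : ∑ z ∈ R.filter (fun z => z ∈ Subgroup.center G), t z
        + ∑ z ∈ R.filter (fun z => ¬ z ∈ Subgroup.center G), t z = ∑ z ∈ R, t z :=
      Finset.sum_filter_add_sum_filter_not R _ t
    have hcent1 : ∀ w : G, w * (1 : G) * w⁻¹ = 1 := by
      intro w
      group
    have ht : ∀ z w : G, t (w * z * w⁻¹) = t z := fun z w => t_conj P 1 hcent1 z w
    -- noncentral part
    have hdvdRn : p ^ B ∣ ∑ z ∈ R.filter (fun z => ¬ z ∈ Subgroup.center G), t z := by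
      refine orbit_sum_dvd hp B (Nat.ordProj_dvd _ _) _ ?_ t ht ?_
      · intro z hz w
        simp only [hR, mem_filter, mem_univ, true_and] at hz ⊢
        obtain ⟨⟨hzM, -⟩, hznc⟩ := hz
        refine ⟨⟨?_, pow_card_eq_one⟩, ?_⟩
        · rw [conj_pow_eq, hzM, mul_one, mul_inv_cancel]
        · intro hmem
          apply hznc
          have h4 := Subgroup.Normal.conj_mem (inferInstance : (Subgroup.center G).Normal)
            _ hmem w⁻¹
          have he : w⁻¹ * (w * z * w⁻¹) * w⁻¹⁻¹ = z := by group
          rwa [he] at h4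
      · intro z hz
        rw [mem_filter] at hz
        obtain ⟨-, hznc⟩ := hz
        set C := Subgroup.centralizer ({z} : Set G) with hCdef
        have hwex : ∃ w : G, ¬ w * z = z * w := by
          by_contra hcon
          push_neg at hcon
          exact hznc (Subgroup.mem_center_iff.mpr hcon)
        obtain ⟨w, hw⟩ := hwex
        have hwC : w ∉ C := by
          intro hwC
          exact hw (Subgroup.mem_centralizer_iff.mp hwC z (Set.mem_singleton z)).symm
        have hCle : Fintype.card C ≤ Fintype.card G :=
          Fintype.card_le_of_injective _ Subtype.val_injective
        have hCne : Fintype.card C ≠ Fintype.card G := by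
          intro he
          apply hwC
          have h6 : C = ⊤ := by
            refine (Subgroup.card_eq_iff_eq_top C).mp ?_
            rw [Nat.card_eq_fintype_card, Nat.card_eq_fintype_card, he]
          rw [h6]
          exact Subgroup.mem_top w
        have hClt : Fintype.card C < Fintype.card G := lt_of_le_of_ne hCle hCne
        have hIH := ihN C (by omega)
        set BC := (Fintype.card C).factorization p with hBC
        have hBCB : BC ≤ B := by
          have hdvd2 : p ^ BC ∣ Fintype.card G := by
            refine dvd_trans (Nat.ordProj_dvd _ _) ?_
            have h7 := Subgroup.card_subgroup_dvd_card C
            rwa [Nat.card_eq_fintype_card, Nat.card_eq_fintype_card] at h7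
          exact (hp.pow_dvd_iff_le_factorization hG0).mp hdvd2
        have htz : t z = Nat.card {y : C // (y : G) ^ P = 1} := card_comm_eq z _
        have hcond : Nat.card {y : C // (y : G) ^ P = 1}
            = Nat.card {y : C // y ^ p ^ BC = 1} := by
          refine Nat.card_congr (Equiv.subtypeEquivRight ?_)
          intro y
          have hcoe : (y : G) ^ P = 1 ↔ y ^ P = 1 := by
            rw [← SubmonoidClass.coe_pow, OneMemClass.coe_eq_one]
          rw [hcoe]
          constructor
          · intro h1
            have hdvd := orderOf_dvd_of_pow_eq_one h1
            rw [hP] at hdvd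
            obtain ⟨j, hj, hoj⟩ := (Nat.dvd_prime_pow hp).mp hdvd
            have h2 : p ^ j ∣ Fintype.card C := hoj ▸ orderOf_dvd_card
            have h3 : j ≤ BC := (hp.pow_dvd_iff_le_factorization Fintype.card_ne_zero).mp h2
            refine orderOf_dvd_iff_pow_eq_one.mp ?_
            rw [hoj]
            exact pow_dvd_pow p h3
          · intro h1
            have he7 : P = p ^ BC * p ^ (B - BC) := by
              rw [hP, ← pow_add, Nat.add_sub_cancel' hBCB]
            rw [he7, pow_mul, h1, one_pow]
        have hmin : min B ((Nat.card C).factorization p) = BC := by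
          rw [Nat.card_eq_fintype_card, ← hBC]
          exact min_eq_right hBCB
        rw [hmin, htz, hcond]
        exact hIH
    -- central part
    set U := Nat.card {y : G // y ^ P = 1} with hU
    have hRc : ∀ z ∈ R.filter (fun z => z ∈ Subgroup.center G), t z = U := by
      intro z hz
      rw [mem_filter] at hz
      have hzc := hz.2
      rw [htdef, hU]
      refine Nat.card_congr (Equiv.subtypeEquivRight ?_)
      intro y
      exact ⟨fun h => h.2, fun h => ⟨Subgroup.mem_center_iff.mp hzc y, h⟩⟩
    have hsumc : ∑ z ∈ R.filter (fun z => z ∈ Subgroup.center G), t z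
        = (R.filter (fun z => z ∈ Subgroup.center G)).card * U := by
      rw [Finset.sum_congr rfl hRc, Finset.sum_const, smul_eq_mul]
    set Sg : Subgroup G :=
      { carrier := {x : G | x ∈ Subgroup.center G ∧ x ^ M = 1}
        one_mem' := ⟨Subgroup.one_mem _, one_pow M⟩
        mul_mem' := fun {a b} ha hb => ⟨Subgroup.mul_mem _ ha.1 hb.1, by
          have hc : Commute a b := (Subgroup.mem_center_iff.mp ha.1 b).symm
          rw [hc.mul_pow, ha.2, hb.2, one_mul]⟩
        inv_mem' := fun {a} ha => ⟨Subgroup.inv_mem _ ha.1, by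
          rw [inv_pow, ha.2, inv_one]⟩ } with hSg
    have hRcS : R.filter (fun z => z ∈ Subgroup.center G) = univ.filter (fun z : G => z ∈ Sg) := by
      ext z
      simp only [hR, mem_filter, mem_univ, true_and]
      constructor
      · rintro ⟨⟨hM1, -⟩, hc⟩
        exact ⟨hc, hM1⟩
      · rintro ⟨hc, hM1⟩
        exact ⟨⟨hM1, pow_card_eq_one⟩, hc⟩
    have hcardRc : (R.filter (fun z => z ∈ Subgroup.center G)).card = Nat.card Sg := by
      rw [hRcS, ← nat_card_filter]
    have hpRc : ¬ p ∣ (R.filter (fun z => z ∈ Subgroup.center G)).card := by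
      rw [hcardRc]
      intro hpd
      haveI := Fact.mk hp
      rw [Nat.card_eq_fintype_card] at hpd
      obtain ⟨s, hs⟩ := exists_prime_orderOf_dvd_card p hpd
      have hsM : (s : G) ^ M = 1 := s.2.2
      have ho : orderOf (s : G) = p := by rw [orderOf_coe, hs]
      exact hpM (ho ▸ orderOf_dvd_of_pow_eq_one hsM)
    have hEq : Fintype.card G = (R.filter (fun z => z ∈ Subgroup.center G)).card * U
        + ∑ z ∈ R.filter (fun z => ¬ z ∈ Subgroup.center G), t z := by
      rw [← hsumc, hsplitsum]
      exact hFL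
    have hdvd3 : p ^ B ∣ (R.filter (fun z => z ∈ Subgroup.center G)).card * U := by
      have h5 : (R.filter (fun z => z ∈ Subgroup.center G)).card * U
          = Fintype.card G - ∑ z ∈ R.filter (fun z => ¬ z ∈ Subgroup.center G), t z := by
        omega
      rw [h5]
      exact Nat.dvd_sub (Nat.ordProj_dvd _ _) hdvdRn
    have hcop : Nat.Coprime (p ^ B) (R.filter (fun z => z ∈ Subgroup.center G)).card :=
      Nat.Coprime.pow_left B ((hp.coprime_iff_not_dvd).mpr hpRc)
    exact hcop.dvd_of_dvd_mul_left hdvd3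

/-- L3 -/
theorem card_pow_eq_one_dvd [Fintype G] {p : ℕ} (hp : p.Prime) {a : ℕ}
    (ha : a ≤ (Fintype.card G).factorization p) :
    p ^ a ∣ Nat.card {x : G // x ^ p ^ a = 1} := by
  classical
  set B := (Fintype.card G).factorization p with hB
  have hL2 : p ^ B ∣ Nat.card {x : G // x ^ p ^ B = 1} :=
    card_pElements p hp (Fintype.card G) G le_rfl
  set f : G → ℕ := fun k => (univ.filter (fun x : G => x ^ p ^ a = k)).card with hf
  set Kt := univ.filter (fun k : G => k ^ p ^ (B - a) = 1) with hKt
  have hmaps : ∀ x ∈ (univ.filter fun x : G => x ^ p ^ B = 1), x ^ p ^ a ∈ Kt := by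
    intro x hx
    rw [mem_filter] at hx
    rw [hKt, mem_filter]
    refine ⟨mem_univ _, ?_⟩
    rw [← pow_mul, ← pow_add, Nat.add_sub_cancel' ha]
    exact hx.2
  have hsum : (univ.filter fun x : G => x ^ p ^ B = 1).card = ∑ k ∈ Kt, f k := by
    rw [card_eq_sum_card_fiberwise hmaps]
    refine Finset.sum_congr rfl ?_
    intro k hk
    rw [hKt, mem_filter] at hk
    congr 1
    ext x
    simp only [mem_filter, mem_univ, true_and]
    constructor
    · rintro ⟨-, h2⟩
      exact h2
    · intro h2
      refine ⟨?_, h2⟩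
      rw [← Nat.add_sub_cancel' ha, pow_add, pow_mul, h2]
      exact hk.2
  have h1K : (1 : G) ∈ Kt := by
    rw [hKt, mem_filter]
    exact ⟨mem_univ _, one_pow _⟩
  have herase : ∑ k ∈ Kt.erase 1, f k + f 1 = ∑ k ∈ Kt, f k :=
    Finset.sum_erase_add Kt f h1K
  have hdvdsum : p ^ a ∣ ∑ k ∈ Kt.erase 1, f k := by
    refine Finset.dvd_sum ?_
    intro k hk
    have hk1 : k ≠ 1 := (Finset.mem_erase.mp hk).1
    have hkK := (Finset.mem_erase.mp hk).2
    rw [hKt, mem_filter] at hkK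
    have hdvd := orderOf_dvd_of_pow_eq_one hkK.2
    obtain ⟨j, hj, hoj⟩ := (Nat.dvd_prime_pow hp).mp hdvd
    match j, hoj with
    | 0, hoj =>
      exfalso
      apply hk1
      rw [pow_zero] at hoj
      exact orderOf_eq_one_iff.mp hoj
    | e + 1, hoj =>
      have h8 := card_roots_ne_one (G := G) hp (c := a) hoj
      rwa [nat_card_filter] at h8
  have htot : p ^ a ∣ (univ.filter fun x : G => x ^ p ^ B = 1).card := by
    refine dvd_trans (pow_dvd_pow p ha) ?_
    rwa [nat_card_filter] at hL2
  rw [nat_card_filter]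
  have hgoal : (univ.filter fun x : G => x ^ p ^ a = 1).card
      = (univ.filter fun x : G => x ^ p ^ B = 1).card - ∑ k ∈ Kt.erase 1, f k := by
    have : f 1 = (univ.filter fun x : G => x ^ p ^ a = 1).card := rfl
    omega
  rw [hgoal]
  exact Nat.dvd_sub htot hdvdsum

/-- L4 -/
theorem card_roots_dvd [Fintype G] {p : ℕ} (hp : p.Prime) (h : G) {E : ℕ}
    (hE : h ^ p ^ E = 1) (c : ℕ) :
    p ^ min c ((Fintype.card G).factorization p) ∣ Nat.card {y : G // y ^ p ^ c = h} := by
  classical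
  obtain ⟨j, hj, hoj⟩ := (Nat.dvd_prime_pow hp).mp (orderOf_dvd_of_pow_eq_one hE)
  match j, hoj with
  | 0, hoj =>
    rw [pow_zero] at hoj
    have h1 : h = 1 := orderOf_eq_one_iff.mp hoj
    subst h1
    set B := (Fintype.card G).factorization p with hB
    have hset : ∀ y : G, (y ^ p ^ c = 1) ↔ (y ^ p ^ min c B = 1) := by
      intro y
      constructor
      · intro hy
        have hdvd := orderOf_dvd_of_pow_eq_one hy
        obtain ⟨i, hi, hoi⟩ := (Nat.dvd_prime_pow hp).mp hdvd
        have h2 : p ^ i ∣ Fintype.card G := hoi ▸ orderOf_dvd_card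
        have h3 : i ≤ B := (hp.pow_dvd_iff_le_factorization Fintype.card_ne_zero).mp h2
        refine orderOf_dvd_iff_pow_eq_one.mp ?_
        rw [hoi]
        exact pow_dvd_pow p (le_min hi h3)
      · intro hy
        have he : p ^ c = p ^ min c B * p ^ (c - min c B) := by
          rw [← pow_add, Nat.add_sub_cancel' (min_le_left _ _)]
        rw [he, pow_mul, hy, one_pow]
    have h9 := card_pow_eq_one_dvd (G := G) hp (min_le_right c B)
    rw [show Nat.card {y : G // y ^ p ^ c = 1} = Nat.card {y : G // y ^ p ^ min c B = 1} from
      Nat.card_congr (Equiv.subtypeEquivRight hset)]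
    exact h9
  | e + 1, hoj =>
    exact dvd_trans (pow_dvd_pow p (min_le_left _ _)) (card_roots_ne_one hp (c := c) hoj)

/-- T1: prime power divisibility for central targets -/
theorem prime_pow_dvd_card_roots [Fintype G] {p : ℕ} (hp : p.Prime) {n k : ℕ} (hn : 0 < n)
    (g : G) (hg : g ∈ Subgroup.center G) (hkn : p ^ k ∣ n) (hkG : p ^ k ∣ Fintype.card G) :
    p ^ k ∣ Nat.card {x : G // x ^ n = g} := by
  classical
  set B := (Fintype.card G).factorization p with hB
  set P := p ^ B with hP
  set M := Fintype.card G / P with hM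
  set c := n.factorization p with hc
  set u := p ^ c with hu
  set v := n / u with hv
  have hG0 : Fintype.card G ≠ 0 := Fintype.card_ne_zero
  have hn0 : n ≠ 0 := hn.ne'
  have hPMeq : P * M = Fintype.card G := Nat.ordProj_mul_ordCompl_eq_self _ p
  have hpM : ¬ p ∣ M := Nat.not_dvd_ordCompl hp hG0
  have hcoPM : Nat.Coprime P M := Nat.Coprime.pow_left B ((hp.coprime_iff_not_dvd).mpr hpM)
  have huv : n = u * v := (Nat.ordProj_mul_ordCompl_eq_self n p).symm
  have hpv : ¬ p ∣ v := Nat.not_dvd_ordCompl hp hn0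
  have hcovP : Nat.Coprime v P :=
    (Nat.coprime_comm.mp ((hp.coprime_iff_not_dvd).mpr hpv)).pow_right B
  obtain ⟨σ, hσP, hσM⟩ := Nat.chineseRemainder hcoPM 1 0
  obtain ⟨τ, hτP, hτM⟩ := Nat.chineseRemainder hcoPM 0 1
  set v' := v ^ (P.totient - 1) with hv'
  have htot : P.totient - 1 + 1 = P.totient :=
    Nat.succ_pred_eq_of_pos (Nat.totient_pos.mpr (pow_pos hp.pos B))
  have hvv' : v * v' ≡ 1 [MOD P] := by
    have heu : v ^ P.totient ≡ 1 [MOD P] := Nat.ModEq.pow_totient hcovP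
    have he2 : v * v' = v ^ P.totient := by rw [hv', ← pow_succ', htot]
    rw [he2]
    exact heu
  have hPMall : ∀ x : G, x ^ (P * M) = 1 := fun x => by rw [hPMeq]; exact pow_card_eq_one
  have hUP : ∀ y : G, y ^ (u * P) = 1 → y ^ P = 1 := by
    intro y hy
    have h1 : orderOf y ∣ p ^ (c + B) := by
      rw [pow_add]
      exact orderOf_dvd_of_pow_eq_one hy
    obtain ⟨j, hj, hoj⟩ := (Nat.dvd_prime_pow hp).mp h1
    have h2 : p ^ j ∣ Fintype.card G := hoj ▸ orderOf_dvd_card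
    have h3 : j ≤ B := (hp.pow_dvd_iff_le_factorization hG0).mp h2
    refine orderOf_dvd_iff_pow_eq_one.mp ?_
    rw [hoj, hP]
    exact pow_dvd_pow p h3
  set R := univ.filter (fun z : G => z ^ M = 1 ∧ z ^ n = g ^ τ) with hR
  have hRmem : ∀ z : G, z ∈ R ↔ (z ^ M = 1 ∧ z ^ n = g ^ τ) := by
    intro z
    rw [hR, mem_filter]
    simp only [mem_univ, true_and]
  have hFL := fiber_decomp (G := G) g hPMall hσP hσM hτP hτM hcoPM huv hvv' hUP R hRmem
  rw [hFL]
  have hkB : k ≤ B := (hp.pow_dvd_iff_le_factorization hG0).mp hkG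
  have hkc : k ≤ c := (hp.pow_dvd_iff_le_factorization hn0).mp hkn
  have hgτc : ∀ w : G, w * g ^ τ * w⁻¹ = g ^ τ := by
    intro w
    have h2 := Subgroup.mem_center_iff.mp (Subgroup.pow_mem _ hg τ) w
    rw [h2, mul_assoc, mul_inv_cancel, mul_one]
  have hgσc : ∀ w : G, w * g ^ σ * w⁻¹ = g ^ σ := by
    intro w
    have h2 := Subgroup.mem_center_iff.mp (Subgroup.pow_mem _ hg σ) w
    rw [h2, mul_assoc, mul_inv_cancel, mul_one]
  refine orbit_sum_dvd hp k hkG R ?_ _ ?_ ?_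
  · intro z hz w
    rw [hRmem] at hz
    rw [hRmem]
    obtain ⟨hzM, hzn⟩ := hz
    constructor
    · rw [conj_pow_eq, hzM, mul_one, mul_inv_cancel]
    · rw [conj_pow_eq, hzn, hgτc]
  · intro z w
    exact t_conj u (g ^ σ) hgσc z w
  · intro z hz
    set C := Subgroup.centralizer ({z} : Set G) with hC
    have hgσC : g ^ σ ∈ C := by
      rw [hC, Subgroup.mem_centralizer_iff]
      intro h hh
      rw [Set.mem_singleton_iff] at hh
      rw [hh]
      exact Subgroup.mem_center_iff.mp (Subgroup.pow_mem _ hg σ) z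
    have htz : Nat.card {y : G // y * z = z * y ∧ y ^ u = g ^ σ}
        = Nat.card {y : C // y ^ u = (⟨g ^ σ, hgσC⟩ : C)} := by
      rw [card_comm_eq z (fun y => y ^ u = g ^ σ)]
      refine Nat.card_congr (Equiv.subtypeEquivRight ?_)
      intro y
      rw [← SubmonoidClass.coe_pow]
      exact ⟨fun hh => Subtype.ext hh, fun hh => congrArg Subtype.val hh⟩
    have hgP : (g ^ σ) ^ P = 1 := by
      rw [← pow_mul]
      have hmod : σ * P ≡ 0 * P [MOD M * P] := hσM.mul_right' P
      rw [zero_mul, mul_comm M P] at hmod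
      have h5 : g ^ (σ * P) = g ^ 0 := by
        rw [pow_eq_pow_iff_modEq]
        exact hmod.of_dvd (orderOf_dvd_of_pow_eq_one (hPMall g))
      rw [h5, pow_zero]
    have hhE : (⟨g ^ σ, hgσC⟩ : C) ^ p ^ B = 1 := by
      apply Subtype.ext
      rw [SubmonoidClass.coe_pow]
      rw [hP] at hgP
      simpa using hgP
    have hL4 := card_roots_dvd (G := C) hp _ hhE c
    rw [htz, hu]
    refine dvd_trans (pow_dvd_pow p ?_) hL4
    rw [Nat.card_eq_fintype_card]
    exact min_le_min hkc le_rfl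

end Frob1903

open Finset Subgroup Frob1903 in
theorem frobenius_1903 (G : Type*) [Group G] [Fintype G] (g : G) (n : ℕ) (hn : 0 < n) :
    Nat.gcd n (Nat.card (Subgroup.centralizer ({g} : Set G))) ∣
      Nat.card {x : G // x ^ n = g} := by
  classical
  set C := Subgroup.centralizer ({g} : Set G) with hC
  have hgC : g ∈ C := by
    rw [hC, Subgroup.mem_centralizer_iff]
    intro h hh
    rw [Set.mem_singleton_iff] at hh
    rw [hh]
  have hcent : (⟨g, hgC⟩ : C) ∈ Subgroup.center C := by
    rw [Subgroup.mem_center_iff]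
    intro y
    have hy := Subgroup.mem_centralizer_iff.mp y.2 g (Set.mem_singleton g)
    apply Subtype.ext
    simpa using hy.symm
  have memC : ∀ x : G, x ^ n = g → x ∈ C := by
    intro x hx
    rw [hC, Subgroup.mem_centralizer_iff]
    intro h hh
    rw [Set.mem_singleton_iff] at hh
    rw [hh, ← hx]
    exact ((Commute.refl x).pow_left n).eq
  have hequiv : Nat.card {x : G // x ^ n = g} = Nat.card {x : C // x ^ n = (⟨g, hgC⟩ : C)} :=
    Nat.card_congr
      { toFun := fun x => ⟨⟨x.1, memC x.1 x.2⟩, by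
          apply Subtype.ext
          rw [SubmonoidClass.coe_pow]
          exact x.2⟩
        invFun := fun y => ⟨(y.1 : G), by
          have h2 := congrArg Subtype.val y.2
          rwa [SubmonoidClass.coe_pow] at h2⟩
        left_inv := fun x => by
          apply Subtype.ext
          rfl
        right_inv := fun y => by
          apply Subtype.ext
          apply Subtype.ext
          rfl }
  rw [hequiv]
  rcases Nat.eq_zero_or_pos (Nat.card {x : C // x ^ n = (⟨g, hgC⟩ : C)}) with h0 | hpos
  · rw [h0]
    exact dvd_zero _
  · have hD0 : Nat.gcd n (Nat.card C) ≠ 0 := by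
      have := Nat.gcd_pos_of_pos_left (Nat.card C) hn
      omega
    rw [← Nat.factorization_le_iff_dvd hD0 hpos.ne']
    rw [Finsupp.le_def]
    intro q
    by_cases hq : q.Prime
    · set k := (Nat.gcd n (Nat.card C)).factorization q with hk
      have hdvdD : q ^ k ∣ Nat.gcd n (Nat.card C) := Nat.ordProj_dvd _ _
      have hk1 : q ^ k ∣ n := dvd_trans hdvdD (Nat.gcd_dvd_left _ _)
      have hk2 : q ^ k ∣ Fintype.card C := by
        rw [← Nat.card_eq_fintype_card]
        exact dvd_trans hdvdD (Nat.gcd_dvd_right _ _)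
      have hT1 := prime_pow_dvd_card_roots (G := C) hq hn (⟨g, hgC⟩ : C) hcent hk1 hk2
      exact (hq.pow_dvd_iff_le_factorization hpos.ne').mp hT1
    · rw [Nat.factorization_eq_zero_of_not_prime _ hq]
      exact Nat.zero_le _
end

section
/- Let G be a finite group and n a positive integer. Then the number of pairs (x, y) ∈ G × G with x^n y^n = 1 and x y x⁻¹ y⁻¹ arbitrary, namely solutions of the single equation x^n y^n = 1, is divisible by |G|. -/
open MulAction

/-- Conjugating each entry of a tuple by `a` conjugates the product. -/
private lemma prod_ofFn_conj {G : Type*} [Group G] {k : ℕ} (a : G) (f : Fin k → G) :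
    (List.ofFn fun i => a * f i * a⁻¹).prod = a * (List.ofFn f).prod * a⁻¹ := by
  have h := map_list_prod (MulAut.conj a) (List.ofFn f)
  simpa [List.map_ofFn, Function.comp_def, MulAut.conj_apply] using h.symm

/-- Telescoping product of conjugates `g^i * s * g^(-i)`. -/
private lemma prod_ofFn_pow_conj {G : Type*} [Group G] (g s : G) :
    ∀ k : ℕ, (List.ofFn fun i : Fin k => g ^ (i : ℕ) * s * (g ^ (i : ℕ))⁻¹).prod
      = (s * g) ^ k * (g ^ k)⁻¹
  | 0 => by simp
  | k + 1 => by
    rw [List.ofFn_succ, List.prod_cons]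
    have htail : (fun i : Fin k =>
        g ^ ((i.succ : Fin (k + 1)) : ℕ) * s * (g ^ ((i.succ : Fin (k + 1)) : ℕ))⁻¹)
        = fun i : Fin k => g * (g ^ (i : ℕ) * s * (g ^ (i : ℕ))⁻¹) * g⁻¹ := by
      funext i
      simp only [Fin.val_succ, pow_succ']
      group
    rw [htail, prod_ofFn_conj, prod_ofFn_pow_conj g s k]
    simp only [Fin.val_zero, pow_zero, one_mul, mul_one, inv_one]
    calc s * (g * ((s * g) ^ k * (g ^ k)⁻¹) * g⁻¹)
        = (s * g) * (s * g) ^ k * ((g ^ k)⁻¹ * g⁻¹) := by simp only [mul_assoc]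
      _ = (s * g) ^ (k + 1) * (g ^ (k + 1))⁻¹ := by
          rw [← pow_succ', ← mul_inv_rev, ← pow_succ']

/-- Cyclic shift preserves "product equals one". -/
private lemma prod_ofFn_shift {G : Type*} [Group G] {n : ℕ} [NeZero n] (v : Fin n → G)
    (h : (List.ofFn v).prod = 1) : (List.ofFn fun i => v (i + 1)).prod = 1 := by
  obtain ⟨m, rfl⟩ := Nat.exists_eq_succ_of_ne_zero (NeZero.ne n)
  have h3 : Fin.last m + 1 = 0 := by
    ext
    rw [Fin.val_add, Fin.val_last, Fin.val_one']
    cases m with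
    | zero => rfl
    | succ m =>
      rw [Nat.mod_eq_of_lt (show (1 : ℕ) < m + 1 + 1 by omega)]
      show (m + 1 + 1) % (m + 1 + 1) = (0 : Fin (m + 1 + 1)).val
      rw [Nat.mod_self]
      rfl
  have e : (List.ofFn fun i : Fin (m + 1) => v (i + 1))
      = (List.ofFn fun i : Fin m => v i.succ).concat (v 0) := by
    rw [List.ofFn_succ']
    congr 1
    · congr 1
      funext i
      congr 1
      ext
      rw [Fin.val_add, Fin.val_one', Fin.coe_castSucc, Fin.val_succ]
      have him : (i : ℕ) < m := i.isLt
      rw [Nat.mod_eq_of_lt (show (1 : ℕ) < m + 1 by omega),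
        Nat.mod_eq_of_lt (show (i : ℕ) + 1 < m + 1 by omega)]
    · rw [h3]
  rw [List.ofFn_succ, List.prod_cons] at h
  have h4 : (List.ofFn fun i : Fin m => v i.succ).prod = (v 0)⁻¹ := by
    rw [← one_mul (List.ofFn fun i : Fin m => v i.succ).prod, ← inv_mul_cancel (v 0),
      mul_assoc, h, mul_one]
  rw [e, List.prod_concat, h4, inv_mul_cancel]

/-- If `g * v i * g⁻¹ = v (i+1)` (cyclically), then `v i = g^i * v 0 * g^(-i)`. -/
private lemma tuple_eq_pow {G : Type*} [Group G] {n : ℕ} [NeZero n] (g : G) (v : Fin n → G)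
    (hc : ∀ i : Fin n, g * v i * g⁻¹ = v (i + 1)) (i : Fin n) :
    v i = g ^ (i : ℕ) * v 0 * (g ^ (i : ℕ))⁻¹ := by
  have key : ∀ k (hk : k < n), v ⟨k, hk⟩ = g ^ k * v 0 * (g ^ k)⁻¹ := by
    intro k
    induction k with
    | zero =>
      intro hk
      have h0 : (⟨0, hk⟩ : Fin n) = 0 := by ext; simp [Fin.val_zero]
      simp [h0]
    | succ k ih =>
      intro hk
      have hk' : k < n := Nat.lt_of_succ_lt hk
      have h1 : (⟨k, hk'⟩ : Fin n) + 1 = ⟨k + 1, hk⟩ := by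
        ext
        rw [Fin.val_add, Fin.val_one']
        simp only
        rw [Nat.mod_eq_of_lt (show 1 < n by omega)]
        exact Nat.mod_eq_of_lt hk
      rw [← h1, ← hc ⟨k, hk'⟩, ih hk']
      simp only [pow_succ, pow_succ']
      group
  obtain ⟨k, hk⟩ := i
  exact key k hk

/-- Solomon-style counting: if `σ` is a `G`-equivariant map of a finite `G`-set `X`,
then `|G|` divides the number of pairs `(g, v)` with `g • v = σ v`. -/
private lemma card_dvd_card_equivariant_pairs {G : Type*} [Group G] [Fintype G]
    {X : Type*} [Fintype X] [MulAction G X] (σ : X → X)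
    (hσ : ∀ (g : G) (v : X), σ (g • v) = g • σ v) :
    Fintype.card G ∣ Nat.card {p : G × X // p.1 • p.2 = σ p.2} := by
  classical
  have e1 : {p : G × X // p.1 • p.2 = σ p.2} ≃ (Σ v : X, {g : G // g • v = σ v}) :=
    { toFun := fun p => ⟨p.1.2, ⟨p.1.1, p.2⟩⟩
      invFun := fun s => ⟨(s.2.1, s.1), s.2.2⟩
      left_inv := fun p => rfl
      right_inv := fun s => rfl }
  rw [Nat.card_eq_fintype_card, Fintype.card_congr e1, Fintype.card_sigma]
  rw [← Fintype.sum_fiberwise (fun v : X => (Quotient.mk'' v : orbitRel.Quotient G X))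
      (fun v => Fintype.card {g : G // g • v = σ v})]
  apply Finset.dvd_sum
  intro ω _
  set u : X := ω.out with hu
  have hmem : ∀ v : X, (Quotient.mk'' v : orbitRel.Quotient G X) = ω ↔ v ∈ orbit G u := by
    intro v
    conv_lhs => rw [← Quotient.out_eq' ω]
    rw [Quotient.eq'']
    exact orbitRel_apply
  have hfconst : ∀ v : X, v ∈ orbit G u →
      Fintype.card {g : G // g • v = σ v} = Fintype.card {g : G // g • u = σ u} := by
    rintro v ⟨h, rfl⟩
    apply Fintype.card_congr
    refine
      { toFun := fun g => ⟨h⁻¹ * g.1 * h, ?_⟩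
        invFun := fun g => ⟨h * g.1 * h⁻¹, ?_⟩
        left_inv := fun g => Subtype.ext (by show h * (h⁻¹ * g.1 * h) * h⁻¹ = g.1; group)
        right_inv := fun g => Subtype.ext (by show h⁻¹ * (h * g.1 * h⁻¹) * h = g.1; group) }
    · obtain ⟨g, hg⟩ := g
      show (h⁻¹ * g * h) • u = σ u
      simp only [mul_smul, hg, hσ, inv_smul_smul]
    · obtain ⟨g, hg⟩ := g
      show (h * g * h⁻¹) • (h • u) = σ (h • u)
      simp only [mul_smul, inv_smul_smul, hg, hσ]
  have hsum : ∀ v : {v : X // (Quotient.mk'' v : orbitRel.Quotient G X) = ω},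
      Fintype.card {g : G // g • (v : X) = σ v} = Fintype.card {g : G // g • u = σ u} :=
    fun v => hfconst v ((hmem v).mp v.2)
  rw [Finset.sum_congr rfl fun v _ => hsum v, Finset.sum_const, smul_eq_mul]
  have hcardfiber : (Finset.univ :
        Finset {v : X // (Quotient.mk'' v : orbitRel.Quotient G X) = ω}).card
      = Fintype.card (orbit G u) := by
    rw [Finset.card_univ]
    exact Fintype.card_congr (Equiv.subtypeEquivRight fun v => hmem v)
  rw [hcardfiber]
  by_cases hfix : ∃ g : G, g • u = σ u
  · obtain ⟨g₀, hg₀⟩ := hfix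
    have hstab : Fintype.card {g : G // g • u = σ u} = Fintype.card (stabilizer G u) := by
      apply Fintype.card_congr
      refine
        { toFun := fun g => ⟨g₀⁻¹ * g.1, ?_⟩
          invFun := fun g => ⟨g₀ * g.1, ?_⟩
          left_inv := fun g => Subtype.ext (by show g₀ * (g₀⁻¹ * g.1) = g.1; group)
          right_inv := fun g => Subtype.ext (by show g₀⁻¹ * (g₀ * g.1) = g.1; group) }
      · obtain ⟨g, hg⟩ := g
        show (g₀⁻¹ * g) • u = u
        rw [mul_smul, hg, ← hg₀, inv_smul_smul]
      · obtain ⟨g, hg⟩ := g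
        show (g₀ * g) • u = σ u
        rw [mul_smul, hg, hg₀]
    rw [hstab, card_orbit_mul_card_stabilizer_eq_card_group]
  · have h0 : Fintype.card {g : G // g • u = σ u} = 0 := by
      rw [Fintype.card_eq_zero_iff]
      exact ⟨fun g => hfix ⟨g.1, g.2⟩⟩
    simp [h0]

private def ConjTuples (G : Type*) [Group G] (n : ℕ) : Type _ :=
  {v : Fin n → G // (List.ofFn v).prod = 1}

namespace ConjTuples

variable {G : Type*} [Group G] {n : ℕ}

instance : SMul G (ConjTuples G n) :=
  ⟨fun g v => ⟨fun i => g * v.1 i * g⁻¹, by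
    rw [prod_ofFn_conj, v.2, mul_one, mul_inv_cancel]⟩⟩

lemma smul_def (g : G) (v : ConjTuples G n) (i : Fin n) :
    (g • v : ConjTuples G n).1 i = g * v.1 i * g⁻¹ := rfl

instance : MulAction G (ConjTuples G n) where
  one_smul v := Subtype.ext (funext fun i => by
    show 1 * v.1 i * 1⁻¹ = v.1 i; group)
  mul_smul g h v := Subtype.ext (funext fun i => by
    show (g * h) * v.1 i * (g * h)⁻¹ = g * (h * v.1 i * h⁻¹) * g⁻¹; group)

end ConjTuples

theorem solomon_power_pairs (G : Type*) [Group G] [Fintype G] (n : ℕ) (hn : 0 < n) :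
    Fintype.card G ∣ Nat.card {p : G × G // p.1 ^ n * p.2 ^ n = 1} := by
  classical
  haveI : NeZero n := ⟨hn.ne'⟩
  haveI : Fintype (ConjTuples G n) := Subtype.fintype _
  let σ : ConjTuples G n → ConjTuples G n :=
    fun v => ⟨fun i => v.1 (i + 1), prod_ofFn_shift v.1 v.2⟩
  have hσ : ∀ (g : G) (v : ConjTuples G n), σ (g • v) = g • σ v := fun g v => rfl
  have key := card_dvd_card_equivariant_pairs σ hσ
  suffices h : Nat.card {p : G × G // p.1 ^ n * p.2 ^ n = 1}
      = Nat.card {p : G × ConjTuples G n // p.1 • p.2 = σ p.2} by rw [h]; exact key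
  apply Nat.card_congr
  refine
    { toFun := fun p => ⟨(p.1.1, ⟨fun i => p.1.1 ^ (i : ℕ) * (p.1.2⁻¹ * p.1.1⁻¹) *
        (p.1.1 ^ (i : ℕ))⁻¹, ?_⟩), ?_⟩
      invFun := fun p => ⟨(p.1.1, p.1.1⁻¹ * (p.1.2.1 0)⁻¹), ?_⟩
      left_inv := ?_
      right_inv := ?_ }
  · -- membership: the tuple has product one
    obtain ⟨⟨x, y⟩, hxy⟩ := p
    simp only
    rw [prod_ofFn_pow_conj, inv_mul_cancel_right, inv_pow, ← mul_inv_rev, hxy, inv_one]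
  · -- equivariance condition
    obtain ⟨⟨x, y⟩, hxy⟩ := p
    apply Subtype.ext
    funext i
    show x * (x ^ (i : ℕ) * (y⁻¹ * x⁻¹) * (x ^ (i : ℕ))⁻¹) * x⁻¹
      = x ^ ((i + 1 : Fin n) : ℕ) * (y⁻¹ * x⁻¹) * (x ^ ((i + 1 : Fin n) : ℕ))⁻¹
    have hx : x ^ n = (y⁻¹) ^ n := by
      rw [inv_pow]
      exact eq_inv_of_mul_eq_one_left hxy
    have hcomm : Commute (x ^ n) (y⁻¹ * x⁻¹) := by
      show x ^ n * (y⁻¹ * x⁻¹) = (y⁻¹ * x⁻¹) * x ^ n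
      calc x ^ n * (y⁻¹ * x⁻¹) = (y⁻¹) ^ n * y⁻¹ * x⁻¹ := by rw [hx, ← mul_assoc]
        _ = y⁻¹ * ((y⁻¹) ^ n * x⁻¹) := by rw [← pow_succ, pow_succ', mul_assoc]
        _ = y⁻¹ * (x⁻¹ * x ^ n) := by
            rw [← hx]
            congr 1
            exact (((Commute.refl x).pow_left n).inv_right).eq
        _ = (y⁻¹ * x⁻¹) * x ^ n := by rw [← mul_assoc]
    have hper : ∀ k : ℕ, x ^ (k % n) * (y⁻¹ * x⁻¹) * (x ^ (k % n))⁻¹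
        = x ^ k * (y⁻¹ * x⁻¹) * (x ^ k)⁻¹ := by
      intro k
      conv_rhs => rw [← Nat.div_add_mod k n]
      rw [pow_add, pow_mul]
      have hA : Commute ((x ^ n) ^ (k / n)) (y⁻¹ * x⁻¹) := hcomm.pow_left _
      have hB : Commute ((x ^ n) ^ (k / n)) (x ^ (k % n)) :=
        (((Commute.refl x).pow_left n).pow_right _).pow_left _
      have hC : Commute ((x ^ n) ^ (k / n))
          (x ^ (k % n) * (y⁻¹ * x⁻¹) * (x ^ (k % n))⁻¹) :=
        (hB.mul_right hA).mul_right hB.inv_right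
      have hX : (x ^ n) ^ (k / n) * (x ^ (k % n) * (y⁻¹ * x⁻¹) * (x ^ (k % n))⁻¹) *
          ((x ^ n) ^ (k / n))⁻¹ = x ^ (k % n) * (y⁻¹ * x⁻¹) * (x ^ (k % n))⁻¹ := by
        rw [hC.eq, mul_assoc, mul_inv_cancel, mul_one]
      rw [mul_inv_rev, ← hX]
      simp only [mul_assoc]
    have hval : ((i + 1 : Fin n) : ℕ) = ((i : ℕ) + 1) % n := by
      rw [Fin.val_add, Fin.val_one']
      conv_rhs => rw [Nat.add_mod, Nat.mod_eq_of_lt i.isLt]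
    rw [hval, hper]
    group
  · -- inverse map: the pair solves the equation
    obtain ⟨⟨g, v⟩, hc⟩ := p
    simp only
    have hc' : ∀ i : Fin n, g * v.1 i * g⁻¹ = v.1 (i + 1) := by
      intro i
      exact congrFun (congrArg Subtype.val hc) i
    have hv := tuple_eq_pow g v.1 hc'
    have hprod : ((v.1 0) * g) ^ n * (g ^ n)⁻¹ = 1 := by
      rw [← prod_ofFn_pow_conj g (v.1 0) n]
      rw [show (fun i : Fin n => g ^ (i : ℕ) * v.1 0 * (g ^ (i : ℕ))⁻¹) = v.1 from
        (funext fun i => (hv i).symm)]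
      exact v.2
    have hsg : ((v.1 0) * g) ^ n = g ^ n := by
      have := mul_inv_eq_one.mp hprod
      exact this
    rw [show g⁻¹ * (v.1 0)⁻¹ = ((v.1 0) * g)⁻¹ from (mul_inv_rev _ _).symm, inv_pow, hsg]
    rw [mul_inv_cancel]
  · -- left inverse
    rintro ⟨⟨x, y⟩, hxy⟩
    apply Subtype.ext
    show (x, x⁻¹ * (x ^ ((0 : Fin n) : ℕ) * (y⁻¹ * x⁻¹) * (x ^ ((0 : Fin n) : ℕ))⁻¹)⁻¹) = (x, y)
    rw [Fin.val_zero]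
    simp only [pow_zero, one_mul, mul_one, mul_inv_rev, inv_inv]
    rw [Prod.mk.injEq]
    constructor
    · rfl
    · group
  · -- right inverse
    rintro ⟨⟨g, v⟩, hc⟩
    have hc' : ∀ i : Fin n, g * v.1 i * g⁻¹ = v.1 (i + 1) := by
      intro i
      exact congrFun (congrArg Subtype.val hc) i
    have hv := tuple_eq_pow g v.1 hc'
    apply Subtype.ext
    refine Prod.ext_iff.mpr ?_
    constructor
    · rfl
    · apply Subtype.ext
      funext i
      show g ^ (i : ℕ) * ((g⁻¹ * (v.1 0)⁻¹)⁻¹ * g⁻¹) * (g ^ (i : ℕ))⁻¹ = v.1 i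
      rw [mul_inv_rev, inv_inv, inv_inv, mul_assoc (v.1 0), mul_inv_cancel, mul_one]
      exact (hv i).symm
end

section
/- Let V be a group and U a finite normal subgroup. Consider the permutation σ of U given by σ(a) = v⁻¹ a v u for fixed v ∈ V and u ∈ U. Then the minimal length m of a cycle of σ divides |U|, and every element a lying in a cycle of minimal length satisfies σ^{|U|}(a) = a. -/
/-- If an injective map `f` fixes every point of a finite set `S` after `m` iterations,
`S` is `f`-invariant, and no point of `S` has a period smaller than `m`, then `m`
divides the cardinality of `S`. -/
private lemma cycle_card_dvd {α : Type*} [DecidableEq α] (f : α → α)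
    (hf : Function.Injective f) (m : ℕ) (hm : 0 < m) :
    ∀ S : Finset α, (∀ x ∈ S, f^[m] x = x) → (∀ x ∈ S, f x ∈ S) →
      (∀ x ∈ S, ∀ k : ℕ, 0 < k → f^[k] x = x → m ≤ k) → m ∣ S.card := by
  intro S
  induction S using Finset.strongInduction with
  | _ S ih =>
    intro h1 h2 h3
    rcases S.eq_empty_or_nonempty with rfl | ⟨x, hx⟩
    · simp
    · set C : Finset α := (Finset.range m).image (fun i => f^[i] x) with hC
      have hiter : ∀ i, f^[i] x ∈ S := by
        intro i; induction i with
        | zero => simpa using hx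
        | succ n ihn => rw [Function.iterate_succ_apply']; exact h2 _ ihn
      have hCS : C ⊆ S := by
        intro y hy
        simp only [hC, Finset.mem_image, Finset.mem_range] at hy
        obtain ⟨i, -, rfl⟩ := hy
        exact hiter i
      have hfix : f^[m] x = x := h1 x hx
      -- injectivity on `range m`
      have hinj : ∀ i j, i ≤ j → j < m → f^[i] x = f^[j] x → i = j := by
        intro i j hij hjm hh
        have : f^[i] (f^[j - i] x) = f^[i] x := by
          rw [← Function.iterate_add_apply, Nat.add_sub_cancel' hij, ← hh]
        have hxx : f^[j - i] x = x := (hf.iterate i) this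
        by_contra hne
        have hpos : 0 < j - i := Nat.sub_pos_of_lt (lt_of_le_of_ne hij (fun h => hne h))
        have := h3 x hx (j - i) hpos hxx
        omega
      have hCcard : C.card = m := by
        rw [hC, Finset.card_image_of_injOn, Finset.card_range]
        intro i hi j hj hh
        simp only [Finset.coe_range, Set.mem_Iio] at hi hj
        rcases le_total i j with h | h
        · exact hinj i j h hj hh
        · exact (hinj j i h hi hh.symm).symm
      have hxC : x ∈ C := by
        simp only [hC, Finset.mem_image, Finset.mem_range]
        exact ⟨0, hm, rfl⟩
      have hCne : C.Nonempty := ⟨x, hxC⟩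
      have hss : S \ C ⊂ S := Finset.sdiff_ssubset hCS hCne
      have hinv : ∀ y ∈ S \ C, f y ∈ S \ C := by
        intro y hy
        rw [Finset.mem_sdiff] at hy
        obtain ⟨hyS, hyC⟩ := hy
        rw [Finset.mem_sdiff]
        refine ⟨h2 _ hyS, ?_⟩
        intro hfyC
        simp only [hC, Finset.mem_image, Finset.mem_range] at hfyC
        obtain ⟨i, him, hieq⟩ := hfyC
        rcases i with _ | i'
        · -- f y = x = f^[m] x = f (f^[m-1] x)
          apply hyC
          have h5 : f (f^[m - 1] x) = f y := by
            rw [← Function.iterate_succ_apply' f (m - 1) x,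
              show (m - 1).succ = m from by omega, hfix]
            simpa using hieq
          have hy' : f^[m - 1] x = y := hf h5
          simp only [hC, Finset.mem_image, Finset.mem_range]
          exact ⟨m - 1, Nat.sub_lt hm one_pos, hy'⟩
        · apply hyC
          have h5 : f (f^[i'] x) = f y := by
            rw [← Function.iterate_succ_apply' f i' x]; exact hieq
          have hy' : f^[i'] x = y := hf h5
          simp only [hC, Finset.mem_image, Finset.mem_range]
          exact ⟨i', by omega, hy'⟩
      have hdvd' : m ∣ (S \ C).card :=
        ih _ hss (fun y hy => h1 y (Finset.mem_sdiff.mp hy).1) hinv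
          (fun y hy => h3 y (Finset.mem_sdiff.mp hy).1)
      have hcard : S.card = (S \ C).card + m := by
        rw [Finset.card_sdiff_of_subset hCS, hCcard]
        have := Finset.card_le_card hCS
        omega
      rw [hcard]
      exact Nat.dvd_add hdvd' dvd_rfl

theorem brauer_key_step (V : Type*) [Group V] (U : Subgroup V) [U.Normal] [Finite U]
    (v : V) (u : U) (σ : U → U)
    (hσ : ∀ a : U, (σ a : V) = v⁻¹ * (a : V) * v * (u : V))
    (m : ℕ) (hm : 0 < m) (hex : ∃ a : U, σ^[m] a = a)
    (hmin : ∀ k : ℕ, 0 < k → (∃ a : U, σ^[k] a = a) → m ≤ k) :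
    m ∣ Nat.card U ∧ ∀ a : U, σ^[m] a = a → σ^[Nat.card U] a = a := by
  classical
  have : Fintype U := Fintype.ofFinite U
  obtain ⟨a, ha⟩ := hex
  -- σ is injective
  have hinj : Function.Injective σ := by
    intro x y hxy
    have h := congrArg (Subtype.val) hxy
    rw [hσ, hσ] at h
    ext
    exact mul_left_cancel (mul_right_cancel (mul_right_cancel h))
  -- conjugation map c : U → U, c x = v⁻¹ x v
  have hnormal : U.Normal := inferInstance
  set c : U → U := fun x =>
    ⟨v⁻¹ * (x : V) * v, by simpa using hnormal.conj_mem (x : V) x.2 v⁻¹⟩ with hcdef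
  have hmul : ∀ y z : U, σ (y * z) = c y * σ z := by
    intro y z
    ext
    push_cast [hσ, hcdef]
    group
  have hiterate : ∀ k : ℕ, ∀ y z : U, σ^[k] (y * z) = c^[k] y * σ^[k] z := by
    intro k
    induction k with
    | zero => intro y z; simp
    | succ n ihn =>
      intro y z
      rw [Function.iterate_succ_apply, Function.iterate_succ_apply,
        Function.iterate_succ_apply, hmul, ihn]
  have hcoe : ∀ k : ℕ, ∀ x : U, ((c^[k] x : U) : V) = (v⁻¹) ^ k * (x : V) * v ^ k := by
    intro k
    induction k with
    | zero => intro x; simp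
    | succ n ihn =>
      intro x
      rw [Function.iterate_succ_apply']
      change v⁻¹ * ((c^[n] x : U) : V) * v = _
      simp only [ihn]
      rw [pow_succ' v⁻¹ n, pow_succ v n]
      group
  -- the subgroup of elements of U commuting with v^m
  set W : Subgroup U := (Subgroup.centralizer {v ^ m}).comap U.subtype with hWdef
  have hmemW : ∀ x : U, x ∈ W ↔ (x : V) * v ^ m = v ^ m * (x : V) := by
    intro x
    rw [hWdef, Subgroup.mem_comap]
    exact Subgroup.mem_centralizer_singleton_iff
  -- characterization of fixed points of σ^[m]
  have hfixiff : ∀ x : U, σ^[m] x = x ↔ (x * a⁻¹ : U) ∈ W := by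
    intro x
    have hx : x = (x * a⁻¹) * a := by group
    constructor
    · intro hfx
      rw [hmemW]
      have h1 : σ^[m] ((x * a⁻¹) * a) = c^[m] (x * a⁻¹) * a := by
        rw [hiterate, ha]
      rw [← hx, hfx] at h1
      -- x = c^[m] (x * a⁻¹) * a
      have h2 : c^[m] (x * a⁻¹) = x * a⁻¹ := by
        have := congrArg (· * a⁻¹) h1
        simpa [mul_assoc] using this.symm
      have h3 := congrArg (Subtype.val) h2
      rw [hcoe] at h3
      push_cast at h3 ⊢
      have h4 : (v ^ m)⁻¹ * ((x : V) * (↑a)⁻¹) * v ^ m = (x : V) * (↑a)⁻¹ := by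
        rw [← inv_pow]; simpa [mul_assoc] using h3
      calc (x : V) * (↑a)⁻¹ * v ^ m = v ^ m * ((v ^ m)⁻¹ * ((x : V) * (↑a)⁻¹) * v ^ m) := by
            group
        _ = v ^ m * ((x : V) * (↑a)⁻¹) := by rw [h4]
    · intro hw
      rw [hmemW] at hw
      push_cast at hw
      have h2 : c^[m] (x * a⁻¹) = x * a⁻¹ := by
        ext
        rw [hcoe]
        push_cast
        rw [inv_pow]
        calc (v ^ m)⁻¹ * ((x : V) * (↑a)⁻¹) * v ^ m
            = (v ^ m)⁻¹ * ((x : V) * (↑a)⁻¹ * v ^ m) := by group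
          _ = (v ^ m)⁻¹ * (v ^ m * ((x : V) * (↑a)⁻¹)) := by rw [hw]
          _ = (x : V) * (↑a)⁻¹ := by group
      calc σ^[m] x = σ^[m] ((x * a⁻¹) * a) := by rw [← hx]
        _ = c^[m] (x * a⁻¹) * a := by rw [hiterate, ha]
        _ = (x * a⁻¹) * a := by rw [h2]
        _ = x := hx.symm
  -- the finset of fixed points of σ^[m]
  set S : Finset U := Finset.univ.filter (fun x : U => σ^[m] x = x) with hSdef
  have hmdvdS : m ∣ S.card := by
    apply cycle_card_dvd σ hinj m hm S
    · intro x hxS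
      rw [hSdef, Finset.mem_filter] at hxS
      exact hxS.2
    · intro x hxS
      rw [hSdef, Finset.mem_filter] at hxS ⊢
      refine ⟨Finset.mem_univ _, ?_⟩
      rw [← Function.iterate_succ_apply, Function.iterate_succ_apply', hxS.2]
    · intro x _ k hk hfk
      exact hmin k hk ⟨x, hfk⟩
  -- S has the same cardinality as W
  set T : Finset U := Finset.univ.filter (fun x : U => x ∈ W) with hTdef
  have hST : S.card = T.card := by
    apply Finset.card_nbij' (fun x => x * a⁻¹) (fun x => x * a)
    · intro x hxS
      rw [hSdef, Finset.mem_coe, Finset.mem_filter] at hxS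
      rw [hTdef, Finset.mem_coe, Finset.mem_filter]
      exact ⟨Finset.mem_univ _, (hfixiff x).1 hxS.2⟩
    · intro x hxT
      rw [hTdef, Finset.mem_coe, Finset.mem_filter] at hxT
      rw [hSdef, Finset.mem_coe, Finset.mem_filter]
      refine ⟨Finset.mem_univ _, (hfixiff (x * a)).2 ?_⟩
      simpa [mul_assoc] using hxT.2
    · intro x _; group
    · intro x _; group
  have hTW : T.card = Nat.card W := by
    rw [Nat.card_eq_fintype_card, hTdef]
    exact (Fintype.card_subtype _).symm
  have hWdvd : Nat.card W ∣ Nat.card U := Subgroup.card_subgroup_dvd_card W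
  have hmain : m ∣ Nat.card U := by
    refine dvd_trans ?_ hWdvd
    rw [← hTW, ← hST]
    exact hmdvdS
  refine ⟨hmain, ?_⟩
  intro b hb
  obtain ⟨t, ht⟩ := hmain
  rw [ht, Function.iterate_mul]
  exact Function.iterate_fixed hb t
end

section
/- Let F be a group with an epimorphism deg : F → ℤ/nℤ, let G be a group, φ : F → G a homomorphism, f₁ ∈ F with deg f₁ = 1, and g ∈ G. There exists a homomorphism ψ : F → G with ψ(f) = φ(f) for all f ∈ ker(deg) and ψ(f₁) = φ(f₁)·g if and only if g commutes with every element of φ(ker deg) and (φ(f₁)g)^n = (φ(f₁))^n. -/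
theorem extension_lemma (F G : Type*) [Group F] [Group G] (n : ℕ)
    (deg : F →* Multiplicative (ZMod n)) (hdeg : Function.Surjective deg)
    (φ : F →* G) (f₁ : F) (hf₁ : deg f₁ = Multiplicative.ofAdd (1 : ZMod n)) (g : G) :
    (∃ ψ : F →* G, (∀ f ∈ deg.ker, ψ f = φ f) ∧ ψ f₁ = φ f₁ * g) ↔
      ((∀ f ∈ deg.ker, Commute g (φ f)) ∧ (φ f₁ * g) ^ n = (φ f₁) ^ n) := by
  have hnormal : (deg.ker).Normal := deg.normal_ker
  constructor
  · rintro ⟨ψ, hker, hψf₁⟩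
    constructor
    · intro f hf
      have h1 : f₁ * f * f₁⁻¹ ∈ deg.ker := hnormal.conj_mem f hf f₁
      have e1 : ψ (f₁ * f * f₁⁻¹) = φ (f₁ * f * f₁⁻¹) := hker _ h1
      have e2 : ψ f = φ f := hker f hf
      simp only [map_mul, map_inv, hψf₁, e2] at e1
      have h2 : g * φ f * g⁻¹ = φ f := by
        calc g * φ f * g⁻¹
            = (φ f₁)⁻¹ * (φ f₁ * g * φ f * (φ f₁ * g)⁻¹) * φ f₁ := by group
          _ = (φ f₁)⁻¹ * (φ f₁ * φ f * (φ f₁)⁻¹) * φ f₁ := by rw [e1]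
          _ = φ f := by group
      exact mul_inv_eq_iff_eq_mul.mp h2
    · have hk : f₁ ^ n ∈ deg.ker := by
        rw [MonoidHom.mem_ker, map_pow, hf₁, ← ofAdd_nsmul]
        simp [nsmul_eq_mul, ZMod.natCast_self]
      have := hker _ hk
      rw [map_pow, map_pow, hψf₁] at this
      exact this
  · rintro ⟨hcomm, hpow⟩
    set c := φ f₁ * g with hc
    set d : F → ℤ := fun f => ((Multiplicative.toAdd (deg f)).cast : ℤ) with hd'
    have hd : ∀ f, ((d f : ℤ) : ZMod n) = Multiplicative.toAdd (deg f) := fun f =>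
      ZMod.intCast_zmod_cast _
    have hdeg1 : Multiplicative.toAdd (deg f₁) = 1 := by rw [hf₁]; rfl
    have hmem : ∀ (k : ℤ) (f : F), ((k : ZMod n) = Multiplicative.toAdd (deg f)) →
        f₁ ^ (-k) * f ∈ deg.ker := by
      intro k f h
      rw [MonoidHom.mem_ker, map_mul, map_zpow]
      apply Multiplicative.toAdd.injective
      rw [toAdd_mul, toAdd_zpow, hdeg1, toAdd_one, ← h]
      simp
    have hA : ∀ h ∈ deg.ker, c * φ h = φ (f₁ * h * f₁⁻¹) * c := by
      intro h hh
      calc (φ f₁ * g) * φ h = φ f₁ * (g * φ h) := by group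
        _ = φ f₁ * (φ h * g) := by rw [(hcomm h hh).eq]
        _ = (φ f₁ * φ h * (φ f₁)⁻¹) * (φ f₁ * g) := by group
        _ = φ (f₁ * h * f₁⁻¹) * (φ f₁ * g) := by rw [map_mul, map_mul, map_inv]
    have hA' : ∀ h ∈ deg.ker, c⁻¹ * φ h = φ (f₁⁻¹ * h * f₁) * c⁻¹ := by
      intro h hh
      have hh' : f₁⁻¹ * h * f₁ ∈ deg.ker := by
        simpa using hnormal.conj_mem h hh f₁⁻¹
      have := hA _ hh'
      rw [show f₁ * (f₁⁻¹ * h * f₁) * f₁⁻¹ = h from by group] at this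
      calc c⁻¹ * φ h = c⁻¹ * (φ h * c) * c⁻¹ := by group
        _ = c⁻¹ * (c * φ (f₁⁻¹ * h * f₁)) * c⁻¹ := by rw [this]
        _ = φ (f₁⁻¹ * h * f₁) * c⁻¹ := by group
    have hB : ∀ (l : ℤ), ∀ h ∈ deg.ker, c ^ l * φ h = φ (f₁ ^ l * h * f₁ ^ (-l)) * c ^ l := by
      intro l
      induction l using Int.induction_on with
      | zero => intro h hh; simp
      | succ k ih =>
        intro h hh
        have hh' : f₁ * h * f₁⁻¹ ∈ deg.ker := hnormal.conj_mem h hh f₁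
        calc c ^ ((k:ℤ)+1) * φ h = c ^ (k:ℤ) * (c * φ h) := by
              rw [zpow_add_one]; group
          _ = c ^ (k:ℤ) * φ (f₁ * h * f₁⁻¹) * c := by rw [hA h hh]; group
          _ = φ (f₁ ^ (k:ℤ) * (f₁ * h * f₁⁻¹) * f₁ ^ (-(k:ℤ))) * c ^ (k:ℤ) * c := by
              rw [ih _ hh']
          _ = φ (f₁ ^ ((k:ℤ)+1) * h * f₁ ^ (-((k:ℤ)+1))) * c ^ ((k:ℤ)+1) := by
              rw [show f₁ ^ (k:ℤ) * (f₁ * h * f₁⁻¹) * f₁ ^ (-(k:ℤ))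
                = f₁ ^ ((k:ℤ)+1) * h * f₁ ^ (-((k:ℤ)+1)) from by group, zpow_add_one]
              group
      | pred k ih =>
        intro h hh
        have hh' : f₁⁻¹ * h * f₁ ∈ deg.ker := by
          simpa using hnormal.conj_mem h hh f₁⁻¹
        calc c ^ (-(k:ℤ)-1) * φ h = c ^ (-(k:ℤ)) * (c⁻¹ * φ h) := by
              rw [zpow_sub_one]; group
          _ = c ^ (-(k:ℤ)) * φ (f₁⁻¹ * h * f₁) * c⁻¹ := by rw [hA' h hh]; group
          _ = φ (f₁ ^ (-(k:ℤ)) * (f₁⁻¹ * h * f₁) * f₁ ^ (-(-(k:ℤ)))) * c ^ (-(k:ℤ)) * c⁻¹ := by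
              rw [ih _ hh']
          _ = φ (f₁ ^ (-(k:ℤ)-1) * h * f₁ ^ (-(-(k:ℤ)-1))) * c ^ (-(k:ℤ)-1) := by
              rw [show f₁ ^ (-(k:ℤ)) * (f₁⁻¹ * h * f₁) * f₁ ^ (-(-(k:ℤ)))
                = f₁ ^ (-(k:ℤ)-1) * h * f₁ ^ (-(-(k:ℤ)-1)) from by group, zpow_sub_one]
              group
    have hW : ∀ (k k' : ℤ) (f : F), ((k : ZMod n) = Multiplicative.toAdd (deg f)) →
        ((k' : ZMod n) = Multiplicative.toAdd (deg f)) →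
        c ^ k * φ (f₁ ^ (-k) * f) = c ^ k' * φ (f₁ ^ (-k') * f) := by
      intro k k' f hk hk'
      have hdvd : (n:ℤ) ∣ (k - k') := by
        have : ((k - k' : ℤ) : ZMod n) = 0 := by push_cast; rw [hk, hk']; ring
        exact (ZMod.intCast_zmod_eq_zero_iff_dvd _ _).mp this
      obtain ⟨m, hm⟩ := hdvd
      have h1 : c ^ ((n:ℤ)*m) = φ (f₁ ^ ((n:ℤ)*m)) := by
        calc c ^ ((n:ℤ)*m) = (c ^ n) ^ m := by rw [zpow_mul, zpow_natCast]
          _ = ((φ f₁) ^ n) ^ m := by rw [hpow]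
          _ = φ (f₁ ^ ((n:ℤ)*m)) := by rw [map_zpow, zpow_mul, zpow_natCast]
      have hck : c ^ k = c ^ k' * φ (f₁ ^ ((n:ℤ)*m)) := by
        rw [show k = k' + (n:ℤ)*m from by omega, zpow_add, h1]
      rw [hck, mul_assoc, ← map_mul]
      congr 2
      rw [show (n:ℤ)*m = k - k' from hm.symm, ← mul_assoc, ← zpow_add,
        show k - k' + -k = -k' from by ring]
    set Ψ : F → G := fun f => c ^ d f * φ (f₁ ^ (-(d f)) * f) with hΨ
    have hmul : ∀ a b, Ψ (a * b) = Ψ a * Ψ b := by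
      intro a b
      have hab : ((d a + d b : ℤ) : ZMod n) = Multiplicative.toAdd (deg (a*b)) := by
        push_cast
        rw [hd a, hd b, map_mul, toAdd_mul]
      have e0 : Ψ (a*b) = c ^ (d a + d b) * φ (f₁ ^ (-(d a + d b)) * (a*b)) :=
        hW _ _ _ (hd (a*b)) hab
      have hha : f₁ ^ (-(d a)) * a ∈ deg.ker := hmem _ _ (hd a)
      have hconj : f₁ ^ (-(d b)) * (f₁ ^ (-(d a)) * a) * f₁ ^ (d b) ∈ deg.ker := by
        have := hnormal.conj_mem _ hha (f₁ ^ (-(d b)))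
        simpa [zpow_neg] using this
      have step := hB (d b) _ hconj
      rw [show f₁ ^ (d b) * (f₁ ^ (-(d b)) * (f₁ ^ (-(d a)) * a) * f₁ ^ (d b)) * f₁ ^ (-(d b))
        = f₁ ^ (-(d a)) * a from by group] at step
      calc Ψ (a*b) = c ^ (d a + d b) * φ (f₁ ^ (-(d a + d b)) * (a*b)) := e0
        _ = c ^ (d a) * (c ^ (d b) * φ ((f₁ ^ (-(d b)) * (f₁ ^ (-(d a)) * a) * f₁ ^ (d b))
              * (f₁ ^ (-(d b)) * b))) := by
            rw [show f₁ ^ (-(d a + d b)) * (a*b)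
              = (f₁ ^ (-(d b)) * (f₁ ^ (-(d a)) * a) * f₁ ^ (d b)) * (f₁ ^ (-(d b)) * b)
              from by group, zpow_add, mul_assoc]
        _ = c ^ (d a) * ((c ^ (d b) * φ (f₁ ^ (-(d b)) * (f₁ ^ (-(d a)) * a) * f₁ ^ (d b)))
              * φ (f₁ ^ (-(d b)) * b)) := by simp only [map_mul, mul_assoc]
        _ = c ^ (d a) * ((φ (f₁ ^ (-(d a)) * a) * c ^ (d b)) * φ (f₁ ^ (-(d b)) * b)) := by
            rw [step]
        _ = (c ^ d a * φ (f₁ ^ (-(d a)) * a)) * (c ^ d b * φ (f₁ ^ (-(d b)) * b)) := by group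
        _ = Ψ a * Ψ b := rfl
    refine ⟨MonoidHom.mk' Ψ hmul, ?_, ?_⟩
    · intro f hf
      have h0 : (((0:ℤ) : ZMod n)) = Multiplicative.toAdd (deg f) := by
        rw [MonoidHom.mem_ker] at hf; rw [hf]; simp
      have := hW (d f) 0 f (hd f) h0
      show Ψ f = φ f
      rw [hΨ]; simp only []; rw [this]; simp
    · have h1 : (((1:ℤ) : ZMod n)) = Multiplicative.toAdd (deg f₁) := by
        rw [hf₁]; simp
      have := hW (d f₁) 1 f₁ (hd f₁) h1
      show Ψ f₁ = φ f₁ * g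
      rw [hΨ]; simp only []; rw [this]; simp [hc]
end
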